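/- arXiv:2109.08952 — 9 statements merged into one kernel-verified Lean document; each statement's English description precedes it below -/
import Mathlib

section
/- Let E be a finite-dimensional complex vector space equipped with a symplectic form Ω (a nondegenerate alternating bilinear form), and let L be a linear automorphism of E with Ω(Lv, Lw) = Ω(v, w) for all v, w ∈ E. If λ, μ ∈ ℂ satisfy λμ ≠ 1, then Ω(v, w) = 0 for every v in the generalized eigenspace E_λ = ker(L − λ·id)^{dim E} and every w in the generalized eigenspace E_μ = ker(L − μ·id)^{dim E}. -/
/-- Let `E` be a finite-dimensional complex vector space equipped with a
symplectic form `Ω` (a nondegenerate alternating bilinear form), and let `L` be a linear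
automorphism of `E` preserving `Ω`.  If `λ * μ ≠ 1` then the generalized eigenspaces
`ker (L - λ•id)^(dim E)` and `ker (L - μ•id)^(dim E)` are `Ω`-orthogonal. -/
theorem generalized_eigenspaces_symplectically_orthogonal
    {E : Type*} [AddCommGroup E] [Module ℂ E] [FiniteDimensional ℂ E]
    (Ω : E →ₗ[ℂ] E →ₗ[ℂ] ℂ)
    (halt : ∀ v : E, Ω v v = 0)
    (hnondeg : ∀ v : E, (∀ w : E, Ω v w = 0) → v = 0)
    (L : E ≃ₗ[ℂ] E)
    (hL : ∀ v w : E, Ω (L v) (L w) = Ω v w)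
    (lam mu : ℂ) (hlm : lam * mu ≠ 1)
    (v w : E)
    (hv : v ∈ LinearMap.ker
      (((L : E →ₗ[ℂ] E) - lam • (LinearMap.id : E →ₗ[ℂ] E)) ^ (Module.finrank ℂ E)))
    (hw : w ∈ LinearMap.ker
      (((L : E →ₗ[ℂ] E) - mu • (LinearMap.id : E →ₗ[ℂ] E)) ^ (Module.finrank ℂ E))) :
    Ω v w = 0 := by
  set A : E →ₗ[ℂ] E := (L : E →ₗ[ℂ] E) - lam • (LinearMap.id : E →ₗ[ℂ] E) with hA
  set B : E →ₗ[ℂ] E := (L : E →ₗ[ℂ] E) - mu • (LinearMap.id : E →ₗ[ℂ] E) with hB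
  rw [LinearMap.mem_ker] at hv hw
  suffices h : ∀ N m n, m + n ≤ N → ∀ v w : E, (A ^ m) v = 0 → (B ^ n) w = 0 →
      Ω v w = 0 from h _ _ _ le_rfl v w hv hw
  intro N
  induction N with
  | zero =>
    intro m n hmn v w hv hw
    obtain ⟨rfl, rfl⟩ : m = 0 ∧ n = 0 := by omega
    simp only [pow_zero, Module.End.one_apply] at hv
    simp [hv]
  | succ N ih =>
    intro m n hmn v w hv hw
    match m, n with
    | 0, n =>
      simp only [pow_zero, Module.End.one_apply] at hv
      simp [hv]
    | m, 0 =>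
      simp only [pow_zero, Module.End.one_apply] at hw
      simp [hw]
    | m + 1, n + 1 =>
      rw [pow_succ, Module.End.mul_apply] at hv hw
      have h1 : Ω (A v) (B w) = 0 := ih m n (by omega) _ _ hv hw
      have h2 : Ω (A v) w = 0 := ih m (n + 1) (by omega) _ _ hv
        (by rw [pow_succ, Module.End.mul_apply]; exact hw)
      have h3 : Ω v (B w) = 0 := ih (m + 1) n (by omega) _ _
        (by rw [pow_succ, Module.End.mul_apply]; exact hv) hw
      have hLv : (L : E →ₗ[ℂ] E) v = A v + lam • v := by
        simp [hA, LinearMap.sub_apply]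
      have hLw : (L : E →ₗ[ℂ] E) w = B w + mu • w := by
        simp [hB, LinearMap.sub_apply]
      have key : Ω v w = lam * mu * Ω v w := by
        conv_lhs => rw [← hL v w]
        show Ω ((L : E →ₗ[ℂ] E) v) ((L : E →ₗ[ℂ] E) w) = _
        rw [hLv, hLw]
        simp only [map_add, map_smul, LinearMap.add_apply, LinearMap.smul_apply,
          smul_eq_mul, h1, h2, h3]
        ring
      have : (1 - lam * mu) * Ω v w = 0 := by linear_combination key
      rcases mul_eq_zero.mp this with h | h
      · exact absurd (by linear_combination -h) hlm
      · exact h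
end

section
/- Let E be a finite-dimensional complex vector space equipped with a symplectic form Ω (a nondegenerate alternating bilinear form), and let L be a linear automorphism of E with Ω(Lv, Lw) = Ω(v, w) for all v, w ∈ E. If λ ∈ ℂ satisfies λ² ≠ 1, then the generalized eigenspace E_λ = ker(L − λ·id)^{dim E} is Ω-isotropic, i.e. Ω(v, w) = 0 for all v, w ∈ E_λ. -/
lemma gen_eig_aux
    {E : Type*} [AddCommGroup E] [Module ℂ E]
    (Ω : E →ₗ[ℂ] E →ₗ[ℂ] ℂ)
    (L : E ≃ₗ[ℂ] E)
    (hL : ∀ v w : E, Ω (L v) (L w) = Ω v w)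
    (lam : ℂ) (hlm : lam ^ 2 ≠ 1) :
    ∀ k m n : ℕ, m + n ≤ k → ∀ v w : E,
      (((L : E →ₗ[ℂ] E) - lam • (LinearMap.id : E →ₗ[ℂ] E)) ^ m) v = 0 →
      (((L : E →ₗ[ℂ] E) - lam • (LinearMap.id : E →ₗ[ℂ] E)) ^ n) w = 0 →
      Ω v w = 0 := by
  intro k
  induction k with
  | zero =>
    intro m n hmn v w hv hw
    obtain ⟨rfl, rfl⟩ : m = 0 ∧ n = 0 := by omega
    simp only [pow_zero, Module.End.one_apply] at hv
    subst hv; simp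
  | succ k ih =>
    intro m n hmn v w hv hw
    match m, n with
    | 0, n =>
      simp only [pow_zero, Module.End.one_apply] at hv
      subst hv; simp
    | m, 0 =>
      simp only [pow_zero, Module.End.one_apply] at hw
      subst hw; simp
    | m + 1, n + 1 =>
      set T : E →ₗ[ℂ] E := (L : E →ₗ[ℂ] E) - lam • (LinearMap.id : E →ₗ[ℂ] E) with hT
      rw [pow_succ] at hv hw
      have hv' : (T ^ m) (T v) = 0 := hv
      have hw' : (T ^ n) (T w) = 0 := hw
      have hvm : (T ^ (m + 1)) v = 0 := by rw [pow_succ]; exact hv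
      have hwn : (T ^ (n + 1)) w = 0 := by rw [pow_succ]; exact hw
      have hLv : L v = lam • v + T v := by
        simp [hT, LinearMap.sub_apply, LinearMap.smul_apply]
      have hLw : L w = lam • w + T w := by
        simp [hT, LinearMap.sub_apply, LinearMap.smul_apply]
      have h1 : Ω v (T w) = 0 := ih (m + 1) n (by omega) v (T w) hvm hw'
      have h2 : Ω (T v) w = 0 := ih m (n + 1) (by omega) (T v) w hv' hwn
      have h3 : Ω (T v) (T w) = 0 := ih m n (by omega) (T v) (T w) hv' hw'
      have key : Ω v w = lam ^ 2 * Ω v w := by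
        conv_lhs => rw [← hL v w, hLv, hLw]
        simp only [map_add, map_smul, LinearMap.add_apply, LinearMap.smul_apply,
          smul_eq_mul, h1, h2, h3]
        ring
      have : (1 - lam ^ 2) * Ω v w = 0 := by linear_combination key
      rcases mul_eq_zero.mp this with h | h
      · exact absurd (by linear_combination -h) hlm
      · exact h

/-- Let `E` be a finite-dimensional complex symplectic vector space and `L`
a symplectic automorphism.  If `λ² ≠ 1` then the generalized eigenspace
`ker (L - λ•id)^(dim E)` is `Ω`-isotropic. -/
theorem generalized_eigenspace_isotropic
    {E : Type*} [AddCommGroup E] [Module ℂ E] [FiniteDimensional ℂ E]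
    (Ω : E →ₗ[ℂ] E →ₗ[ℂ] ℂ)
    (halt : ∀ v : E, Ω v v = 0)
    (hnondeg : ∀ v : E, (∀ w : E, Ω v w = 0) → v = 0)
    (L : E ≃ₗ[ℂ] E)
    (hL : ∀ v w : E, Ω (L v) (L w) = Ω v w)
    (lam : ℂ) (hlm : lam ^ 2 ≠ 1)
    (v w : E)
    (hv : v ∈ LinearMap.ker
      (((L : E →ₗ[ℂ] E) - lam • (LinearMap.id : E →ₗ[ℂ] E)) ^ (Module.finrank ℂ E)))
    (hw : w ∈ LinearMap.ker
      (((L : E →ₗ[ℂ] E) - lam • (LinearMap.id : E →ₗ[ℂ] E)) ^ (Module.finrank ℂ E))) :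
    Ω v w = 0 := by
  exact gen_eig_aux Ω L hL lam hlm (Module.finrank ℂ E + Module.finrank ℂ E)
    (Module.finrank ℂ E) (Module.finrank ℂ E) le_rfl v w
    (LinearMap.mem_ker.mp hv) (LinearMap.mem_ker.mp hw)
end

section
/- Let (E, Ω) be a finite-dimensional real symplectic vector space and L ∈ Sp(E, Ω) hyperbolic, meaning that every complex eigenvalue of L has modulus different from 1. Then there exists a linear involution I of E (I² = id) such that I∘L = L∘I and Ω(Iv, Iw) = −Ω(v, w) for all v, w ∈ E. -/
open Polynomial

private lemma aeval_eq_eval_map (s : ℝ[X]) (z : ℂ) :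
    aeval z s = (s.map (algebraMap ℝ ℂ)).eval z := by
  rw [aeval_def, eval_map]

/-- Two real polynomials with no common complex root are coprime. -/
private lemma coprime_of_no_common_root {s t : ℝ[X]} (hs : s ≠ 0) (ht : t ≠ 0)
    (h : ∀ z : ℂ, aeval z s = 0 → aeval z t = 0 → False) : IsCoprime s t := by
  classical
  rw [← Polynomial.isCoprime_map (algebraMap ℝ ℂ)]
  rw [← EuclideanDomain.gcd_isUnit_iff]
  set g := EuclideanDomain.gcd (s.map (algebraMap ℝ ℂ)) (t.map (algebraMap ℝ ℂ)) with hg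
  by_contra hu
  have hsm : s.map (algebraMap ℝ ℂ) ≠ 0 := by
    simpa using (Polynomial.map_ne_zero hs : s.map (algebraMap ℝ ℂ) ≠ 0)
  have hg0 : g ≠ 0 := by
    intro h0
    exact hsm (EuclideanDomain.gcd_eq_zero_iff.mp (hg ▸ h0)).1
  obtain ⟨z, hz⟩ := Complex.exists_root (degree_pos_of_ne_zero_of_nonunit hg0 hu)
  have h1 : (s.map (algebraMap ℝ ℂ)).IsRoot z :=
    hz.dvd (EuclideanDomain.gcd_dvd_left _ _)
  have h2 : (t.map (algebraMap ℝ ℂ)).IsRoot z :=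
    hz.dvd (EuclideanDomain.gcd_dvd_right _ _)
  exact h z (by rwa [aeval_eq_eval_map]) (by rwa [aeval_eq_eval_map])

/-- Every complex root of an irreducible real polynomial with root `z` is `z` or `conj z`. -/
private lemma root_eq_or_eq_conj {f : ℝ[X]} (hf : Irreducible f) {z w : ℂ}
    (hz : aeval z f = 0) (hw : aeval w f = 0) :
    w = z ∨ w = (starRingEnd ℂ) z := by
  by_cases him : z.im = 0
  · -- real root
    have hzre : ((z.re : ℝ) : ℂ) = z := by
      apply Complex.ext <;> simp [him]
    have hroot : f.IsRoot z.re := by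
      have h := hz
      rw [← hzre] at h
      rw [show ((z.re : ℝ) : ℂ) = (RCLike.ofReal z.re : ℂ) from rfl,
        Polynomial.aeval_ofReal] at h
      exact Complex.ofReal_eq_zero.mp h
    obtain ⟨c, hc⟩ := (dvd_iff_isRoot).mpr hroot
    rcases hf.isUnit_or_isUnit hc with hXu | hcu
    · exact absurd hXu (not_isUnit_X_sub_C _)
    obtain ⟨d, hd, hdc⟩ := Polynomial.isUnit_iff.mp hcu
    have hd0 : (d : ℂ) ≠ 0 := Complex.ofReal_ne_zero.mpr hd.ne_zero
    have hwz : ∀ u : ℂ, aeval u f = 0 → u = (z.re : ℂ) := by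
      intro u hu
      rw [hc, ← hdc] at hu
      simp only [map_mul, map_sub, aeval_X, aeval_C, Complex.coe_algebraMap] at hu
      rcases mul_eq_zero.mp hu with h | h
      · exact sub_eq_zero.mp h
      · exact absurd h hd0
    left
    rw [hwz w hw]
    exact hzre
  · -- nonreal root: quadratic factor
    set g : ℝ[X] := X ^ 2 - C (2 * z.re) * X + C (‖z‖ ^ 2) with hgdef
    have hgd : g ∣ f := f.quadratic_dvd_of_aeval_eq_zero_im_ne_zero hz him
    have keyeval : ∀ u : ℂ, aeval u g = (u - z) * (u - (starRingEnd ℂ) z) := by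
      intro u
      have h1 : ((2 * z.re : ℝ) : ℂ) = z + (starRingEnd ℂ) z := by
        rw [Complex.add_conj]
      have h2 : ((‖z‖ ^ 2 : ℝ) : ℂ) = z * (starRingEnd ℂ) z := by
        rw [Complex.mul_conj']; norm_cast
      simp only [hgdef, map_add, map_sub, map_mul, map_pow, aeval_X, aeval_C,
        Complex.coe_algebraMap]
      push_cast
      have h1' : (2 : ℂ) * (z.re : ℂ) = z + (starRingEnd ℂ) z := by
        rw [← h1]; push_cast; ring
      have h2' : ((‖z‖ : ℝ) : ℂ) ^ 2 = z * (starRingEnd ℂ) z := by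
        rw [← h2]; push_cast; ring
      linear_combination (-u) * h1' + h2' 
    obtain ⟨c, hc⟩ := hgd
    rcases hf.isUnit_or_isUnit hc with hgu | hcu
    · -- g unit: impossible since g has root z
      obtain ⟨d, hd, hdc⟩ := Polynomial.isUnit_iff.mp hgu
      have : aeval z g = 0 := by rw [keyeval]; ring
      rw [← hdc] at this
      simp only [aeval_C, Complex.coe_algebraMap, Complex.ofReal_eq_zero] at this
      exact absurd this hd.ne_zero
    obtain ⟨d, hd, hdc⟩ := Polynomial.isUnit_iff.mp hcu
    have hd0 : (d : ℂ) ≠ 0 := Complex.ofReal_ne_zero.mpr hd.ne_zero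
    have hwg : aeval w g = 0 := by
      rw [hc, ← hdc] at hw
      simp only [map_mul, aeval_C, Complex.coe_algebraMap] at hw
      rcases mul_eq_zero.mp hw with h | h
      · exact h
      · exact absurd h hd0
    rw [keyeval] at hwg
    rcases mul_eq_zero.mp hwg with h | h
    · exact Or.inl (sub_eq_zero.mp h)
    · exact Or.inr (sub_eq_zero.mp h)

private lemma abs_eq_of_roots {f : ℝ[X]} (hf : Irreducible f) {z w : ℂ}
    (hz : aeval z f = 0) (hw : aeval w f = 0) :
    ‖w‖ = ‖z‖ := by
  rcases root_eq_or_eq_conj hf hz hw with rfl | h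
  · rfl
  · rw [h, Complex.norm_conj]

/-- Key reverse identity in a (possibly noncommutative) algebra. -/
private lemma aeval_reverse_mul_pow {S : Type*} [Ring S] [Algebra ℝ S]
    {a b : S} (hab : a * b = 1) (hba : b * a = 1) (f : ℝ[X]) :
    aeval b f.reverse * a ^ f.natDegree = aeval a f := by
  set N := f.natDegree with hN
  have hbapow : ∀ i, b ^ i * a ^ i = 1 := by
    intro i
    induction i with
    | zero => simp
    | succ n ih =>
      rw [pow_succ b, pow_succ' a, mul_assoc, ← mul_assoc b a, hba, one_mul, ih]
  have hpow : ∀ i, i ≤ N → b ^ i * a ^ N = a ^ (N - i) := by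
    intro i hi
    have : a ^ N = a ^ i * a ^ (N - i) := by rw [← pow_add, Nat.add_sub_cancel' hi]
    rw [this, ← mul_assoc, hbapow, one_mul]
  have h1 : aeval b f.reverse = ∑ i ∈ Finset.range (N + 1), f.coeff (N - i) • b ^ i := by
    rw [aeval_eq_sum_range' (lt_of_le_of_lt f.reverse_natDegree_le (Nat.lt_succ_self N))]
    refine Finset.sum_congr rfl fun i hi => ?_
    rw [coeff_reverse, revAt_le (Nat.lt_succ_iff.mp (Finset.mem_range.mp hi))]
  rw [h1, Finset.sum_mul]
  have h2 : ∀ i ∈ Finset.range (N + 1),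
      (f.coeff (N - i) • b ^ i) * a ^ N = f.coeff (N - i) • a ^ (N - i) := by
    intro i hi
    rw [smul_mul_assoc, hpow i (Nat.lt_succ_iff.mp (Finset.mem_range.mp hi))]
  rw [Finset.sum_congr rfl h2]
  have h3 := Finset.sum_range_reflect (fun i => f.coeff i • a ^ i) (N + 1)
  simp only [Nat.add_sub_cancel] at h3
  rw [h3, aeval_eq_sum_range' (Nat.lt_succ_self N)]

private lemma hasEigenvalue_of_charpoly_root {V : Type*} [AddCommGroup V] [Module ℂ V]
    [FiniteDimensional ℂ V] (g : V →ₗ[ℂ] V) {z : ℂ} (h : g.charpoly.IsRoot z) :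
    Module.End.HasEigenvalue g z := by
  classical
  set b := Module.finBasis ℂ V with hb
  set M := LinearMap.toMatrix b b g with hM
  have h1 : g.charpoly = M.charpoly := (LinearMap.charpoly_toMatrix g b).symm
  have h2 : Polynomial.eval z M.charpoly = (Matrix.scalar _ z - M).det := by
    rw [Matrix.charpoly, _root_.eval_det, Matrix.matPolyEquiv_charmatrix]
    simp
  have hdet : (Matrix.scalar _ z - M).det = 0 := by
    rw [← h2, ← h1]; exact h
  set φ : V →ₗ[ℂ] V := z • LinearMap.id - g with hφ
  have h3 : LinearMap.toMatrix b b φ = Matrix.scalar _ z - M := by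
    rw [hφ, map_sub, map_smul, LinearMap.toMatrix_id, Matrix.scalar_apply,
      Matrix.smul_one_eq_diagonal]
  have h4 : LinearMap.det φ = 0 := by
    rw [← LinearMap.det_toMatrix b, h3, hdet]
  have h5 := LinearMap.bot_lt_ker_of_det_eq_zero h4
  obtain ⟨v, hv, hv0⟩ := Submodule.exists_mem_ne_zero_of_ne_bot (ne_of_gt h5)
  apply Module.End.hasEigenvalue_of_hasEigenvector (x := v)
  refine ⟨Module.End.mem_eigenspace_iff.mpr ?_, hv0⟩
  have := LinearMap.mem_ker.mp hv
  rw [hφ] at this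
  simp only [LinearMap.sub_apply, LinearMap.smul_apply, LinearMap.id_apply] at this
  have := sub_eq_zero.mp this
  exact this.symm ▸ rfl

private lemma root_reverse {s : ℝ[X]} {z : ℂ} (hz : z ≠ 0)
    (h : Polynomial.aeval z s.reverse = 0) : Polynomial.aeval z⁻¹ s = 0 := by
  have hmap : (s.reverse).map (algebraMap ℝ ℂ) = (s.map (algebraMap ℝ ℂ)).reverse := by
    ext i
    simp [Polynomial.coeff_map, Polynomial.coeff_reverse,
      Polynomial.natDegree_map (algebraMap ℝ ℂ)]
  letI : Invertible (z⁻¹ : ℂ) := ⟨z, by field_simp, by field_simp⟩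
  have hkey := Polynomial.eval₂_reverse_eq_zero_iff (RingHom.id ℂ) (z⁻¹)
      (s.map (algebraMap ℝ ℂ))
  rw [aeval_eq_eval_map] at h ⊢
  rw [hmap] at h
  have h' : Polynomial.eval₂ (RingHom.id ℂ) (⅟ (z⁻¹)) (s.map (algebraMap ℝ ℂ)).reverse = 0 := by
    show Polynomial.eval₂ (RingHom.id ℂ) z _ = 0
    rw [← Polynomial.eval]  -- may fail; fallback below
    exact h
  have := hkey.mp h'
  rwa [← Polynomial.eval] at this



open TensorProduct in
/-- If `L` is a hyperbolic symplectic automorphism of a finite-dimensional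
real symplectic vector space `(E, Ω)` (i.e. every complex eigenvalue of the complexification
of `L` has modulus different from `1`), then there exists a linear involution `I` of `E`
commuting with `L` such that `Ω (I v) (I w) = -Ω v w` for all `v, w`. -/
theorem hyperbolic_commutes_with_antisymplectic_involution
    {E : Type*} [AddCommGroup E] [Module ℝ E] [FiniteDimensional ℝ E]
    (Ω : E →ₗ[ℝ] E →ₗ[ℝ] ℝ)
    (halt : ∀ v : E, Ω v v = 0)
    (hnondeg : ∀ v : E, (∀ w : E, Ω v w = 0) → v = 0)
    (L : E ≃ₗ[ℝ] E)
    (hL : ∀ v w : E, Ω (L v) (L w) = Ω v w)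
    (hhyp : ∀ μ : ℂ,
      Module.End.HasEigenvalue
        (LinearMap.baseChange ℂ (L : E →ₗ[ℝ] E) : Module.End ℂ (ℂ ⊗[ℝ] E)) μ →
      ‖μ‖ ≠ 1) :
    ∃ I : E →ₗ[ℝ] E,
      I ∘ₗ I = LinearMap.id ∧
      I ∘ₗ (L : E →ₗ[ℝ] E) = (L : E →ₗ[ℝ] E) ∘ₗ I ∧
      ∀ v w : E, Ω (I v) (I w) = -Ω v w := by
  classical
  set A : E →ₗ[ℝ] E := (L : E →ₗ[ℝ] E) with hA
  set B : E →ₗ[ℝ] E := (L.symm : E →ₗ[ℝ] E) with hB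
  have hAB : A * B = 1 := by
    ext x; simp [hA, hB, Module.End.mul_apply]
  have hBA : B * A = 1 := by
    ext x; simp [hA, hB, Module.End.mul_apply]
  -- adjoint relation for powers and polynomials
  have hLB : ∀ x y : E, Ω (A x) y = Ω x (B y) := by
    intro x y
    have h := hL x (L.symm y)
    simpa [hA, hB] using h
  have hpowadj : ∀ n : ℕ, ∀ x y : E, Ω ((A ^ n) x) y = Ω x ((B ^ n) y) := by
    intro n
    induction n with
    | zero => intro x y; simp
    | succ n ih =>
      intro x y
      rw [pow_succ', pow_succ, Module.End.mul_apply, Module.End.mul_apply, hLB, ih]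
  have hadj : ∀ f : ℝ[X], ∀ x y : E,
      Ω ((aeval A f) x) y = Ω x ((aeval B f) y) := by
    intro f
    induction f using Polynomial.induction_on' with
    | add p q hp hq =>
      intro x y
      simp only [map_add, LinearMap.add_apply]
      rw [hp, hq]
    | monomial n c =>
      intro x y
      simp only [aeval_monomial, Module.End.mul_apply, Algebra.algebraMap_eq_smul_one,
        LinearMap.smul_apply, Module.End.one_apply, map_smul, LinearMap.smul_apply]
      rw [hpowadj n]
  -- commutation of polynomials in A with B
  have hcommAB : Commute A B := (hAB.trans hBA.symm : A * B = B * A)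
  have hcommB : ∀ f : ℝ[X], Commute (aeval A f) B := by
    intro f
    induction f using Polynomial.induction_on' with
    | add p q hp hq => rw [map_add]; exact hp.add_left hq
    | monomial n c =>
      rw [aeval_monomial]
      exact (Algebra.commute_algebraMap_left c B).mul_left (hcommAB.pow_left n)
  -- kernel transfer to the reverse polynomial
  have hrevker : ∀ s : ℝ[X], ∀ y : E, (aeval A s) y = 0 → (aeval B s.reverse) y = 0 := by
    intro s y hy
    have hid := aeval_reverse_mul_pow hAB hBA s
    set N := s.natDegree with hN
    have hABpow : A ^ N * B ^ N = 1 := by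
      rw [← hcommAB.mul_pow, hAB, one_pow]
    have h1 : (A ^ N) ((B ^ N) y) = y := by
      rw [← Module.End.mul_apply, hABpow, Module.End.one_apply]
    have h2 : (aeval B s.reverse) y = ((aeval B s.reverse) * A ^ N) ((B ^ N) y) := by
      rw [Module.End.mul_apply, h1]
    rw [h2, hid, ← Module.End.mul_apply, ((hcommB s).pow_right N).eq, Module.End.mul_apply,
      hy, map_zero]
  -- isotropy of kernels
  have hiso : ∀ s : ℝ[X], IsCoprime s s.reverse → ∀ x y : E,
      (aeval A s) x = 0 → (aeval A s) y = 0 → Ω x y = 0 := by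
    intro s hcop x y hx hy
    obtain ⟨α, β, hαβ⟩ := hcop
    have hdecomp : (aeval B (α * s)) y + (aeval B (β * s.reverse)) y = y := by
      rw [← LinearMap.add_apply, ← map_add, hαβ, map_one, Module.End.one_apply]
    have hz : (aeval B (β * s.reverse)) y = 0 := by
      rw [map_mul, Module.End.mul_apply, hrevker s y hy, map_zero]
    rw [hz, add_zero] at hdecomp
    rw [← hdecomp, ← hadj (α * s) x y, map_mul, Module.End.mul_apply, hx, map_zero,
      LinearMap.map_zero₂]
  -- the characteristic polynomial and its roots
  set χ : ℝ[X] := LinearMap.charpoly A with hχ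
  have hmonic : χ.Monic := A.charpoly_monic
  have hχ0 : χ ≠ 0 := hmonic.ne_zero
  have hrootsχ : ∀ z : ℂ, aeval z χ = 0 → ‖z‖ ≠ 1 ∧ z ≠ 0 := by
    intro z hz
    have hr : (χ.map (algebraMap ℝ ℂ)).IsRoot z := by
      rwa [aeval_eq_eval_map] at hz
    have hcp : (LinearMap.baseChange ℂ A).charpoly = χ.map (algebraMap ℝ ℂ) :=
      LinearMap.charpoly_baseChange A ℂ
    have heig : Module.End.HasEigenvalue (LinearMap.baseChange ℂ A) z :=
      hasEigenvalue_of_charpoly_root _ (by rwa [hcp])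
    refine ⟨hhyp z heig, ?_⟩
    rintro rfl
    obtain ⟨v, hv⟩ := heig.exists_hasEigenvector
    have hv0 : (LinearMap.baseChange ℂ A) v = 0 := by
      have := Module.End.mem_eigenspace_iff.mp hv.1
      simpa using this
    have h6 : (LinearMap.baseChange ℂ B) ∘ₗ (LinearMap.baseChange ℂ A)
        = (LinearMap.id : ℂ ⊗[ℝ] E →ₗ[ℂ] ℂ ⊗[ℝ] E) := by
      rw [← LinearMap.baseChange_comp, show B ∘ₗ A = LinearMap.id from hBA,
        LinearMap.baseChange_id]
    have hidv : (LinearMap.baseChange ℂ B) ((LinearMap.baseChange ℂ A) v) = v := by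
      have := congrArg (fun T : ℂ ⊗[ℝ] E →ₗ[ℂ] ℂ ⊗[ℝ] E => T v) h6
      simpa using this
    rw [hv0, map_zero] at hidv
    exact hv.2 hidv.symm
  -- factorization of χ
  set S : Multiset ℝ[X] := UniqueFactorizationMonoid.normalizedFactors χ with hS
  set pr : ℝ[X] → Prop := fun f => ∀ z : ℂ, aeval z f = 0 → ‖z‖ < 1 with hpr
  set p : ℝ[X] := (S.filter pr).prod with hpdef
  set q : ℝ[X] := (S.filter (fun f => ¬ pr f)).prod with hqdef
  have hassoc : Associated (p * q) χ := by
    rw [hpdef, hqdef, ← Multiset.prod_add, Multiset.filter_add_not]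
    exact UniqueFactorizationMonoid.prod_normalizedFactors hχ0
  have hpq0 : aeval A (p * q) = 0 := by
    obtain ⟨u, hu⟩ := hassoc
    obtain ⟨c, hcu, hcC⟩ := Polynomial.isUnit_iff.mp u.isUnit
    have h1 : aeval A ((p * q) * (u : ℝ[X])) = 0 := by
      rw [hu]; exact A.aeval_self_charpoly
    rw [← hcC, map_mul, aeval_C, Algebra.algebraMap_eq_smul_one] at h1
    ext x
    have h2 := congrArg (fun T : E →ₗ[ℝ] E => T x) h1
    simp only [Module.End.mul_apply, LinearMap.smul_apply, Module.End.one_apply,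
      map_smul, LinearMap.zero_apply] at h2
    have h3 := (smul_eq_zero.mp h2).resolve_left hcu.ne_zero
    simpa using h3
  -- roots of products of factors
  have hroot_mem : ∀ (T : Multiset ℝ[X]), T ≤ S → ∀ z : ℂ, aeval z T.prod = 0 →
      ∃ f ∈ T, aeval z f = 0 := by
    intro T hT z hz
    rw [aeval_eq_eval_map] at hz
    have hdvd : (X - C z) ∣ (T.prod).map (algebraMap ℝ ℂ) := dvd_iff_isRoot.mpr hz
    rw [show (T.prod).map (algebraMap ℝ ℂ)
        = (T.map (fun f : ℝ[X] => f.map (algebraMap ℝ ℂ))).prod by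
      rw [← Polynomial.coe_mapRingHom, map_multiset_prod]] at hdvd
    obtain ⟨g, hgmem, hgdvd⟩ := (prime_X_sub_C z).exists_mem_multiset_dvd hdvd
    obtain ⟨f, hfT, rfl⟩ := Multiset.mem_map.mp hgmem
    refine ⟨f, hfT, ?_⟩
    rw [aeval_eq_eval_map]
    exact dvd_iff_isRoot.mp hgdvd
  have hdvdχ : ∀ f ∈ S, f ∣ χ := fun f hf =>
    UniqueFactorizationMonoid.dvd_of_mem_normalizedFactors hf
  have hrootχ_of_mem : ∀ f ∈ S, ∀ z : ℂ, aeval z f = 0 → aeval z χ = 0 := by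
    intro f hf z hz
    obtain ⟨c, hc⟩ := hdvdχ f hf
    rw [hc, map_mul, hz, zero_mul]
  have hp_root : ∀ z : ℂ, aeval z p = 0 → ‖z‖ < 1 ∧ z ≠ 0 := by
    intro z hz
    obtain ⟨f, hfmem, hfz⟩ := hroot_mem _ (Multiset.filter_le _ _) z hz
    obtain ⟨hfS, hfpr⟩ := Multiset.mem_filter.mp hfmem
    exact ⟨hfpr z hfz, (hrootsχ z (hrootχ_of_mem f hfS z hfz)).2⟩
  have hq_root : ∀ z : ℂ, aeval z q = 0 → 1 < ‖z‖ ∧ z ≠ 0 := by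
    intro z hz
    obtain ⟨f, hfmem, hfz⟩ := hroot_mem _ (Multiset.filter_le _ _) z hz
    obtain ⟨hfS, hfpr⟩ := Multiset.mem_filter.mp hfmem
    have hfirr : Irreducible f :=
      UniqueFactorizationMonoid.irreducible_of_normalized_factor f hfS
    rw [hpr] at hfpr
    have hfpr' : ∃ w : ℂ, aeval w f = 0 ∧ 1 ≤ ‖w‖ := by
      by_contra hcon
      push_neg at hcon
      exact hfpr fun z hz => hcon z hz
    obtain ⟨w, hw, hw1⟩ := hfpr' 
    have habs : ‖z‖ = ‖w‖ := abs_eq_of_roots hfirr hw hfz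
    have hwχ := hrootsχ w (hrootχ_of_mem f hfS w hw)
    have hzχ := hrootsχ z (hrootχ_of_mem f hfS z hfz)
    exact ⟨habs ▸ lt_of_le_of_ne hw1 (Ne.symm hwχ.1), hzχ.2⟩
  -- nonvanishing
  have hpqne : p * q ≠ 0 := by
    intro h
    exact hχ0 (zero_dvd_iff.mp (h ▸ hassoc.dvd))
  have hp0 : p ≠ 0 := fun h => hpqne (by rw [h, zero_mul])
  have hq0 : q ≠ 0 := fun h => hpqne (by rw [h, mul_zero])
  -- coprimality statements
  have hcop_pq : IsCoprime p q :=
    coprime_of_no_common_root hp0 hq0 (fun z h1 h2 =>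
      absurd (hp_root z h1).1 (not_lt.mpr (le_of_lt (hq_root z h2).1)))
  have hcop_p : IsCoprime p p.reverse := by
    refine coprime_of_no_common_root hp0 (by simpa [Polynomial.reverse_eq_zero] using hp0) ?_
    intro z h1 h2
    obtain ⟨hlt, hz0⟩ := hp_root z h1
    have h3 := (hp_root _ (root_reverse hz0 h2)).1
    rw [norm_inv] at h3
    have hpos : 0 < ‖z‖ := norm_pos_iff.mpr hz0
    have hc := mul_inv_cancel₀ (ne_of_gt hpos)
    nlinarith
  have hcop_q : IsCoprime q q.reverse := by
    refine coprime_of_no_common_root hq0 (by simpa [Polynomial.reverse_eq_zero] using hq0) ?_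
    intro z h1 h2
    obtain ⟨hgt, hz0⟩ := hq_root z h1
    have h3 := (hq_root _ (root_reverse hz0 h2)).1
    rw [norm_inv] at h3
    have hpos : 0 < ‖z‖ := norm_pos_iff.mpr hz0
    have hc := mul_inv_cancel₀ (ne_of_gt hpos)
    nlinarith
  -- the projections
  obtain ⟨u', v', huv⟩ := hcop_pq
  set P : E →ₗ[ℝ] E := aeval A (u' * p) with hPdef
  set Q : E →ₗ[ℝ] E := aeval A (v' * q) with hQdef
  have hPQ1 : P + Q = 1 := by
    rw [hPdef, hQdef, ← map_add, huv, map_one]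
  have hqP : ∀ x : E, (aeval A q) (P x) = 0 := by
    intro x
    have h1 : aeval A q * P = 0 := by
      rw [hPdef, ← map_mul, show q * (u' * p) = u' * (p * q) by ring, map_mul, hpq0, mul_zero]
    have := congrArg (fun T : E →ₗ[ℝ] E => T x) h1
    simpa [Module.End.mul_apply] using this
  have hpQ : ∀ x : E, (aeval A p) (Q x) = 0 := by
    intro x
    have h1 : aeval A p * Q = 0 := by
      rw [hQdef, ← map_mul, show p * (v' * q) = v' * (p * q) by ring, map_mul, hpq0, mul_zero]
    have := congrArg (fun T : E →ₗ[ℝ] E => T x) h1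
    simpa [Module.End.mul_apply] using this
  have hIsoP : ∀ x y : E, Ω (P x) (P y) = 0 := fun x y =>
    hiso q hcop_q _ _ (hqP x) (hqP y)
  have hIsoQ : ∀ x y : E, Ω (Q x) (Q y) = 0 := fun x y =>
    hiso p hcop_p _ _ (hpQ x) (hpQ y)
  refine ⟨Q - P, ?_, ?_, ?_⟩
  · -- involution
    have h1 : (Q - P) * (Q - P) = 1 := by
      rw [hPdef, hQdef, ← map_sub, ← map_mul,
        show (v' * q - u' * p) * (v' * q - u' * p)
          = (u' * p + v' * q) * (u' * p + v' * q) - (4 * (u' * v')) * (p * q) by ring,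
        map_sub, map_mul, map_mul, huv, map_one, one_mul, hpq0, mul_zero, sub_zero]
    exact h1
  · -- commutes with L
    have hQP : Q - P = aeval A (v' * q - u' * p) := by
      rw [map_sub, hPdef, hQdef]
    have h1 : (Q - P) * A = A * (Q - P) := by
      calc (Q - P) * A = aeval A ((v' * q - u' * p) * X) := by
            rw [hQP, map_mul, aeval_X]
        _ = aeval A (X * (v' * q - u' * p)) := by rw [mul_comm]
        _ = A * (Q - P) := by rw [map_mul, aeval_X, hQP]
    exact h1
  · -- antisymplectic
    intro x y
    have ex : P x + Q x = x := by
      rw [← LinearMap.add_apply, hPQ1, Module.End.one_apply]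
    have ey : P y + Q y = y := by
      rw [← LinearMap.add_apply, hPQ1, Module.End.one_apply]
    have e1 := hIsoP x y
    have e2 := hIsoQ x y
    have lhs : Ω ((Q - P) x) ((Q - P) y)
        = Ω (Q x) (Q y) - Ω (Q x) (P y) - Ω (P x) (Q y) + Ω (P x) (P y) := by
      simp only [LinearMap.sub_apply, map_sub, LinearMap.sub_apply]
      ring
    have rhs : Ω x y = Ω (P x) (P y) + Ω (P x) (Q y) + Ω (Q x) (P y) + Ω (Q x) (Q y) := by
      conv_lhs => rw [← ex, ← ey]
      simp only [map_add, LinearMap.add_apply]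
      ring
    rw [lhs, rhs]
    linarith
end

section
/- Let W ∈ D^{III}_n. Set A = −(Iₙ − W·conj(W))⁻¹(Iₙ + W·conj(W)) and B = 2(Iₙ − W·conj(W))⁻¹·W, and define the real 2n×2n matrix J_F(W) in block form by J_F(W) = ((−Im A + Im B, Re A + Re B), (−Re A + Re B, −Im A − Im B)). Then Iₙ − W·conj(W) is invertible, J_F(W)² = −I_{2n}, J_F(W)ᵀ·Ω₀·J_F(W) = Ω₀, and the symmetric 2n×2n real matrix Ω₀·J_F(W) is positive definite; in other words, J_F(W) is a compatible complex structure on (ℝ^{2n}, Ω₀). -/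
open Matrix
open scoped ComplexOrder

set_option linter.unreachableTactic false
set_option linter.unusedTactic false
set_option maxHeartbeats 1000000

/-- The standard symplectic form `Ω₀` on `ℝ^{2n}`, as the block matrix `((0, Iₙ), (−Iₙ, 0))`. -/
def Omega0 (n : ℕ) : Matrix (Fin n ⊕ Fin n) (Fin n ⊕ Fin n) ℝ :=
  Matrix.fromBlocks 0 1 (-1) 0

/-- A compatible complex structure on `(ℝ^{2n}, Ω₀)`: a real `2n×2n` matrix `J` with
`J² = −I`, `Jᵀ Ω₀ J = Ω₀`, and `Ω₀(v, Jv) > 0` for all nonzero `v`. -/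
def IsCompatibleComplexStructure (n : ℕ) (J : Matrix (Fin n ⊕ Fin n) (Fin n ⊕ Fin n) ℝ) :
    Prop :=
  J * J = -1 ∧ Jᵀ * Omega0 n * J = Omega0 n ∧
    ∀ v : Fin n ⊕ Fin n → ℝ, v ≠ 0 → 0 < v ⬝ᵥ (Omega0 n *ᵥ (J *ᵥ v))

/-- Entrywise complex conjugation of a complex matrix. -/
def mconj {m k : Type*} (W : Matrix m k ℂ) : Matrix m k ℂ :=
  W.map (starRingEnd ℂ)

/-- The bounded symmetric domain of type III (Siegel disk):
symmetric complex `n×n` matrices with `Iₙ − conj(W)·W` positive definite. -/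
def SiegelDisk (n : ℕ) : Set (Matrix (Fin n) (Fin n) ℂ) :=
  {W | Wᵀ = W ∧ (1 - mconj W * W).PosDef}

/-- The matrix `A = −(Iₙ − W conj(W))⁻¹ (Iₙ + W conj(W))`. -/
noncomputable def matA {n : ℕ} (W : Matrix (Fin n) (Fin n) ℂ) : Matrix (Fin n) (Fin n) ℂ :=
  -((1 - W * mconj W)⁻¹ * (1 + W * mconj W))

/-- The matrix `B = 2 (Iₙ − W conj(W))⁻¹ W`. -/
noncomputable def matB {n : ℕ} (W : Matrix (Fin n) (Fin n) ℂ) : Matrix (Fin n) (Fin n) ℂ :=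
  (2 : ℂ) • ((1 - W * mconj W)⁻¹ * W)

/-- The real `2n×2n` matrix
`J_F(W) = ((−Im A + Im B, Re A + Re B), (−Re A + Re B, −Im A − Im B))`. -/
noncomputable def JF {n : ℕ} (W : Matrix (Fin n) (Fin n) ℂ) :
    Matrix (Fin n ⊕ Fin n) (Fin n ⊕ Fin n) ℝ :=
  Matrix.fromBlocks
    (-(matA W).map Complex.im + (matB W).map Complex.im)
    ((matA W).map Complex.re + (matB W).map Complex.re)
    (-(matA W).map Complex.re + (matB W).map Complex.re)
    (-(matA W).map Complex.im - (matB W).map Complex.im)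

section Aux

variable {n : ℕ}

/-- real representation of `z ↦ H z` -/
def creal (H : Matrix (Fin n) (Fin n) ℂ) : Matrix (Fin n ⊕ Fin n) (Fin n ⊕ Fin n) ℝ :=
  fromBlocks (H.map Complex.re) (-(H.map Complex.im)) (H.map Complex.im) (H.map Complex.re)

/-- real representation of `z ↦ H z̄` -/
def areal (H : Matrix (Fin n) (Fin n) ℂ) : Matrix (Fin n ⊕ Fin n) (Fin n ⊕ Fin n) ℝ :=
  fromBlocks (H.map Complex.re) (H.map Complex.im) (H.map Complex.im) (-(H.map Complex.re))

lemma mapre_mul (X Y : Matrix (Fin n) (Fin n) ℂ) :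
    (X * Y).map Complex.re = X.map Complex.re * Y.map Complex.re - X.map Complex.im * Y.map Complex.im := by
  ext i j
  simp [Matrix.mul_apply, Complex.re_sum, Complex.mul_re, Finset.sum_sub_distrib]

lemma mapim_mul (X Y : Matrix (Fin n) (Fin n) ℂ) :
    (X * Y).map Complex.im = X.map Complex.re * Y.map Complex.im + X.map Complex.im * Y.map Complex.re := by
  ext i j
  simp [Matrix.mul_apply, Complex.im_sum, Complex.mul_im, Finset.sum_add_distrib]

lemma mapre_mconj (X : Matrix (Fin n) (Fin n) ℂ) : (mconj X).map Complex.re = X.map Complex.re := by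
  ext i j; simp [mconj]

lemma mapim_mconj (X : Matrix (Fin n) (Fin n) ℂ) : (mconj X).map Complex.im = -(X.map Complex.im) := by
  ext i j; simp [mconj]

lemma creal_mul_creal (X Y : Matrix (Fin n) (Fin n) ℂ) : creal X * creal Y = creal (X * Y) := by
  simp only [creal, fromBlocks_multiply, mapre_mul, mapim_mul]
  exact Matrix.fromBlocks_inj.mpr ⟨by first | noncomm_ring | abel, by first | noncomm_ring | abel,
    by first | noncomm_ring | abel, by first | noncomm_ring | abel⟩

lemma creal_mul_areal (X Y : Matrix (Fin n) (Fin n) ℂ) : creal X * areal Y = areal (X * Y) := by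
  simp only [creal, areal, fromBlocks_multiply, mapre_mul, mapim_mul]
  exact Matrix.fromBlocks_inj.mpr ⟨by first | noncomm_ring | abel, by first | noncomm_ring | abel,
    by first | noncomm_ring | abel, by first | noncomm_ring | abel⟩

lemma areal_mul_creal (X Y : Matrix (Fin n) (Fin n) ℂ) : areal X * creal Y = areal (X * mconj Y) := by
  simp only [creal, areal, fromBlocks_multiply, mapre_mul, mapim_mul, mapre_mconj, mapim_mconj,
    Matrix.mul_neg, Matrix.neg_mul, neg_neg]
  exact Matrix.fromBlocks_inj.mpr ⟨by first | noncomm_ring | abel, by first | noncomm_ring | abel,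
    by first | noncomm_ring | abel, by first | noncomm_ring | abel⟩

lemma areal_mul_areal (X Y : Matrix (Fin n) (Fin n) ℂ) : areal X * areal Y = creal (X * mconj Y) := by
  simp only [creal, areal, fromBlocks_multiply, mapre_mul, mapim_mul, mapre_mconj, mapim_mconj,
    Matrix.mul_neg, Matrix.neg_mul, neg_neg]
  exact Matrix.fromBlocks_inj.mpr ⟨by first | noncomm_ring | abel, by first | noncomm_ring | abel,
    by first | noncomm_ring | abel, by first | noncomm_ring | abel⟩

lemma creal_transpose (X : Matrix (Fin n) (Fin n) ℂ) : (creal X)ᵀ = creal (mconj Xᵀ) := by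
  simp only [creal, fromBlocks_transpose, transpose_neg, Matrix.transpose_map, mapre_mconj, mapim_mconj]
  exact Matrix.fromBlocks_inj.mpr ⟨by first | noncomm_ring | abel, by first | noncomm_ring | abel,
    by first | noncomm_ring | abel, by first | noncomm_ring | abel⟩

lemma areal_transpose (X : Matrix (Fin n) (Fin n) ℂ) : (areal X)ᵀ = areal Xᵀ := by
  simp only [areal, fromBlocks_transpose, transpose_neg, Matrix.transpose_map]

lemma creal_add (X Y : Matrix (Fin n) (Fin n) ℂ) : creal (X + Y) = creal X + creal Y := by
  simp only [creal, Matrix.fromBlocks_add]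
  have h1 : (X + Y).map Complex.re = X.map Complex.re + Y.map Complex.re := by ext i j; simp
  have h2 : (X + Y).map Complex.im = X.map Complex.im + Y.map Complex.im := by ext i j; simp
  rw [h1, h2]
  exact Matrix.fromBlocks_inj.mpr ⟨by first | noncomm_ring | abel, by first | noncomm_ring | abel,
    by first | noncomm_ring | abel, by first | noncomm_ring | abel⟩

lemma areal_add (X Y : Matrix (Fin n) (Fin n) ℂ) : areal (X + Y) = areal X + areal Y := by
  simp only [areal, Matrix.fromBlocks_add]
  have h1 : (X + Y).map Complex.re = X.map Complex.re + Y.map Complex.re := by ext i j; simp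
  have h2 : (X + Y).map Complex.im = X.map Complex.im + Y.map Complex.im := by ext i j; simp
  rw [h1, h2]
  exact Matrix.fromBlocks_inj.mpr ⟨by first | noncomm_ring | abel, by first | noncomm_ring | abel,
    by first | noncomm_ring | abel, by first | noncomm_ring | abel⟩

lemma mapre_one : ((1 : Matrix (Fin n) (Fin n) ℂ)).map Complex.re = 1 := by
  ext i j; by_cases h : i = j <;> simp [Matrix.one_apply, h]

lemma mapim_one : ((1 : Matrix (Fin n) (Fin n) ℂ)).map Complex.im = 0 := by
  ext i j; by_cases h : i = j <;> simp [Matrix.one_apply, h]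

lemma creal_one : creal (1 : Matrix (Fin n) (Fin n) ℂ) = 1 := by
  simp [creal, mapre_one, mapim_one]

lemma creal_neg (X : Matrix (Fin n) (Fin n) ℂ) : creal (-X) = -(creal X) := by
  have h1 : (-X).map Complex.re = -(X.map Complex.re) := by ext i j; simp
  have h2 : (-X).map Complex.im = -(X.map Complex.im) := by ext i j; simp
  rw [creal, creal, h1, h2, Matrix.fromBlocks_neg]

lemma creal_neg_one : creal (-1 : Matrix (Fin n) (Fin n) ℂ) = -1 := by
  rw [creal_neg, creal_one]

lemma areal_zero : areal (0 : Matrix (Fin n) (Fin n) ℂ) = 0 := by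
  simp [areal, show (0 : Matrix (Fin n) (Fin n) ℂ).map Complex.re = 0 by ext i j; simp,
    show (0 : Matrix (Fin n) (Fin n) ℂ).map Complex.im = 0 by ext i j; simp]

lemma mconj_mul (X Y : Matrix (Fin n) (Fin n) ℂ) : mconj (X * Y) = mconj X * mconj Y := by
  simp [mconj, Matrix.map_mul]

lemma mconj_one : mconj (1 : Matrix (Fin n) (Fin n) ℂ) = 1 :=
  Matrix.map_one _ (map_zero _) (map_one _)

lemma mconj_mconj {m k : Type*} (X : Matrix m k ℂ) : mconj (mconj X) = X := by
  ext i j; simp [mconj]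

lemma mconj_smul (z : ℂ) (X : Matrix (Fin n) (Fin n) ℂ) :
    mconj (z • X) = (starRingEnd ℂ z) • mconj X := by
  ext i j; simp [mconj]

lemma mconj_add (X Y : Matrix (Fin n) (Fin n) ℂ) : mconj (X + Y) = mconj X + mconj Y := by
  ext i j; simp [mconj]

lemma mconj_sub (X Y : Matrix (Fin n) (Fin n) ℂ) : mconj (X - Y) = mconj X - mconj Y := by
  ext i j; simp [mconj]

lemma mconj_neg (X : Matrix (Fin n) (Fin n) ℂ) : mconj (-X) = -(mconj X) := by
  ext i j; simp [mconj]

lemma mconj_transpose (X : Matrix (Fin n) (Fin n) ℂ) : (mconj X)ᵀ = mconj Xᵀ := by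
  ext i j; simp [mconj]

def tocv (v : Fin n ⊕ Fin n → ℝ) : Fin n → ℂ := fun j => ⟨v (Sum.inl j), v (Sum.inr j)⟩

lemma tocv_ne_zero {v : Fin n ⊕ Fin n → ℝ} (hv : v ≠ 0) : tocv v ≠ 0 := by
  intro h
  apply hv
  funext p
  cases p with
  | inl j =>
    have := congrFun h j
    rw [tocv] at this
    simpa [Complex.ext_iff] using congrArg Complex.re this
  | inr j =>
    have := congrFun h j
    rw [tocv] at this
    simpa [Complex.ext_iff] using congrArg Complex.im this

lemma bridge (H : Matrix (Fin n) (Fin n) ℂ) (v : Fin n ⊕ Fin n → ℝ) :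
    v ⬝ᵥ (creal H *ᵥ v) = (star (tocv v) ⬝ᵥ (H *ᵥ tocv v)).re := by
  simp only [dotProduct, Matrix.mulVec, Pi.star_apply, Finset.mul_sum, Complex.re_sum,
    Fintype.sum_sum_type, creal, fromBlocks_apply₁₁, fromBlocks_apply₁₂, fromBlocks_apply₂₁,
    fromBlocks_apply₂₂]
  rw [← Finset.sum_add_distrib]
  refine Finset.sum_congr rfl fun j _ => ?_
  have hpt : ∀ i, (star (tocv v j) * (H j i * tocv v i)).re =
      v (Sum.inl j) * (H.map Complex.re j i * v (Sum.inl i) + (-H.map Complex.im) j i * v (Sum.inr i)) +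
      (v (Sum.inr j) * (H.map Complex.im j i * v (Sum.inl i)) +
        v (Sum.inr j) * (H.map Complex.re j i * v (Sum.inr i))) := by
    intro i
    simp only [Matrix.map_apply, Matrix.neg_apply, tocv, Pi.star_apply]
    simp [Complex.mul_re, Complex.mul_im]
    ring
  simp only [hpt]
  simp only [Finset.mul_sum, mul_add, Finset.sum_add_distrib]

lemma creal_posDef {H : Matrix (Fin n) (Fin n) ℂ} (h : H.PosDef) : (creal H).PosDef := by
  rw [Matrix.posDef_iff_dotProduct_mulVec]
  constructor
  · have hmt : mconj Hᵀ = H := by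
      calc mconj Hᵀ = Hᴴ := by ext i j; simp [mconj, Matrix.conjTranspose_apply]
      _ = H := h.isHermitian
    rw [Matrix.IsHermitian, Matrix.conjTranspose_eq_transpose_of_trivial, creal_transpose, hmt]
  · intro v hv
    have hsv : star v = v := funext fun p => star_trivial _
    rw [hsv, bridge]
    have := h.dotProduct_mulVec_pos (tocv_ne_zero hv)
    rw [Complex.lt_def] at this
    simpa using this.1

lemma comm_inv {X M N' : Matrix (Fin n) (Fin n) ℂ} (hM : IsUnit M.det) (hN : IsUnit N'.det)
    (h : X * N' = M * X) : X * N'⁻¹ = M⁻¹ * X := by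
  calc X * N'⁻¹ = M⁻¹ * M * (X * N'⁻¹) := by rw [Matrix.nonsing_inv_mul _ hM, Matrix.one_mul]
  _ = M⁻¹ * (M * X) * N'⁻¹ := by noncomm_ring
  _ = M⁻¹ * (X * N') * N'⁻¹ := by rw [h]
  _ = M⁻¹ * X * (N' * N'⁻¹) := by noncomm_ring
  _ = M⁻¹ * X := by rw [Matrix.mul_nonsing_inv _ hN, Matrix.mul_one]

/-- `C`-part of the complex-linear description of `JF`. -/
noncomputable def cmC {n : ℕ} (W : Matrix (Fin n) (Fin n) ℂ) : Matrix (Fin n) (Fin n) ℂ :=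
  -(Complex.I • mconj (matA W))

/-- `D`-part (antilinear part) of the complex-linear description of `JF`. -/
noncomputable def cmD {n : ℕ} (W : Matrix (Fin n) (Fin n) ℂ) : Matrix (Fin n) (Fin n) ℂ :=
  Complex.I • mconj (matB W)

lemma JF_eq (W : Matrix (Fin n) (Fin n) ℂ) : JF W = creal (cmC W) + areal (cmD W) := by
  rw [JF, creal, areal, cmC, cmD, Matrix.fromBlocks_add]
  refine Matrix.fromBlocks_inj.mpr ⟨?_, ?_, ?_, ?_⟩ <;>
    · ext i j
      simp [mconj, Complex.mul_re, Complex.mul_im]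
      try ring

lemma Omega0_eq : Omega0 n = creal ((-Complex.I) • (1 : Matrix (Fin n) (Fin n) ℂ)) := by
  rw [Omega0, creal]
  refine Matrix.fromBlocks_inj.mpr ⟨?_, ?_, ?_, ?_⟩ <;>
    · ext i j
      by_cases h : i = j <;> simp [Matrix.one_apply, h]

end Aux

/-- For `W` in the Siegel disk `D^{III}_n`, the matrix `Iₙ − W conj(W)` is
invertible, and `J_F(W)` is a compatible complex structure on `(ℝ^{2n}, Ω₀)`; moreover the
symmetric real matrix `Ω₀ · J_F(W)` is positive definite. -/
theorem JF_isCompatibleComplexStructure {n : ℕ} (W : Matrix (Fin n) (Fin n) ℂ)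
    (hW : W ∈ SiegelDisk n) :
    IsUnit (1 - W * mconj W) ∧
    JF W * JF W = -1 ∧
    (JF W)ᵀ * Omega0 n * JF W = Omega0 n ∧
    (Omega0 n * JF W).PosDef ∧
    IsCompatibleComplexStructure n (JF W) := by
  obtain ⟨hsym, hN⟩ := hW
  set M : Matrix (Fin n) (Fin n) ℂ := 1 - W * mconj W with hMdef
  set N : Matrix (Fin n) (Fin n) ℂ := 1 - mconj W * W with hNdef
  have hNM : mconj M = N := by rw [hMdef, hNdef, mconj_sub, mconj_one, mconj_mul, mconj_mconj]
  have hMN : mconj N = M := by rw [← hNM, mconj_mconj]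
  have hNu : IsUnit N := hN.isUnit
  have hNd : IsUnit N.det := (Matrix.isUnit_iff_isUnit_det N).mp hNu
  have hMu : IsUnit M := by
    rw [← hMN]
    exact hNu.map ((starRingEnd ℂ).mapMatrix)
  have hMd : IsUnit M.det := (Matrix.isUnit_iff_isUnit_det M).mp hMu
  have hMinv : M⁻¹ = mconj N⁻¹ :=
    Matrix.inv_eq_right_inv (by rw [← hMN, ← mconj_mul, Matrix.mul_nonsing_inv _ hNd, mconj_one])
  have hNinv : N⁻¹ = mconj M⁻¹ := by rw [hMinv, mconj_mconj]
  have hWct : (mconj W)ᵀ = mconj W := by rw [mconj_transpose, hsym]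
  have hMT : Mᵀ = N := by
    rw [hMdef, hNdef, Matrix.transpose_sub, Matrix.transpose_one, Matrix.transpose_mul, hWct, hsym]
  have hMpd : M.PosDef := by
    have h1 : Nᵀ = M := by rw [← hMT, Matrix.transpose_transpose]
    exact h1 ▸ hN.transpose
  have hMipd : M⁻¹.PosDef := hMpd.inv
  have hMiT : (M⁻¹)ᵀ = N⁻¹ := by rw [Matrix.transpose_nonsing_inv, hMT]
  -- commutations
  have c_m : (1 + W * mconj W) * M⁻¹ = M⁻¹ * (1 + W * mconj W) :=
    comm_inv hMd hMd (by rw [hMdef]; noncomm_ring)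
  have c_w : W * N⁻¹ = M⁻¹ * W :=
    comm_inv hMd hNd (by rw [hMdef, hNdef]; noncomm_ring)
  have c_wc : mconj W * M⁻¹ = N⁻¹ * mconj W :=
    comm_inv hNd hMd (by rw [hMdef, hNdef]; noncomm_ring)
  have c_n : (1 + mconj W * W) * N⁻¹ = N⁻¹ * (1 + mconj W * W) :=
    comm_inv hNd hNd (by rw [hNdef]; noncomm_ring)
  have hMiMi : M⁻¹ * M⁻¹ * (M * M) = 1 := by
    calc M⁻¹ * M⁻¹ * (M * M) = M⁻¹ * (M⁻¹ * M) * M := by noncomm_ring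
    _ = 1 := by rw [Matrix.nonsing_inv_mul _ hMd, Matrix.mul_one, Matrix.nonsing_inv_mul _ hMd]
  -- unfoldings
  have hA : matA W = -(M⁻¹ * (1 + W * mconj W)) := by rw [matA, ← hMdef]
  have hB : matB W = M⁻¹ * W + M⁻¹ * W := by rw [matB, ← hMdef, two_smul]
  have hAc : mconj (matA W) = -(N⁻¹ * (1 + mconj W * W)) := by
    rw [hA, mconj_neg, mconj_mul, ← hNinv, mconj_add, mconj_one, mconj_mul, mconj_mconj]
  have hBc : mconj (matB W) = N⁻¹ * mconj W + N⁻¹ * mconj W := by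
    rw [hB, mconj_add, mconj_mul, ← hNinv]
  -- transposes
  have hAT : (matA W)ᵀ = mconj (matA W) := by
    rw [hAc, hA, Matrix.transpose_neg, Matrix.transpose_mul, hMiT, Matrix.transpose_add,
      Matrix.transpose_one, Matrix.transpose_mul, hWct, hsym, c_n]
  have hBT : (matB W)ᵀ = matB W := by
    rw [hB, Matrix.transpose_add, Matrix.transpose_mul, hMiT, hsym, c_w]
  -- key complex identities
  have e1 : (M⁻¹ * W) * (N⁻¹ * mconj W) = M⁻¹ * M⁻¹ * (W * mconj W) := by
    calc (M⁻¹ * W) * (N⁻¹ * mconj W) = M⁻¹ * (W * N⁻¹) * mconj W := by noncomm_ring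
    _ = M⁻¹ * (M⁻¹ * W) * mconj W := by rw [c_w]
    _ = M⁻¹ * M⁻¹ * (W * mconj W) := by noncomm_ring
  have e2 : (M⁻¹ * (1 + W * mconj W)) * (M⁻¹ * (1 + W * mconj W))
      = M⁻¹ * M⁻¹ * ((1 + W * mconj W) * (1 + W * mconj W)) := by
    calc (M⁻¹ * (1 + W * mconj W)) * (M⁻¹ * (1 + W * mconj W))
        = M⁻¹ * ((1 + W * mconj W) * M⁻¹) * (1 + W * mconj W) := by noncomm_ring
    _ = M⁻¹ * (M⁻¹ * (1 + W * mconj W)) * (1 + W * mconj W) := by rw [c_m]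
    _ = M⁻¹ * M⁻¹ * ((1 + W * mconj W) * (1 + W * mconj W)) := by noncomm_ring
  have CI : matA W * matA W - matB W * mconj (matB W) = 1 := by
    have expand : matA W * matA W - matB W * mconj (matB W)
        = (M⁻¹ * (1 + W * mconj W)) * (M⁻¹ * (1 + W * mconj W))
          - ((M⁻¹ * W) * (N⁻¹ * mconj W) + (M⁻¹ * W) * (N⁻¹ * mconj W)
            + ((M⁻¹ * W) * (N⁻¹ * mconj W) + (M⁻¹ * W) * (N⁻¹ * mconj W))) := by
      rw [hBc, hA, hB]; noncomm_ring
    rw [expand, e1, e2]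
    calc M⁻¹ * M⁻¹ * ((1 + W * mconj W) * (1 + W * mconj W))
          - (M⁻¹ * M⁻¹ * (W * mconj W) + M⁻¹ * M⁻¹ * (W * mconj W)
            + (M⁻¹ * M⁻¹ * (W * mconj W) + M⁻¹ * M⁻¹ * (W * mconj W)))
        = M⁻¹ * M⁻¹ * ((1 + W * mconj W) * (1 + W * mconj W)
            - (W * mconj W + W * mconj W + (W * mconj W + W * mconj W))) := by noncomm_ring
    _ = M⁻¹ * M⁻¹ * (M * M) := by
        rw [show (1 + W * mconj W) * (1 + W * mconj W)
            - (W * mconj W + W * mconj W + (W * mconj W + W * mconj W)) = M * M by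
          rw [hMdef]; noncomm_ring]
    _ = 1 := hMiMi
  have e4 : (M⁻¹ * (1 + W * mconj W)) * (M⁻¹ * W) = M⁻¹ * M⁻¹ * ((1 + W * mconj W) * W) := by
    calc (M⁻¹ * (1 + W * mconj W)) * (M⁻¹ * W)
        = M⁻¹ * ((1 + W * mconj W) * M⁻¹) * W := by noncomm_ring
    _ = M⁻¹ * (M⁻¹ * (1 + W * mconj W)) * W := by rw [c_m]
    _ = M⁻¹ * M⁻¹ * ((1 + W * mconj W) * W) := by noncomm_ring
  have e5 : (M⁻¹ * W) * (N⁻¹ * (1 + mconj W * W))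
      = M⁻¹ * M⁻¹ * (W * (1 + mconj W * W)) := by
    calc (M⁻¹ * W) * (N⁻¹ * (1 + mconj W * W))
        = M⁻¹ * (W * N⁻¹) * (1 + mconj W * W) := by noncomm_ring
    _ = M⁻¹ * (M⁻¹ * W) * (1 + mconj W * W) := by rw [c_w]
    _ = M⁻¹ * M⁻¹ * (W * (1 + mconj W * W)) := by noncomm_ring
  have e6 : (1 + W * mconj W) * W = W * (1 + mconj W * W) := by noncomm_ring
  have CII : matA W * matB W = matB W * mconj (matA W) := by
    calc matA W * matB W
        = -((M⁻¹ * (1 + W * mconj W)) * (M⁻¹ * W) + (M⁻¹ * (1 + W * mconj W)) * (M⁻¹ * W)) := by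
          rw [hA, hB]; noncomm_ring
    _ = -(M⁻¹ * M⁻¹ * (W * (1 + mconj W * W)) + M⁻¹ * M⁻¹ * (W * (1 + mconj W * W))) := by
          rw [e4, e6]
    _ = -((M⁻¹ * W) * (N⁻¹ * (1 + mconj W * W)) + (M⁻¹ * W) * (N⁻¹ * (1 + mconj W * W))) := by
          rw [e5]
    _ = matB W * mconj (matA W) := by rw [hAc, hB]; noncomm_ring
  -- conjugated identities
  have CIc : mconj (matA W) * mconj (matA W) - mconj (matB W) * matB W = 1 := by
    have h := congrArg mconj CI
    rwa [mconj_sub, mconj_mul, mconj_mul, mconj_mconj, mconj_one] at h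
  have CIIc : mconj (matA W) * mconj (matB W) = mconj (matB W) * matA W := by
    have h := congrArg mconj CII
    rwa [mconj_mul, mconj_mul, mconj_mconj] at h
  -- scalar computations for the C/D decomposition
  have q1 : cmC W * cmC W + cmD W * mconj (cmD W) = -1 := by
    rw [cmC, cmD, mconj_smul, mconj_mconj, Complex.conj_I]
    rw [neg_mul_neg]
    rw [smul_mul_smul_comm, smul_mul_smul_comm, Complex.I_mul_I]
    rw [show Complex.I * -Complex.I = 1 by simp [Complex.I_mul_I]]
    rw [one_smul, neg_one_smul]
    rw [← CIc]
    noncomm_ring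
  have q2 : cmC W * cmD W + cmD W * mconj (cmC W) = 0 := by
    rw [cmC, cmD, mconj_neg, mconj_smul, mconj_mconj, Complex.conj_I]
    rw [neg_mul, mul_neg]
    rw [smul_mul_smul_comm, smul_mul_smul_comm, Complex.I_mul_I]
    rw [show Complex.I * -Complex.I = 1 by simp [Complex.I_mul_I]]
    rw [one_smul, neg_one_smul, neg_neg]
    rw [CIIc]
    abel
  -- J² = -1
  have hJ2 : JF W * JF W = -1 := by
    rw [JF_eq, add_mul, mul_add, mul_add, creal_mul_creal, creal_mul_areal, areal_mul_creal,
      areal_mul_areal]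
    have rearr : creal (cmC W * cmC W) + areal (cmC W * cmD W)
        + (areal (cmD W * mconj (cmC W)) + creal (cmD W * mconj (cmD W)))
        = creal (cmC W * cmC W + cmD W * mconj (cmD W))
          + areal (cmC W * cmD W + cmD W * mconj (cmC W)) := by
      rw [creal_add, areal_add]; abel
    rw [rearr, q1, q2, creal_neg_one, areal_zero, add_zero]
  -- transpose facts
  have hCmT : mconj ((cmC W)ᵀ) = -(cmC W) := by
    rw [cmC, Matrix.transpose_neg, Matrix.transpose_smul, mconj_transpose, hAT, mconj_mconj,
      mconj_neg, mconj_smul, Complex.conj_I, neg_smul]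
  have hDmT : (cmD W)ᵀ = cmD W := by
    rw [cmD, Matrix.transpose_smul, mconj_transpose, hBT]
  have hJFT : (JF W)ᵀ = creal (-(cmC W)) + areal (cmD W) := by
    rw [JF_eq, Matrix.transpose_add, creal_transpose, areal_transpose, hCmT, hDmT]
  have hmCm : mconj (cmC W) = Complex.I • matA W := by
    rw [cmC, mconj_neg, mconj_smul, mconj_mconj, Complex.conj_I, neg_smul, neg_neg]
  have hmDm : mconj (cmD W) = (-Complex.I) • matB W := by
    rw [cmD, mconj_smul, mconj_mconj, Complex.conj_I, neg_smul]
  have hmOm : mconj ((-Complex.I) • (1 : Matrix (Fin n) (Fin n) ℂ)) = Complex.I • 1 := by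
    rw [mconj_smul, mconj_one, map_neg, Complex.conj_I, neg_neg]
  -- symplectic condition
  have hSymp : (JF W)ᵀ * Omega0 n * JF W = Omega0 n := by
    rw [hJFT, Omega0_eq, JF_eq]
    rw [add_mul, creal_mul_creal, areal_mul_creal, hmOm]
    rw [add_mul, mul_add, mul_add, creal_mul_creal, creal_mul_areal, areal_mul_creal,
      areal_mul_areal]
    have rearr : ∀ a b c d : Matrix (Fin n) (Fin n) ℂ,
        creal a + areal b + (areal c + creal d) = creal (a + d) + areal (b + c) := by
      intro a b c d; rw [creal_add, areal_add]; abel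
    rw [rearr]
    have s1 : -(cmC W) * ((-Complex.I) • 1) * cmC W + cmD W * (Complex.I • 1) * mconj (cmD W)
        = (-Complex.I) • (1 : Matrix (Fin n) (Fin n) ℂ) := by
      rw [hmDm, cmC, cmD, neg_neg]
      simp only [smul_mul_smul_comm, Matrix.mul_one, Matrix.one_mul, mul_neg, neg_mul, neg_neg,
        mul_smul_comm, smul_mul_assoc, smul_smul, Complex.I_mul_I]
      rw [← CIc]
      match_scalars <;> ring
    have s2 : -(cmC W) * ((-Complex.I) • 1) * cmD W + cmD W * (Complex.I • 1) * mconj (cmC W)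
        = 0 := by
      rw [hmCm, cmC, cmD, neg_neg]
      simp only [smul_mul_smul_comm, Matrix.mul_one, Matrix.one_mul, mul_neg, neg_mul, neg_neg,
        mul_smul_comm, smul_mul_assoc, smul_smul, Complex.I_mul_I]
      rw [CIIc]
      match_scalars <;> ring
    rw [s1, s2, areal_zero, add_zero]
  -- Omega0 * JF as a congruence
  have o1 : ((-Complex.I) • (1 : Matrix (Fin n) (Fin n) ℂ)) * cmC W = -(mconj (matA W)) := by
    rw [cmC]
    simp only [smul_mul_smul_comm, Matrix.one_mul, mul_neg, neg_mul, neg_neg, smul_smul,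
      Complex.I_mul_I, mul_smul_comm, smul_mul_assoc]
    match_scalars <;> ring
  have o2 : ((-Complex.I) • (1 : Matrix (Fin n) (Fin n) ℂ)) * cmD W = mconj (matB W) := by
    rw [cmD]
    simp only [smul_mul_smul_comm, Matrix.one_mul, mul_neg, neg_mul, neg_neg, smul_smul,
      Complex.I_mul_I, mul_smul_comm, smul_mul_assoc]
    match_scalars <;> ring
  have hOJ : Omega0 n * JF W = creal (-(mconj (matA W))) + areal (mconj (matB W)) := by
    rw [Omega0_eq, JF_eq, mul_add, creal_mul_creal, creal_mul_areal, o1, o2]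
  set Km : Matrix (Fin n ⊕ Fin n) (Fin n ⊕ Fin n) ℝ :=
    creal W + areal (1 : Matrix (Fin n) (Fin n) ℂ) with hKm
  have hKmT : Kmᵀ = creal (mconj W) + areal 1 := by
    rw [hKm, Matrix.transpose_add, creal_transpose, areal_transpose, Matrix.transpose_one, hsym]
  have i1 : mconj W * M⁻¹ * W + mconj M⁻¹ = -(mconj (matA W)) := by
    calc mconj W * M⁻¹ * W + mconj M⁻¹ = mconj W * M⁻¹ * W + N⁻¹ := by rw [← hNinv]
    _ = N⁻¹ * mconj W * W + N⁻¹ := by rw [c_wc]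
    _ = -(mconj (matA W)) := by rw [hAc]; noncomm_ring
  have i2 : mconj W * M⁻¹ + mconj M⁻¹ * mconj W = mconj (matB W) := by
    rw [← hNinv, c_wc, hBc]
  have hcong : creal (-(mconj (matA W))) + areal (mconj (matB W)) = Kmᵀ * creal M⁻¹ * Km := by
    rw [hKmT, hKm]
    rw [add_mul, creal_mul_creal, areal_mul_creal]
    rw [add_mul, mul_add, mul_add, creal_mul_creal, creal_mul_areal, areal_mul_creal,
      areal_mul_areal]
    have rearr : ∀ a b c d : Matrix (Fin n) (Fin n) ℂ,
        creal a + areal b + (areal c + creal d) = creal (a + d) + areal (b + c) := by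
      intro a b c d; rw [creal_add, areal_add]; abel
    rw [rearr]
    simp only [Matrix.mul_one, Matrix.one_mul, mconj_one]
    rw [i1, i2]
  have hK'K : (creal (-(N⁻¹ * mconj W)) + areal (N⁻¹)) * Km = 1 := by
    rw [hKm]
    rw [mul_add, add_mul, add_mul, creal_mul_creal, creal_mul_areal, areal_mul_creal,
      areal_mul_areal]
    have rearr : ∀ a b c d : Matrix (Fin n) (Fin n) ℂ,
        creal a + areal c + (areal b + creal d) = creal (a + d) + areal (c + b) := by
      intro a b c d; rw [creal_add, areal_add]; abel
    rw [rearr]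
    simp only [Matrix.mul_one, Matrix.one_mul, mconj_one]
    have z1 : -(N⁻¹ * mconj W) * W + N⁻¹ = N⁻¹ * N := by rw [hNdef]; noncomm_ring
    have z2 : N⁻¹ * mconj W + -(N⁻¹ * mconj W) = 0 := by abel
    rw [z1, z2, Matrix.nonsing_inv_mul _ hNd, creal_one, areal_zero, add_zero]
  have hGpd := creal_posDef hMipd
  have hGT : (creal (M⁻¹))ᵀ = creal M⁻¹ := by rw [creal_transpose, hMiT, ← hMinv]
  have hOJpd : (Omega0 n * JF W).PosDef := by
    rw [Matrix.posDef_iff_dotProduct_mulVec]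
    constructor
    · show (Omega0 n * JF W)ᴴ = _
      rw [Matrix.conjTranspose_eq_transpose_of_trivial, hOJ, hcong]
      rw [Matrix.transpose_mul, Matrix.transpose_mul, Matrix.transpose_transpose, hGT,
        Matrix.mul_assoc]
    · intro x hx
      have hsx : star x = x := funext fun p => star_trivial _
      rw [hsx, hOJ, hcong, ← Matrix.mulVec_mulVec, ← Matrix.mulVec_mulVec,
        Matrix.dotProduct_mulVec, Matrix.vecMul_transpose]
      have hy : Km *ᵥ x ≠ 0 := by
        intro h0
        apply hx
        have hxx : (creal (-(N⁻¹ * mconj W)) + areal N⁻¹) *ᵥ (Km *ᵥ x) = x := by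
          rw [Matrix.mulVec_mulVec, hK'K, Matrix.one_mulVec]
        rw [h0, Matrix.mulVec_zero] at hxx
        exact hxx.symm
      have hpos := hGpd.dotProduct_mulVec_pos hy
      rwa [show star (Km *ᵥ x) = Km *ᵥ x from funext fun p => star_trivial _] at hpos
  refine ⟨hMu, hJ2, hSymp, hOJpd, hJ2, hSymp, fun v hv => ?_⟩
  rw [Matrix.mulVec_mulVec]
  have hpos := hOJpd.dotProduct_mulVec_pos hv
  rwa [show star v = v from funext fun p => star_trivial _] at hpos
end

section
/- Let W ∈ D^{III}_n, and set A = −(Iₙ − W·conj(W))⁻¹(Iₙ + W·conj(W)) and B = 2(Iₙ − W·conj(W))⁻¹·W. Then: Iₙ − W·conj(W) is Hermitian positive definite (in particular invertible); A is Hermitian and negative definite; B is symmetric (Bᵀ = B); A² − B·conj(B) = Iₙ; A·B = B·conj(A); and conj(A) − conj(B)·A⁻¹·B = −(Iₙ − conj(W)·W)·(Iₙ + conj(W)·W)⁻¹. -/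
open Matrix
open scoped ComplexOrder

/-- `mconj` is conjugate-transpose followed by transpose. -/
lemma mconj_eq_ct_t {m k : Type*} (M : Matrix m k ℂ) : mconj M = Mᴴᵀ := by
  ext i j
  simp only [mconj, Matrix.map_apply, Matrix.transpose_apply, Matrix.conjTranspose_apply,
    starRingEnd_apply]

/-- From `X * M = N * X` with `M`, `N` invertible, deduce `X * M⁻¹ = N⁻¹ * X`. -/
lemma swap_inv {n : ℕ} {M N X : Matrix (Fin n) (Fin n) ℂ}
    (hM : IsUnit M) (hN : IsUnit N) (h : X * M = N * X) : X * M⁻¹ = N⁻¹ * X := by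
  have hM' : M * M⁻¹ = 1 := Matrix.mul_nonsing_inv M ((Matrix.isUnit_iff_isUnit_det M).1 hM)
  have hN' : N⁻¹ * N = 1 := Matrix.nonsing_inv_mul N ((Matrix.isUnit_iff_isUnit_det N).1 hN)
  calc X * M⁻¹ = N⁻¹ * N * (X * M⁻¹) := by rw [hN', one_mul]
    _ = N⁻¹ * (N * X * M⁻¹) := by rw [mul_assoc, ← mul_assoc N X]
    _ = N⁻¹ * (X * M * M⁻¹) := by rw [h]
    _ = N⁻¹ * X := by rw [mul_assoc X, hM', mul_one]

/-- Properties of the matrices `A` and `B` attached to a point `W` of the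
Siegel disk: `Iₙ − W conj(W)` is Hermitian positive definite (in particular invertible), `A` is
Hermitian negative definite, `B` is symmetric, `A² − B conj(B) = Iₙ`, `A B = B conj(A)`, and
`conj(A) − conj(B) A⁻¹ B = −(Iₙ − conj(W) W)(Iₙ + conj(W) W)⁻¹`. -/
theorem matA_matB_properties {n : ℕ} (W : Matrix (Fin n) (Fin n) ℂ)
    (hW : W ∈ SiegelDisk n) :
    (1 - W * mconj W).PosDef ∧
    IsUnit (1 - W * mconj W) ∧
    (matA W).IsHermitian ∧
    (-(matA W)).PosDef ∧
    (matB W)ᵀ = matB W ∧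
    matA W * matA W - matB W * mconj (matB W) = 1 ∧
    matA W * matB W = matB W * mconj (matA W) ∧
    mconj (matA W) - mconj (matB W) * (matA W)⁻¹ * matB W =
      -((1 - mconj W * W) * (1 + mconj W * W)⁻¹) := by
  obtain ⟨hsym, hpdT⟩ := hW
  have hmc : mconj W = Wᴴ := by
    ext i j
    have h2 := congrFun (congrFun hsym j) i
    simp only [Matrix.transpose_apply] at h2
    simp only [mconj, Matrix.map_apply, Matrix.conjTranspose_apply, starRingEnd_apply, h2]
  rw [hmc] at hpdT ⊢
  -- symmetry of `Wᴴ`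
  have hVt : Wᴴᵀ = Wᴴ := by
    ext i j
    have h2 := congrFun (congrFun hsym i) j
    simp only [Matrix.transpose_apply] at h2
    simp only [Matrix.transpose_apply, Matrix.conjTranspose_apply, h2]
  -- positive definiteness of the six basic matrices
  have hTt : (1 - Wᴴ * W)ᵀ = 1 - W * Wᴴ := by
    rw [Matrix.transpose_sub, Matrix.transpose_one, Matrix.transpose_mul, hsym, hVt]
  have hpdS : (1 - W * Wᴴ).PosDef := hTt ▸ hpdT.transpose
  have hSt : (1 - W * Wᴴ)ᵀ = 1 - Wᴴ * W := by
    rw [Matrix.transpose_sub, Matrix.transpose_one, Matrix.transpose_mul, hsym, hVt]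
  have hpdP : (1 + W * Wᴴ).PosDef :=
    Matrix.PosDef.one.add_posSemidef (Matrix.posSemidef_self_mul_conjTranspose W)
  have hpdPt : (1 + Wᴴ * W).PosDef :=
    Matrix.PosDef.one.add_posSemidef (Matrix.posSemidef_conjTranspose_mul_self W)
  have hPt' : (1 + W * Wᴴ)ᵀ = 1 + Wᴴ * W := by
    rw [Matrix.transpose_add, Matrix.transpose_one, Matrix.transpose_mul, hsym, hVt]
  -- units
  have hU : IsUnit (1 - W * Wᴴ) := hpdS.isUnit
  have hUt : IsUnit (1 - Wᴴ * W) := hpdT.isUnit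
  have hUP : IsUnit (1 + W * Wᴴ) := hpdP.isUnit
  have hUPt : IsUnit (1 + Wᴴ * W) := hpdPt.isUnit
  have hUd : IsUnit (1 - W * Wᴴ).det := (Matrix.isUnit_iff_isUnit_det _).1 hU
  have hUtd : IsUnit (1 - Wᴴ * W).det := (Matrix.isUnit_iff_isUnit_det _).1 hUt
  have hUPd : IsUnit (1 + W * Wᴴ).det := (Matrix.isUnit_iff_isUnit_det _).1 hUP
  have hUPtd : IsUnit (1 + Wᴴ * W).det := (Matrix.isUnit_iff_isUnit_det _).1 hUPt
  -- commutation relations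
  have c1 : W * (1 - Wᴴ * W) = (1 - W * Wᴴ) * W := by noncomm_ring
  have c1inv : W * (1 - Wᴴ * W)⁻¹ = (1 - W * Wᴴ)⁻¹ * W := swap_inv hUt hU c1
  have c2 : W * (1 + Wᴴ * W) = (1 + W * Wᴴ) * W := by noncomm_ring
  have c3 : Wᴴ * (1 + W * Wᴴ) = (1 + Wᴴ * W) * Wᴴ := by noncomm_ring
  have c3inv : Wᴴ * (1 + W * Wᴴ)⁻¹ = (1 + Wᴴ * W)⁻¹ * Wᴴ := swap_inv hUP hUPt c3
  have cP : (1 + W * Wᴴ) * (1 - W * Wᴴ)⁻¹ = (1 - W * Wᴴ)⁻¹ * (1 + W * Wᴴ) :=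
    swap_inv hU hU (by noncomm_ring)
  have cPt : (1 + Wᴴ * W) * (1 - Wᴴ * W)⁻¹ = (1 - Wᴴ * W)⁻¹ * (1 + Wᴴ * W) :=
    swap_inv hUt hUt (by noncomm_ring)
  have cNt : (1 - Wᴴ * W) * (1 + Wᴴ * W)⁻¹ = (1 + Wᴴ * W)⁻¹ * (1 - Wᴴ * W) :=
    swap_inv hUPt hUPt (by noncomm_ring)
  -- pull-through variants
  have c1inv' : ∀ X, W * ((1 - Wᴴ * W)⁻¹ * X) = (1 - W * Wᴴ)⁻¹ * (W * X) := fun X => by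
    rw [← mul_assoc, c1inv, mul_assoc]
  have c3inv' : ∀ X, Wᴴ * ((1 + W * Wᴴ)⁻¹ * X) = (1 + Wᴴ * W)⁻¹ * (Wᴴ * X) := fun X => by
    rw [← mul_assoc, c3inv, mul_assoc]
  have cP' : ∀ X, (1 + W * Wᴴ) * ((1 - W * Wᴴ)⁻¹ * X)
      = (1 - W * Wᴴ)⁻¹ * ((1 + W * Wᴴ) * X) := fun X => by
    rw [← mul_assoc, cP, mul_assoc]
  have c2' : ∀ X, W * ((1 + Wᴴ * W) * X) = (1 + W * Wᴴ) * (W * X) := fun X => by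
    rw [← mul_assoc, c2, mul_assoc]
  -- cancellation lemmas
  have cancS : ∀ X, (1 - W * Wᴴ) * ((1 - W * Wᴴ)⁻¹ * X) = X := fun X => by
    rw [← mul_assoc, Matrix.mul_nonsing_inv _ hUd, one_mul]
  have cancS' : ∀ X, (1 - W * Wᴴ)⁻¹ * ((1 - W * Wᴴ) * X) = X := fun X => by
    rw [← mul_assoc, Matrix.nonsing_inv_mul _ hUd, one_mul]
  have cancPt' : ∀ X, (1 + Wᴴ * W)⁻¹ * ((1 + Wᴴ * W) * X) = X := fun X => by
    rw [← mul_assoc, Matrix.nonsing_inv_mul _ hUPtd, one_mul]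
  have cancNt' : ∀ X, (1 - Wᴴ * W)⁻¹ * ((1 - Wᴴ * W) * X) = X := fun X => by
    rw [← mul_assoc, Matrix.nonsing_inv_mul _ hUtd, one_mul]
  -- hermiticity/inverse facts
  have hinvH : ((1 - W * Wᴴ)⁻¹)ᴴ = (1 - W * Wᴴ)⁻¹ := by
    rw [Matrix.conjTranspose_nonsing_inv, hpdS.isHermitian.eq]
  have hinvT : ((1 - W * Wᴴ)⁻¹)ᵀ = (1 - Wᴴ * W)⁻¹ := by
    rw [Matrix.transpose_nonsing_inv, hSt]
  -- statement 3 : matA is Hermitian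
  have hA3 : (matA W).IsHermitian := by
    show (matA W)ᴴ = matA W
    rw [matA, hmc, Matrix.conjTranspose_neg, Matrix.conjTranspose_mul,
      hpdP.isHermitian.eq, hinvH, cP]
  -- mconj of matA and matB
  have hAconj : mconj (matA W) = -((1 + Wᴴ * W) * (1 - Wᴴ * W)⁻¹) := by
    rw [mconj_eq_ct_t, hA3.eq, matA, hmc, Matrix.transpose_neg, Matrix.transpose_mul,
      hinvT, hPt']
  have hBconj : mconj (matB W) = (2 : ℂ) • ((1 - Wᴴ * W)⁻¹ * Wᴴ) := by
    rw [mconj_eq_ct_t, matB, hmc, Matrix.conjTranspose_smul, Matrix.conjTranspose_mul,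
      hinvH, Matrix.transpose_smul, Matrix.transpose_mul, hVt, hinvT]
    norm_num
  -- statement 5 : matB is symmetric
  have hB5 : (matB W)ᵀ = matB W := by
    rw [matB, hmc, Matrix.transpose_smul, Matrix.transpose_mul, hsym, hinvT, c1inv]
  -- statement 4 : -matA is positive definite
  have hK : ((1 - W * Wᴴ)⁻¹ - 1).PosSemidef := by
    have h0 : (W * (1 - Wᴴ * W) * Wᴴ).PosSemidef :=
      hpdT.posSemidef.mul_mul_conjTranspose_same W
    have h1 : (((1 - W * Wᴴ)⁻¹)ᴴ * (W * (1 - Wᴴ * W) * Wᴴ) * (1 - W * Wᴴ)⁻¹).PosSemidef :=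
      h0.conjTranspose_mul_mul_same _
    have e : ((1 - W * Wᴴ)⁻¹)ᴴ * (W * (1 - Wᴴ * W) * Wᴴ) * (1 - W * Wᴴ)⁻¹
        = (1 - W * Wᴴ)⁻¹ - 1 := by
      rw [hinvH, c1, mul_assoc (1 - W * Wᴴ) W Wᴴ]
      rw [cancS']
      have h2 : (W * Wᴴ) * (1 - W * Wᴴ)⁻¹
          = (1 - (1 - W * Wᴴ)) * (1 - W * Wᴴ)⁻¹ := by rw [sub_sub_cancel]
      rw [h2, sub_mul, one_mul, Matrix.mul_nonsing_inv _ hUd]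
    rwa [e] at h1
  have hA4eq : -(matA W) = 1 + (((1 - W * Wᴴ)⁻¹ - 1) + ((1 - W * Wᴴ)⁻¹ - 1)) := by
    rw [matA, hmc, neg_neg]
    have hNS : (1 - W * Wᴴ)⁻¹ * (W * Wᴴ) = (1 - W * Wᴴ)⁻¹ - 1 := by
      have h2 : (1 - W * Wᴴ)⁻¹ * (W * Wᴴ)
          = (1 - W * Wᴴ)⁻¹ * (1 - (1 - W * Wᴴ)) := by rw [sub_sub_cancel]
      rw [h2, mul_sub, mul_one, Matrix.nonsing_inv_mul _ hUd]
    rw [mul_add, mul_one, hNS]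
    abel
  have hA4 : (-(matA W)).PosDef := by
    rw [hA4eq]
    exact Matrix.PosDef.one.add_posSemidef (hK.add hK)
  -- expansion keys
  have keyT : (1 + Wᴴ * W) * (1 + Wᴴ * W) - (4 : ℂ) • (Wᴴ * W)
      = (1 - Wᴴ * W) * (1 - Wᴴ * W) := by
    simp only [mul_add, add_mul, mul_sub, sub_mul, mul_one, one_mul]
    module
  have key : (1 + W * Wᴴ) * (1 + W * Wᴴ) - (4 : ℂ) • (W * Wᴴ)
      = (1 - W * Wᴴ) * (1 - W * Wᴴ) := by
    simp only [mul_add, add_mul, mul_sub, sub_mul, mul_one, one_mul]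
    module
  -- statement 6 : A² - B conj(B) = 1
  have hA6 : matA W * matA W - matB W * mconj (matB W) = 1 := by
    rw [hBconj, matA, matB, hmc]
    simp only [neg_mul, mul_neg, neg_neg, smul_mul_assoc, mul_smul_comm, smul_smul,
      Matrix.mul_assoc]
    norm_num
    rw [cP', c1inv']
    rw [← mul_smul_comm, ← mul_smul_comm, ← mul_sub, ← mul_sub, key, cancS',
      Matrix.nonsing_inv_mul _ hUd]
  -- statement 7 : A B = B conj(A)
  have hA7 : matA W * matB W = matB W * mconj (matA W) := by
    rw [hAconj, matA, matB, hmc]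
    simp only [neg_mul, mul_neg, smul_mul_assoc, mul_smul_comm, smul_smul,
      Matrix.mul_assoc, neg_inj]
    rw [cP', c2', c1inv, smul_neg, neg_inj, cP']
  -- inverse of matA
  have cancP' : ∀ X, (1 + W * Wᴴ) * ((1 + W * Wᴴ)⁻¹ * X) = X := fun X => by
    rw [← mul_assoc, Matrix.mul_nonsing_inv _ hUPd, one_mul]
  have hAinv : (matA W)⁻¹ = -((1 + W * Wᴴ)⁻¹ * (1 - W * Wᴴ)) := by
    apply Matrix.inv_eq_right_inv
    rw [matA, hmc, neg_mul_neg]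
    simp only [Matrix.mul_assoc]
    rw [cancP', Matrix.nonsing_inv_mul _ hUd]
  have cNt' : ∀ X, (1 + Wᴴ * W)⁻¹ * ((1 - Wᴴ * W) * X)
      = (1 - Wᴴ * W) * ((1 + Wᴴ * W)⁻¹ * X) := fun X => by
    rw [← mul_assoc, ← cNt, mul_assoc]
  -- statement 8
  have hA8 : mconj (matA W) - mconj (matB W) * (matA W)⁻¹ * matB W =
      -((1 - Wᴴ * W) * (1 + Wᴴ * W)⁻¹) := by
    rw [hAconj, hBconj, hAinv, matB, hmc]
    simp only [smul_mul_assoc, mul_smul_comm, mul_neg, neg_mul, smul_neg, smul_smul,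
      sub_neg_eq_add, Matrix.mul_assoc]
    norm_num
    rw [cancS, c3inv']
    have e3 : (1 + Wᴴ * W) * (1 - Wᴴ * W)⁻¹
        = (1 - Wᴴ * W)⁻¹ * ((1 + Wᴴ * W)⁻¹ * ((1 + Wᴴ * W) * (1 + Wᴴ * W))) := by
      rw [cancPt', cPt]
    have e4 : (1 - Wᴴ * W) * (1 + Wᴴ * W)⁻¹
        = (1 - Wᴴ * W)⁻¹ * ((1 + Wᴴ * W)⁻¹ * ((1 - Wᴴ * W) * (1 - Wᴴ * W))) := by
      rw [cNt', cancNt', cNt]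
    rw [e3, e4]
    rw [← mul_smul_comm, ← mul_smul_comm, neg_add_eq_sub, ← mul_sub, ← mul_sub,
      ← mul_neg, ← mul_neg]
    rw [show (4 : ℂ) • (Wᴴ * W) - (1 + Wᴴ * W) * (1 + Wᴴ * W)
        = -((1 - Wᴴ * W) * (1 - Wᴴ * W)) from by rw [← keyT, neg_sub]]
  exact ⟨hpdS, hU, hA3, hA4, hB5, hA6, hA7, hA8⟩
end

section
/- For W ∈ D^{III}_n, set A = −(Iₙ − W·conj(W))⁻¹(Iₙ + W·conj(W)), B = 2(Iₙ − W·conj(W))⁻¹·W, and define the real 2n×2n matrix J_F(W) = ((−Im A + Im B, Re A + Re B), (−Re A + Re B, −Im A − Im B)). Then the map W ↦ J_F(W) is a bijection from D^{III}_n onto the set of all compatible complex structures on (ℝ^{2n}, Ω₀). -/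
open Matrix
open scoped ComplexOrder

set_option linter.unusedTactic false
set_option linter.unreachableTactic false
set_option linter.unnecessarySeqFocus false

namespace JFAux
variable {n : ℕ}

/-! ### Entrywise real/imaginary part lemmas -/

theorem map_re_add (M N : Matrix (Fin n) (Fin n) ℂ) :
    (M + N).map Complex.re = M.map Complex.re + N.map Complex.re := by
  ext i j; simp

theorem map_im_add (M N : Matrix (Fin n) (Fin n) ℂ) :
    (M + N).map Complex.im = M.map Complex.im + N.map Complex.im := by
  ext i j; simp

theorem map_re_neg (M : Matrix (Fin n) (Fin n) ℂ) :
    (-M).map Complex.re = -(M.map Complex.re) := by ext i j; simp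

theorem map_im_neg (M : Matrix (Fin n) (Fin n) ℂ) :
    (-M).map Complex.im = -(M.map Complex.im) := by ext i j; simp

theorem map_re_one : ((1 : Matrix (Fin n) (Fin n) ℂ)).map Complex.re = 1 := by
  ext i j; simp [Matrix.one_apply, apply_ite Complex.re]

theorem map_im_one : ((1 : Matrix (Fin n) (Fin n) ℂ)).map Complex.im = 0 := by
  ext i j; simp [Matrix.one_apply, apply_ite Complex.im]

theorem map_re_mul (M N : Matrix (Fin n) (Fin n) ℂ) :
    (M * N).map Complex.re
      = M.map Complex.re * N.map Complex.re - M.map Complex.im * N.map Complex.im := by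
  ext i j
  simp [Matrix.mul_apply, Complex.mul_re, Finset.sum_sub_distrib]

theorem map_im_mul (M N : Matrix (Fin n) (Fin n) ℂ) :
    (M * N).map Complex.im
      = M.map Complex.re * N.map Complex.im + M.map Complex.im * N.map Complex.re := by
  ext i j
  simp [Matrix.mul_apply, Complex.mul_im, Finset.sum_add_distrib]

theorem map_re_transpose (M : Matrix (Fin n) (Fin n) ℂ) :
    Mᵀ.map Complex.re = (M.map Complex.re)ᵀ := by ext i j; simp

theorem map_im_transpose (M : Matrix (Fin n) (Fin n) ℂ) :
    Mᵀ.map Complex.im = (M.map Complex.im)ᵀ := by ext i j; simp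

theorem map_re_mconj (M : Matrix (Fin n) (Fin n) ℂ) :
    (mconj M).map Complex.re = M.map Complex.re := by ext i j; simp [mconj]

theorem map_im_mconj (M : Matrix (Fin n) (Fin n) ℂ) :
    (mconj M).map Complex.im = -(M.map Complex.im) := by ext i j; simp [mconj]

theorem map_re_smul_I (M : Matrix (Fin n) (Fin n) ℂ) :
    (Complex.I • M).map Complex.re = -(M.map Complex.im) := by
  ext i j; simp [Complex.mul_re]

theorem map_im_smul_I (M : Matrix (Fin n) (Fin n) ℂ) :
    (Complex.I • M).map Complex.im = M.map Complex.re := by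
  ext i j; simp [Complex.mul_im]

/-! ### `mconj` lemmas -/

theorem mconj_mconj (M : Matrix (Fin n) (Fin n) ℂ) : mconj (mconj M) = M := by
  ext i j; simp [mconj]

theorem mconj_mul (M N : Matrix (Fin n) (Fin n) ℂ) :
    mconj (M * N) = mconj M * mconj N := by
  simp [mconj, Matrix.map_mul]

theorem mconj_one : mconj (1 : Matrix (Fin n) (Fin n) ℂ) = 1 := by
  simp [mconj, Matrix.map_one]

theorem mconj_add (M N : Matrix (Fin n) (Fin n) ℂ) : mconj (M + N) = mconj M + mconj N := by
  ext i j; simp [mconj]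

theorem mconj_sub (M N : Matrix (Fin n) (Fin n) ℂ) : mconj (M - N) = mconj M - mconj N := by
  ext i j; simp [mconj]

theorem mconj_neg (M : Matrix (Fin n) (Fin n) ℂ) : mconj (-M) = -(mconj M) := by
  ext i j; simp [mconj]

theorem mconj_smul (c : ℂ) (M : Matrix (Fin n) (Fin n) ℂ) :
    mconj (c • M) = (starRingEnd ℂ c) • mconj M := by
  ext i j; simp [mconj]

theorem mconj_transpose (M : Matrix (Fin n) (Fin n) ℂ) : (mconj M)ᵀ = mconj Mᵀ := by
  ext i j; simp [mconj]

theorem mconj_inv {M : Matrix (Fin n) (Fin n) ℂ} (h : M * M⁻¹ = 1) :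
    mconj M⁻¹ = (mconj M)⁻¹ := by
  symm
  apply Matrix.inv_eq_right_inv
  rw [← mconj_mul, h, mconj_one]

/-! ### The realification `Rf` -/

/-- Realification of the ℝ-linear map `z ↦ M z + N z̄` on `ℂⁿ ≅ ℝⁿ ⊕ ℝⁿ`. -/
noncomputable def Rf (M N : Matrix (Fin n) (Fin n) ℂ) :
    Matrix (Fin n ⊕ Fin n) (Fin n ⊕ Fin n) ℝ :=
  Matrix.fromBlocks
    (M.map Complex.re + N.map Complex.re)
    (N.map Complex.im - M.map Complex.im)
    (M.map Complex.im + N.map Complex.im)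
    (M.map Complex.re - N.map Complex.re)

theorem Rf_mul (M N M' N' : Matrix (Fin n) (Fin n) ℂ) :
    Rf M N * Rf M' N' = Rf (M * M' + N * mconj N') (M * N' + N * mconj M') := by
  unfold Rf
  rw [Matrix.fromBlocks_multiply]
  congr 1 <;>
  · simp only [map_re_add, map_im_add, map_re_mul, map_im_mul, map_re_mconj, map_im_mconj]
    noncomm_ring

theorem Rf_one : Rf (1 : Matrix (Fin n) (Fin n) ℂ) 0 = 1 := by
  unfold Rf
  simp [map_re_one, map_im_one, ← Matrix.fromBlocks_one]

theorem Rf_neg_one : Rf (-1 : Matrix (Fin n) (Fin n) ℂ) 0 = -1 := by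
  unfold Rf
  ext (i|i) (j|j) <;>
    simp [Matrix.fromBlocks, Matrix.one_apply, apply_ite Complex.re, apply_ite Complex.im,
      apply_ite Neg.neg]

theorem Rf_add (M N M' N' : Matrix (Fin n) (Fin n) ℂ) :
    Rf M N + Rf M' N' = Rf (M + M') (N + N') := by
  unfold Rf
  rw [Matrix.fromBlocks_add]
  simp only [map_re_add, map_im_add]
  congr 1 <;> abel

theorem Rf_transpose (M N : Matrix (Fin n) (Fin n) ℂ) :
    (Rf M N)ᵀ = Rf (mconj Mᵀ) Nᵀ := by
  unfold Rf
  rw [Matrix.fromBlocks_transpose]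
  simp only [map_re_transpose, map_im_transpose, map_re_mconj, map_im_mconj,
    Matrix.transpose_add, Matrix.transpose_sub]
  congr 1 <;> abel

theorem Rf_inj {M N M' N' : Matrix (Fin n) (Fin n) ℂ} (h : Rf M N = Rf M' N') :
    M = M' ∧ N = N' := by
  unfold Rf at h
  rw [Matrix.fromBlocks_inj] at h
  obtain ⟨h1, h2, h3, h4⟩ := h
  constructor <;> ext i j
  · have e1 := congrFun (congrFun h1 i) j
    have e4 := congrFun (congrFun h4 i) j
    have e2 := congrFun (congrFun h2 i) j
    have e3 := congrFun (congrFun h3 i) j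
    simp at e1 e2 e3 e4
    apply Complex.ext <;> linarith
  · have e1 := congrFun (congrFun h1 i) j
    have e4 := congrFun (congrFun h4 i) j
    have e2 := congrFun (congrFun h2 i) j
    have e3 := congrFun (congrFun h3 i) j
    simp at e1 e2 e3 e4
    apply Complex.ext <;> linarith

theorem JF_eq (W : Matrix (Fin n) (Fin n) ℂ) :
    JF W = Rf (-(Complex.I) • mconj (matA W)) (Complex.I • mconj (matB W)) := by
  unfold JF Rf
  simp only [neg_smul, map_re_neg, map_im_neg, map_re_smul_I, map_im_smul_I,
    map_re_mconj, map_im_mconj, neg_neg]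
  congr 1 <;> abel

theorem Omega0_eq : Omega0 n = Rf (-(Complex.I) • (1 : Matrix (Fin n) (Fin n) ℂ)) 0 := by
  unfold Omega0 Rf
  simp only [neg_smul, map_re_neg, map_im_neg, map_re_smul_I, map_im_smul_I,
    map_re_one, map_im_one]
  norm_num

/-! ### Decoding a real matrix into the `Rf` form -/

noncomputable def cplx (P Q : Matrix (Fin n) (Fin n) ℝ) : Matrix (Fin n) (Fin n) ℂ :=
  P.map (Complex.ofReal) + Complex.I • Q.map Complex.ofReal

theorem map_re_cplx (P Q : Matrix (Fin n) (Fin n) ℝ) : (cplx P Q).map Complex.re = P := by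
  ext i j; simp [cplx, Complex.mul_re]

theorem map_im_cplx (P Q : Matrix (Fin n) (Fin n) ℝ) : (cplx P Q).map Complex.im = Q := by
  ext i j; simp [cplx, Complex.mul_im]

noncomputable def decM (J : Matrix (Fin n ⊕ Fin n) (Fin n ⊕ Fin n) ℝ) :
    Matrix (Fin n) (Fin n) ℂ :=
  cplx ((1/2 : ℝ) • (J.toBlocks₁₁ + J.toBlocks₂₂)) ((1/2 : ℝ) • (J.toBlocks₂₁ - J.toBlocks₁₂))

noncomputable def decN (J : Matrix (Fin n ⊕ Fin n) (Fin n ⊕ Fin n) ℝ) :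
    Matrix (Fin n) (Fin n) ℂ :=
  cplx ((1/2 : ℝ) • (J.toBlocks₁₁ - J.toBlocks₂₂)) ((1/2 : ℝ) • (J.toBlocks₁₂ + J.toBlocks₂₁))

theorem Rf_dec (J : Matrix (Fin n ⊕ Fin n) (Fin n ⊕ Fin n) ℝ) :
    Rf (decM J) (decN J) = J := by
  conv_rhs => rw [← Matrix.fromBlocks_toBlocks J]
  unfold Rf decM decN
  simp only [map_re_cplx, map_im_cplx]
  ext (i|i) (j|j) <;>
    simp only [Matrix.fromBlocks_apply₁₁, Matrix.fromBlocks_apply₁₂, Matrix.fromBlocks_apply₂₁,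
      Matrix.fromBlocks_apply₂₂, Matrix.add_apply, Matrix.sub_apply, Matrix.smul_apply,
      smul_eq_mul] <;> ring

/-! ### The positivity bridge -/

noncomputable def cvec (p q : Fin n → ℝ) : Fin n → ℂ := fun j => ⟨p j, q j⟩

theorem bridge (H : Matrix (Fin n) (Fin n) ℂ) (p q : Fin n → ℝ) :
    Sum.elim p q ⬝ᵥ (Rf H 0 *ᵥ Sum.elim p q)
      = (star (cvec p q) ⬝ᵥ (H *ᵥ cvec p q)).re := by
  rw [show (star (cvec p q) ⬝ᵥ (H *ᵥ cvec p q))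
      = ∑ j, ∑ k, star (cvec p q j) * (H j k * cvec p q k) by
    simp [dotProduct, Matrix.mulVec, Finset.mul_sum]]
  rw [Complex.re_sum]
  unfold Rf
  rw [Matrix.fromBlocks_mulVec, sumElim_dotProduct_sumElim]
  simp only [Sum.elim_comp_inl, Sum.elim_comp_inr,
    Matrix.map_zero _ Complex.zero_re, Matrix.map_zero _ Complex.zero_im,
    add_zero, zero_sub, sub_zero, zero_add]
  simp only [dotProduct, Matrix.mulVec, Pi.add_apply, Complex.re_sum,
    Matrix.neg_apply, Matrix.map_apply]
  rw [← Finset.sum_add_distrib]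
  refine Finset.sum_congr rfl fun j _ => ?_
  simp only [dotProduct, Finset.mul_sum, Complex.re_sum, mul_add, ← Finset.sum_add_distrib]
  refine Finset.sum_congr rfl fun k _ => ?_
  simp only [cvec, Complex.mul_re, Complex.mul_im, Pi.neg_apply, Pi.star_apply, Complex.star_def,
    Complex.conj_re, Complex.conj_im]
  ring

theorem cvec_eq_zero_iff {p q : Fin n → ℝ} : cvec p q = 0 ↔ p = 0 ∧ q = 0 := by
  constructor
  · intro h
    constructor <;> ext j <;>
    · have := congrFun h j
      simp [cvec, Complex.ext_iff] at this
      simp [this]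
  · rintro ⟨rfl, rfl⟩
    ext j; simp [cvec]; rfl

theorem posdef_Rf_quadratic {H : Matrix (Fin n) (Fin n) ℂ} (hH : H.PosDef)
    {v : Fin n ⊕ Fin n → ℝ} (hv : v ≠ 0) : 0 < v ⬝ᵥ (Rf H 0 *ᵥ v) := by
  have hv' : v = Sum.elim (v ∘ Sum.inl) (v ∘ Sum.inr) := by
    ext (i | i) <;> rfl
  rw [hv', bridge]
  have hz : cvec (v ∘ Sum.inl) (v ∘ Sum.inr) ≠ 0 := by
    intro h
    rw [cvec_eq_zero_iff] at h
    apply hv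
    ext (i | i)
    · exact congrFun h.1 i
    · exact congrFun h.2 i
  have := hH.dotProduct_mulVec_pos hz
  rw [Complex.lt_def] at this
  simpa using this.1

theorem posdef_of_Rf_quadratic {H : Matrix (Fin n) (Fin n) ℂ} (hherm : H.IsHermitian)
    (h : ∀ v : Fin n ⊕ Fin n → ℝ, v ≠ 0 → 0 < v ⬝ᵥ (Rf H 0 *ᵥ v)) : H.PosDef := by
  refine Matrix.PosDef.of_dotProduct_mulVec_pos hherm fun z hz => ?_
  have hc : cvec (fun j => (z j).re) (fun j => (z j).im) = z := by
    ext j; rfl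
  have hvne : Sum.elim (fun j => (z j).re) (fun j => (z j).im) ≠ 0 := by
    intro hv
    apply hz
    ext j
    have h1 := congrFun hv (Sum.inl j)
    have h2 := congrFun hv (Sum.inr j)
    simp at h1 h2
    exact Complex.ext h1 h2
  have hpos := h _ hvne
  rw [bridge, hc] at hpos
  have him : (star z ⬝ᵥ (H *ᵥ z)).im = 0 := by
    have hst : star (star z ⬝ᵥ (H *ᵥ z)) = star z ⬝ᵥ (H *ᵥ z) := by
      calc star (star z ⬝ᵥ (H *ᵥ z)) = star (H *ᵥ z) ⬝ᵥ star (star z) := by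
              rw [Matrix.star_dotProduct, star_star, star_star]
        _ = (star z ᵥ* Hᴴ) ⬝ᵥ z := by rw [Matrix.star_mulVec, star_star]
        _ = star z ⬝ᵥ (H *ᵥ z) := by rw [hherm.eq, ← Matrix.dotProduct_mulVec]
    rw [Complex.ext_iff] at hst
    have := hst.2
    simp at this
    linarith [this]
  rw [Complex.lt_def]
  constructor
  · simpa using hpos
  · simp [him]

/-! ### Algebraic identities for `W` in the Siegel disk -/

section disk
variable {W : Matrix (Fin n) (Fin n) ℂ}

theorem D_eq_E_transpose (hWs : Wᵀ = W) :
    (1 - W * mconj W) = (1 - mconj W * W)ᵀ := by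
  rw [Matrix.transpose_sub, Matrix.transpose_one, Matrix.transpose_mul, mconj_transpose, hWs]

theorem D_transpose (hWs : Wᵀ = W) : (1 - W * mconj W)ᵀ = 1 - mconj W * W := by
  rw [D_eq_E_transpose hWs, Matrix.transpose_transpose]

theorem D_posDef (hWs : Wᵀ = W) (hE : (1 - mconj W * W).PosDef) :
    (1 - W * mconj W).PosDef :=
  (D_eq_E_transpose hWs) ▸ hE.transpose

theorem D_det (hWs : Wᵀ = W) (hE : (1 - mconj W * W).PosDef) :
    IsUnit (1 - W * mconj W).det :=
  (Matrix.isUnit_iff_isUnit_det _).1 (D_posDef hWs hE).isUnit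

theorem E_det (hE : (1 - mconj W * W).PosDef) : IsUnit (1 - mconj W * W).det :=
  (Matrix.isUnit_iff_isUnit_det _).1 hE.isUnit

theorem mconj_D : mconj (1 - W * mconj W) = 1 - mconj W * W := by
  rw [mconj_sub, mconj_one, mconj_mul, mconj_mconj]

theorem mconj_Dinv (hWs : Wᵀ = W) (hE : (1 - mconj W * W).PosDef) :
    mconj ((1 - W * mconj W)⁻¹) = (1 - mconj W * W)⁻¹ := by
  rw [mconj_inv (Matrix.mul_nonsing_inv _ (D_det hWs hE)), mconj_D]

theorem DW_comm (hWs : Wᵀ = W) (hE : (1 - mconj W * W).PosDef) :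
    (1 - W * mconj W)⁻¹ * W = W * (1 - mconj W * W)⁻¹ := by
  have h : W * (1 - mconj W * W) = (1 - W * mconj W) * W := by noncomm_ring
  have hD := Matrix.nonsing_inv_mul _ (D_det hWs hE)
  have hE' := Matrix.mul_nonsing_inv _ (E_det hE)
  calc (1 - W * mconj W)⁻¹ * W
      = (1 - W * mconj W)⁻¹ * (W * (1 - mconj W * W) * (1 - mconj W * W)⁻¹) := by
        rw [Matrix.mul_assoc, hE', Matrix.mul_one]
    _ = (1 - W * mconj W)⁻¹ * (1 - W * mconj W) * (W * (1 - mconj W * W)⁻¹) := by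
        rw [h]; noncomm_ring
    _ = W * (1 - mconj W * W)⁻¹ := by rw [hD, Matrix.one_mul]

theorem matA_eq (hWs : Wᵀ = W) (hE : (1 - mconj W * W).PosDef) :
    matA W = 1 - (2:ℂ) • (1 - W * mconj W)⁻¹ := by
  unfold matA
  have hDD : (1 - W * mconj W)⁻¹ * (1 - W * mconj W) = 1 :=
    Matrix.nonsing_inv_mul _ (D_det hWs hE)
  have h1 : (1 : Matrix (Fin n) (Fin n) ℂ) + W * mconj W
      = (1 + 1) - (1 - W * mconj W) := by abel
  rw [h1, Matrix.mul_sub, hDD, Matrix.mul_add, Matrix.mul_one, two_smul]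
  abel

theorem matB_alt (hWs : Wᵀ = W) (hE : (1 - mconj W * W).PosDef) :
    matB W = (2:ℂ) • (W * (1 - mconj W * W)⁻¹) := by
  unfold matB; rw [DW_comm hWs hE]

theorem conj_two : (starRingEnd ℂ) (2:ℂ) = 2 := by
  rw [Complex.ext_iff]; simp

theorem mconj_matA (hWs : Wᵀ = W) (hE : (1 - mconj W * W).PosDef) :
    mconj (matA W) = 1 - (2:ℂ) • (1 - mconj W * W)⁻¹ := by
  rw [matA_eq hWs hE, mconj_sub, mconj_one, mconj_smul, conj_two, mconj_Dinv hWs hE]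

theorem mconj_matB (hWs : Wᵀ = W) (hE : (1 - mconj W * W).PosDef) :
    mconj (matB W) = (2:ℂ) • ((1 - mconj W * W)⁻¹ * mconj W) := by
  unfold matB
  rw [mconj_smul, mconj_mul, mconj_Dinv hWs hE, conj_two]

theorem matA_transpose (hWs : Wᵀ = W) (hE : (1 - mconj W * W).PosDef) :
    (matA W)ᵀ = mconj (matA W) := by
  rw [mconj_matA hWs hE, matA_eq hWs hE, Matrix.transpose_sub, Matrix.transpose_one,
    Matrix.transpose_smul, Matrix.transpose_nonsing_inv, D_transpose hWs]

theorem matB_transpose (hWs : Wᵀ = W) (hE : (1 - mconj W * W).PosDef) :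
    (matB W)ᵀ = matB W := by
  conv_rhs => rw [matB_alt hWs hE]
  unfold matB
  rw [Matrix.transpose_smul, Matrix.transpose_mul, Matrix.transpose_nonsing_inv,
    D_transpose hWs, hWs]

theorem mconj_Einv (hWs : Wᵀ = W) (hE : (1 - mconj W * W).PosDef) :
    mconj ((1 - mconj W * W)⁻¹) = (1 - W * mconj W)⁻¹ := by
  rw [← mconj_Dinv hWs hE, mconj_mconj]

theorem EW_comm (hWs : Wᵀ = W) (hE : (1 - mconj W * W).PosDef) :
    (1 - mconj W * W)⁻¹ * mconj W = mconj W * (1 - W * mconj W)⁻¹ := by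
  have h := congrArg mconj (DW_comm hWs hE)
  rw [mconj_mul, mconj_mul, mconj_Dinv hWs hE, mconj_Einv hWs hE] at h
  exact h

theorem BBc (hWs : Wᵀ = W) (hE : (1 - mconj W * W).PosDef) :
    matB W * mconj (matB W)
      = (4:ℂ) • ((1 - W * mconj W)⁻¹ * (1 - W * mconj W)⁻¹)
        - (4:ℂ) • (1 - W * mconj W)⁻¹ := by
  have hDW := DW_comm hWs hE
  have hinv := Matrix.nonsing_inv_mul _ (D_det hWs hE)
  have key : ((1 - W * mconj W)⁻¹ * W) * ((1 - mconj W * W)⁻¹ * mconj W)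
      = (1 - W * mconj W)⁻¹ * (1 - W * mconj W)⁻¹ - (1 - W * mconj W)⁻¹ := by
    calc ((1 - W * mconj W)⁻¹ * W) * ((1 - mconj W * W)⁻¹ * mconj W)
        = (1 - W * mconj W)⁻¹ * (W * (1 - mconj W * W)⁻¹) * mconj W := by
          simp only [Matrix.mul_assoc]
      _ = (1 - W * mconj W)⁻¹ * ((1 - W * mconj W)⁻¹ * W) * mconj W := by rw [← hDW]
      _ = (1 - W * mconj W)⁻¹ * (1 - W * mconj W)⁻¹ * (W * mconj W) := by
          simp only [Matrix.mul_assoc]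
      _ = (1 - W * mconj W)⁻¹ * (1 - W * mconj W)⁻¹ * (1 - (1 - W * mconj W)) := by
          congr 1; abel
      _ = (1 - W * mconj W)⁻¹ * (1 - W * mconj W)⁻¹ - (1 - W * mconj W)⁻¹ := by
          rw [Matrix.mul_sub, Matrix.mul_one, Matrix.mul_assoc, hinv, Matrix.mul_one]
  rw [mconj_matB hWs hE]
  unfold matB
  rw [smul_mul_assoc, mul_smul_comm, smul_smul, key, smul_sub]
  norm_num

theorem idA (hWs : Wᵀ = W) (hE : (1 - mconj W * W).PosDef) :
    matA W * matA W - matB W * mconj (matB W) = 1 := by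
  rw [matA_eq hWs hE, BBc hWs hE]
  simp only [Matrix.mul_sub, Matrix.sub_mul, Matrix.mul_one, Matrix.one_mul,
    smul_mul_assoc, mul_smul_comm, smul_smul]
  module

theorem idAB (hWs : Wᵀ = W) (hE : (1 - mconj W * W).PosDef) :
    matA W * matB W = matB W * mconj (matA W) := by
  have hDW := DW_comm hWs hE
  have h : ((1 - W * mconj W)⁻¹ * W) * (1 - mconj W * W)⁻¹
      = (1 - W * mconj W)⁻¹ * ((1 - W * mconj W)⁻¹ * W) := by
    rw [Matrix.mul_assoc, ← hDW, ← Matrix.mul_assoc, Matrix.mul_assoc]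
  rw [mconj_matA hWs hE, matA_eq hWs hE]
  unfold matB
  simp only [Matrix.mul_sub, Matrix.sub_mul, Matrix.mul_one, Matrix.one_mul,
    smul_mul_assoc, mul_smul_comm, smul_smul, h]
  all_goals module

theorem idA' (hWs : Wᵀ = W) (hE : (1 - mconj W * W).PosDef) :
    mconj (matA W) * mconj (matA W) - mconj (matB W) * matB W = 1 := by
  have h := congrArg mconj (idA hWs hE)
  rwa [mconj_sub, mconj_mul, mconj_mul, mconj_mconj, mconj_one] at h

theorem idAB' (hWs : Wᵀ = W) (hE : (1 - mconj W * W).PosDef) :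
    mconj (matA W) * mconj (matB W) = mconj (matB W) * matA W := by
  have h := congrArg mconj (idAB hWs hE)
  rwa [mconj_mul, mconj_mul, mconj_mconj] at h

theorem tam1 (hWs : Wᵀ = W) (hE : (1 - mconj W * W).PosDef) :
    mconj W * ((1 - W * mconj W)⁻¹ * W) + (1 - mconj W * W)⁻¹ = -(mconj (matA W)) := by
  have hDW := DW_comm hWs hE
  have hinv := Matrix.nonsing_inv_mul _ (E_det hE)
  have key : mconj W * ((1 - W * mconj W)⁻¹ * W)
      = (1 - mconj W * W)⁻¹ - 1 := by
    calc mconj W * ((1 - W * mconj W)⁻¹ * W)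
        = (mconj W * (1 - W * mconj W)⁻¹) * W := by rw [Matrix.mul_assoc]
      _ = ((1 - mconj W * W)⁻¹ * mconj W) * W := by rw [← EW_comm hWs hE]
      _ = (1 - mconj W * W)⁻¹ * (mconj W * W) := by rw [Matrix.mul_assoc]
      _ = (1 - mconj W * W)⁻¹ * (1 - (1 - mconj W * W)) := by congr 1; abel
      _ = (1 - mconj W * W)⁻¹ - 1 := by
          rw [Matrix.mul_sub, Matrix.mul_one, hinv]
  rw [key, mconj_matA hWs hE]
  module

theorem tam2 (hWs : Wᵀ = W) (hE : (1 - mconj W * W).PosDef) :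
    mconj W * (1 - W * mconj W)⁻¹ + (1 - mconj W * W)⁻¹ * mconj W = mconj (matB W) := by
  rw [← EW_comm hWs hE, mconj_matB hWs hE]
  module

end disk

theorem mconj_zero : mconj (0 : Matrix (Fin n) (Fin n) ℂ) = 0 := by
  ext i j; simp [mconj]

theorem smulmul (a b : ℂ) (X Y : Matrix (Fin n) (Fin n) ℂ) :
    (a • X) * (b • Y) = (a * b) • (X * Y) := by
  rw [smul_mul_assoc, mul_smul_comm, smul_smul]

theorem conj_negI : (starRingEnd ℂ) (-Complex.I) = Complex.I := by
  simp [Complex.conj_I]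

section fwd
variable {W : Matrix (Fin n) (Fin n) ℂ}

theorem JF_compatible (hWs : Wᵀ = W) (hE : (1 - mconj W * W).PosDef) :
    IsCompatibleComplexStructure n (JF W) := by
  have e1 : (-Complex.I) * (-Complex.I) = (-1 : ℂ) := by
    rw [neg_mul_neg, Complex.I_mul_I]
  have e2 : Complex.I * (-Complex.I) = (1 : ℂ) := by
    rw [mul_neg, Complex.I_mul_I, neg_neg]
  have e3 : (-Complex.I) * Complex.I = (1 : ℂ) := by
    rw [neg_mul, Complex.I_mul_I, neg_neg]
  have e4 : Complex.I * Complex.I = (-1 : ℂ) := Complex.I_mul_I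
  have hAt : (mconj (matA W))ᵀ = matA W := by
    rw [mconj_transpose, matA_transpose hWs hE, mconj_mconj]
  have hBt : (mconj (matB W))ᵀ = mconj (matB W) := by
    rw [mconj_transpose, matB_transpose hWs hE]
  refine ⟨?_, ?_, ?_⟩
  · -- J * J = -1
    rw [JF_eq, Rf_mul]
    have hP : (-Complex.I • mconj (matA W)) * (-Complex.I • mconj (matA W))
        + (Complex.I • mconj (matB W)) * mconj (Complex.I • mconj (matB W)) = -1 := by
      rw [mconj_smul, Complex.conj_I, mconj_mconj, smulmul, smulmul, e1, e2, neg_smul,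
        one_smul, one_smul, ← idA' hWs hE]
      abel
    have hQ : (-Complex.I • mconj (matA W)) * (Complex.I • mconj (matB W))
        + (Complex.I • mconj (matB W)) * mconj (-Complex.I • mconj (matA W)) = 0 := by
      rw [mconj_smul, conj_negI, mconj_mconj, smulmul, smulmul, e3, e4, neg_smul,
        one_smul, one_smul, idAB' hWs hE]
      abel
    rw [hP, hQ, Rf_neg_one]
  · -- Jᵀ Ω J = Ω
    have e5 : (-1 : ℂ) * (-Complex.I) = Complex.I := by ring
    have e6 : (-1 : ℂ) * Complex.I = -Complex.I := by ring
    have hT : (Rf (-Complex.I • mconj (matA W)) (Complex.I • mconj (matB W)))ᵀ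
        = Rf (Complex.I • mconj (matA W)) (Complex.I • mconj (matB W)) := by
      rw [Rf_transpose, Matrix.transpose_smul, Matrix.transpose_smul, hAt, hBt,
        mconj_smul, conj_negI]
    rw [JF_eq, hT, Omega0_eq, Rf_mul]
    have h1 : (Complex.I • mconj (matA W)) * (-Complex.I • (1 : Matrix (Fin n) (Fin n) ℂ))
        + (Complex.I • mconj (matB W)) * mconj 0 = mconj (matA W) := by
      rw [mconj_zero, Matrix.mul_zero, add_zero, smulmul, e2, one_smul, Matrix.mul_one]
    have h2 : (Complex.I • mconj (matA W)) * (0 : Matrix (Fin n) (Fin n) ℂ)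
        + (Complex.I • mconj (matB W)) * mconj (-Complex.I • (1 : Matrix (Fin n) (Fin n) ℂ))
        = -(mconj (matB W)) := by
      rw [Matrix.mul_zero, zero_add, mconj_smul, conj_negI, mconj_one, smulmul, e4,
        neg_smul, one_smul, Matrix.mul_one]
    rw [h1, h2, Rf_mul]
    have h3 : mconj (matA W) * (-Complex.I • mconj (matA W))
        + (-(mconj (matB W))) * mconj (Complex.I • mconj (matB W))
        = -Complex.I • (1 : Matrix (Fin n) (Fin n) ℂ) := by
      calc mconj (matA W) * (-Complex.I • mconj (matA W))
          + (-(mconj (matB W))) * mconj (Complex.I • mconj (matB W))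
          = (-Complex.I) • (mconj (matA W) * mconj (matA W))
            + ((-1 : ℂ) * (-Complex.I)) • (mconj (matB W) * matB W) := by
            rw [mconj_smul, Complex.conj_I, mconj_mconj, mul_smul_comm,
              ← neg_one_smul ℂ (mconj (matB W)), smulmul]
        _ = (-Complex.I) • (mconj (matA W) * mconj (matA W) - mconj (matB W) * matB W) := by
            rw [e5]; module
        _ = -Complex.I • (1 : Matrix (Fin n) (Fin n) ℂ) := by rw [idA' hWs hE]
    have h4 : mconj (matA W) * (Complex.I • mconj (matB W))
        + (-(mconj (matB W))) * mconj (-Complex.I • mconj (matA W)) = 0 := by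
      calc mconj (matA W) * (Complex.I • mconj (matB W))
          + (-(mconj (matB W))) * mconj (-Complex.I • mconj (matA W))
          = Complex.I • (mconj (matA W) * mconj (matB W))
            + ((-1 : ℂ) * Complex.I) • (mconj (matB W) * matA W) := by
            rw [mconj_smul, conj_negI, mconj_mconj, mul_smul_comm,
              ← neg_one_smul ℂ (mconj (matB W)), smulmul]
        _ = 0 := by rw [idAB' hWs hE, e6]; module
    rw [h3, h4]
  · -- positivity
    intro v hv
    have hdecomp : Omega0 n * JF W
        = (Rf W 1)ᵀ * (Rf ((1 - W * mconj W)⁻¹) 0 * Rf W 1) := by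
      rw [Omega0_eq, JF_eq, Rf_mul, Rf_transpose, Rf_mul, Rf_mul]
      have g1 : (-Complex.I • (1 : Matrix (Fin n) (Fin n) ℂ)) * (-Complex.I • mconj (matA W))
          + (0 : Matrix (Fin n) (Fin n) ℂ) * mconj (Complex.I • mconj (matB W))
          = -(mconj (matA W)) := by
        rw [Matrix.zero_mul, add_zero, smulmul, e1, neg_smul, one_smul, Matrix.one_mul]
      have g2 : (-Complex.I • (1 : Matrix (Fin n) (Fin n) ℂ)) * (Complex.I • mconj (matB W))
          + (0 : Matrix (Fin n) (Fin n) ℂ) * mconj (-Complex.I • mconj (matA W))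
          = mconj (matB W) := by
        rw [Matrix.zero_mul, add_zero, smulmul, e3, one_smul, Matrix.one_mul]
      rw [g1, g2]
      have g3 : mconj Wᵀ * ((1 - W * mconj W)⁻¹ * W + 0 * mconj 1)
          + (1 : Matrix (Fin n) (Fin n) ℂ)ᵀ * mconj ((1 - W * mconj W)⁻¹ * 1 + 0 * mconj W)
          = -(mconj (matA W)) := by
        rw [hWs, Matrix.zero_mul, add_zero, Matrix.zero_mul, add_zero, Matrix.mul_one,
          Matrix.transpose_one, Matrix.one_mul, mconj_Dinv hWs hE]
        exact tam1 hWs hE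
      have g4 : mconj Wᵀ * ((1 - W * mconj W)⁻¹ * 1 + 0 * mconj W)
          + (1 : Matrix (Fin n) (Fin n) ℂ)ᵀ * mconj ((1 - W * mconj W)⁻¹ * W + 0 * mconj 1)
          = mconj (matB W) := by
        rw [hWs, Matrix.zero_mul, add_zero, Matrix.zero_mul, add_zero, Matrix.mul_one,
          Matrix.transpose_one, Matrix.one_mul, mconj_mul, mconj_Dinv hWs hE]
        exact tam2 hWs hE
      rw [g3, g4]
    have hL : Rf (-((1 - mconj W * W)⁻¹ * mconj W)) ((1 - mconj W * W)⁻¹) * Rf W 1 = 1 := by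
      rw [Rf_mul]
      have g5 : (-((1 - mconj W * W)⁻¹ * mconj W)) * W + (1 - mconj W * W)⁻¹ * mconj 1
          = 1 := by
        rw [mconj_one, Matrix.mul_one, neg_mul, Matrix.mul_assoc]
        have : (1 - mconj W * W)⁻¹ * (mconj W * W)
            = (1 - mconj W * W)⁻¹ * (1 - (1 - mconj W * W)) := by congr 1; abel
        rw [this, Matrix.mul_sub, Matrix.mul_one, Matrix.nonsing_inv_mul _ (E_det hE)]
        abel
      have g6 : (-((1 - mconj W * W)⁻¹ * mconj W)) * 1 + (1 - mconj W * W)⁻¹ * mconj W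
          = 0 := by rw [Matrix.mul_one]; abel
      rw [g5, g6, Rf_one]
    have hu : Rf W 1 *ᵥ v ≠ 0 := by
      intro h0
      apply hv
      have h1 : (Rf (-((1 - mconj W * W)⁻¹ * mconj W)) ((1 - mconj W * W)⁻¹) * Rf W 1) *ᵥ v
          = 0 := by
        rw [← Matrix.mulVec_mulVec, h0, Matrix.mulVec_zero]
      rwa [hL, Matrix.one_mulVec] at h1
    rw [Matrix.mulVec_mulVec, hdecomp, ← Matrix.mulVec_mulVec,
      Matrix.dotProduct_mulVec, Matrix.vecMul_transpose, ← Matrix.mulVec_mulVec]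
    exact posdef_Rf_quadratic (D_posDef hWs hE).inv hu

end fwd
/-! ### Surjectivity -/

theorem Omega0_mul_Rf (M N : Matrix (Fin n) (Fin n) ℂ) :
    Omega0 n * Rf M N = Rf (-Complex.I • M) (-Complex.I • N) := by
  rw [Omega0_eq, Rf_mul, Matrix.zero_mul, Matrix.zero_mul, add_zero, add_zero,
    smul_mul_assoc, smul_mul_assoc, Matrix.one_mul, Matrix.one_mul]

theorem conjTranspose_mconj (X : Matrix (Fin n) (Fin n) ℂ) : (mconj X)ᴴ = Xᵀ := by
  ext i j; simp [mconj, Matrix.conjTranspose_apply]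

theorem smul_cancel_I {X Y : Matrix (Fin n) (Fin n) ℂ}
    (h : Complex.I • X = Complex.I • Y) : X = Y := by
  have h2 := congrArg (fun Z => (-Complex.I) • Z) h
  simpa [smul_smul, neg_mul, Complex.I_mul_I, neg_neg, one_smul] using h2

theorem exists_W {J : Matrix (Fin n ⊕ Fin n) (Fin n ⊕ Fin n) ℝ}
    (hJ : IsCompatibleComplexStructure n J) :
    ∃ W ∈ SiegelDisk n, JF W = J := by
  obtain ⟨hsq, hsymp, hpos⟩ := hJ
  have e1 : (-Complex.I) * (-Complex.I) = (-1 : ℂ) := by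
    rw [neg_mul_neg, Complex.I_mul_I]
  have e2 : Complex.I * (-Complex.I) = (1 : ℂ) := by
    rw [mul_neg, Complex.I_mul_I, neg_neg]
  have e3 : (-Complex.I) * Complex.I = (1 : ℂ) := by
    rw [neg_mul, Complex.I_mul_I, neg_neg]
  have e4 : Complex.I * Complex.I = (-1 : ℂ) := Complex.I_mul_I
  set M := decM J with hM
  set N := decN J with hN
  have hJR : J = Rf M N := (Rf_dec J).symm
  -- Ω J is symmetric
  have hOt : (Omega0 n)ᵀ = -(Omega0 n) := by
    unfold Omega0
    rw [Matrix.fromBlocks_transpose]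
    ext (i|i) (j|j) <;> simp
  have hsymΩ : (Omega0 n * J)ᵀ = Omega0 n * J := by
    have h1 : Jᵀ * Omega0 n * J * J = Omega0 n * J := by rw [hsymp]
    rw [Matrix.mul_assoc (Jᵀ * Omega0 n) J J, hsq, mul_neg_one] at h1
    rw [Matrix.transpose_mul, hOt, mul_neg]
    exact h1
  -- decode the symmetry
  have hsym2 : Rf (Complex.I • mconj Mᵀ) (-Complex.I • Nᵀ)
      = Rf (-Complex.I • M) (-Complex.I • N) := by
    rw [← Omega0_mul_Rf, ← hJR, ← hsymΩ, hJR, Omega0_mul_Rf, Rf_transpose,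
      Matrix.transpose_smul, Matrix.transpose_smul, mconj_smul, conj_negI]
  have hMt : mconj Mᵀ = -M := by
    have h := (Rf_inj hsym2).1
    have h2 := congrArg (fun Z => (-Complex.I) • Z) h
    simpa [smul_smul, e3, e1, one_smul, neg_smul] using h2
  have hNt : Nᵀ = N := by
    have h := (Rf_inj hsym2).2
    have h2 := congrArg (fun Z => Complex.I • Z) h
    simpa [smul_smul, e2, one_smul] using h2
  have hMt' : Mᵀ = -(mconj M) := by
    have h := congrArg mconj hMt
    rwa [mconj_mconj, mconj_neg] at h
  -- J² = -1 decoded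
  have hcc : Rf (M * M + N * mconj N) (M * N + N * mconj M) = Rf (-1) 0 := by
    rw [← Rf_mul, ← hJR, hsq, Rf_neg_one]
  have hc1 : M * M + N * mconj N = -1 := (Rf_inj hcc).1
  have hc2 : M * N + N * mconj M = 0 := (Rf_inj hcc).2
  -- the candidate A and B
  set A : Matrix (Fin n) (Fin n) ℂ := (-Complex.I) • mconj M with hA
  set B : Matrix (Fin n) (Fin n) ℂ := Complex.I • mconj N with hB
  have hmA : mconj A = Complex.I • M := by
    rw [hA, mconj_smul, conj_negI, mconj_mconj]
  have hmB : mconj B = (-Complex.I) • N := by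
    rw [hB, mconj_smul, Complex.conj_I, mconj_mconj]
  have hAt : Aᵀ = mconj A := by
    rw [hA, Matrix.transpose_smul, mconj_transpose, hMt, hmA, smul_neg, ← neg_smul, neg_neg]
  have hBt : Bᵀ = B := by
    rw [hB, Matrix.transpose_smul, mconj_transpose, hNt]
  -- main identities for A, B
  have hc1' : mconj M * mconj M + mconj N * N = -1 := by
    have h := congrArg mconj hc1
    rwa [mconj_add, mconj_mul, mconj_mul, mconj_mconj, mconj_neg, mconj_one] at h
  have hc2' : mconj M * mconj N + mconj N * M = 0 := by
    have h := congrArg mconj hc2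
    rwa [mconj_add, mconj_mul, mconj_mul, mconj_mconj, mconj_zero] at h
  have hiA : A * A - B * mconj B = 1 := by
    rw [hA, hB, hmB, smulmul, smulmul, e1, e2, one_smul, neg_smul, one_smul]
    rw [show -(mconj M * mconj M) - mconj N * N
        = -(mconj M * mconj M + mconj N * N) by abel, hc1', neg_neg]
  have hiAB : A * B = B * mconj A := by
    rw [hA, hB, hmA, smulmul, smulmul, e3, e4, one_smul, neg_smul, one_smul]
    have h : mconj M * mconj N = -(mconj N * M) := by
      rw [show -(mconj N * M) = 0 - mconj N * M by abel, ← hc2']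
      abel
    rw [h]
  -- positivity: -(mconj A) is positive definite
  have hG : Omega0 n * J = Rf (-Complex.I • M) (-Complex.I • N) := by
    conv_lhs => rw [hJR]
    rw [Omega0_mul_Rf]
  have hposG : ∀ v : Fin n ⊕ Fin n → ℝ, v ≠ 0
      → 0 < v ⬝ᵥ (Rf (-Complex.I • M) (-Complex.I • N) *ᵥ v) := by
    intro v hv
    have h := hpos v hv
    rwa [Matrix.mulVec_mulVec, hG] at h
  have hSS : Rf (Complex.I • (1 : Matrix (Fin n) (Fin n) ℂ)) 0 * Rf (Complex.I • 1) 0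
      = -1 := by
    rw [Rf_mul]
    simp only [mconj_zero, Matrix.mul_zero, Matrix.zero_mul, add_zero, zero_add]
    rw [smulmul, e4, Matrix.mul_one, neg_smul, one_smul, Rf_neg_one]
  have hSt : (Rf (Complex.I • (1 : Matrix (Fin n) (Fin n) ℂ)) 0)ᵀ
      = Rf (-Complex.I • 1) 0 := by
    rw [Rf_transpose, Matrix.transpose_smul, Matrix.transpose_one, Matrix.transpose_zero,
      mconj_smul, Complex.conj_I, mconj_one]
  have hsum : Rf (-Complex.I • M) (-Complex.I • N)
      + (Rf (Complex.I • (1 : Matrix (Fin n) (Fin n) ℂ)) 0)ᵀ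
        * (Rf (-Complex.I • M) (-Complex.I • N) * Rf (Complex.I • 1) 0)
      = Rf ((-Complex.I • M) + (-Complex.I • M)) 0 := by
    have hin : Rf (-Complex.I • M) (-Complex.I • N) * Rf (Complex.I • 1) 0
        = Rf M (-N) := by
      rw [Rf_mul]
      simp only [mconj_zero, Matrix.mul_zero, Matrix.zero_mul, add_zero, zero_add]
      rw [mconj_smul, Complex.conj_I, mconj_one, smulmul, smulmul, e3, e1, one_smul,
        Matrix.mul_one, Matrix.mul_one, neg_smul, one_smul]
    have hout : Rf (-Complex.I • (1 : Matrix (Fin n) (Fin n) ℂ)) 0 * Rf M (-N)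
        = Rf (-Complex.I • M) (Complex.I • N) := by
      rw [Rf_mul]
      simp only [mconj_zero, Matrix.mul_zero, Matrix.zero_mul, add_zero, zero_add]
      rw [smul_mul_assoc, smul_mul_assoc, Matrix.one_mul, Matrix.one_mul, smul_neg,
        ← neg_smul, neg_neg]
    rw [hin, hSt, hout, Rf_add]
    have hz : (-Complex.I • N + Complex.I • N : Matrix (Fin n) (Fin n) ℂ) = 0 := by
      module
    rw [hz]
  have hq' : ∀ v : Fin n ⊕ Fin n → ℝ, v ≠ 0
      → 0 < v ⬝ᵥ (Rf (-(mconj A)) 0 *ᵥ v) := by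
    intro v hv
    have hnegmA : -(mconj A) = -Complex.I • M := by rw [hmA, ← neg_smul]
    have hSv : Rf (Complex.I • (1 : Matrix (Fin n) (Fin n) ℂ)) 0 *ᵥ v ≠ 0 := by
      intro h0
      apply hv
      have h2 : (Rf (Complex.I • (1 : Matrix (Fin n) (Fin n) ℂ)) 0
          * Rf (Complex.I • 1) 0) *ᵥ v = 0 := by
        rw [← Matrix.mulVec_mulVec, h0, Matrix.mulVec_zero]
      rw [hSS] at h2
      have h3 : -v = 0 := by
        rw [show (-1 : Matrix (Fin n ⊕ Fin n) (Fin n ⊕ Fin n) ℝ) = -(1 : Matrix _ _ ℝ)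
          from rfl, Matrix.neg_mulVec, Matrix.one_mulVec] at h2
        exact h2
      exact neg_eq_zero.1 h3
    have hdd := hposG v hv
    have hdd2 := hposG _ hSv
    have hexp : v ⬝ᵥ (Rf ((-Complex.I • M) + (-Complex.I • M)) 0 *ᵥ v)
        = v ⬝ᵥ (Rf (-Complex.I • M) (-Complex.I • N) *ᵥ v)
          + (Rf (Complex.I • (1 : Matrix (Fin n) (Fin n) ℂ)) 0 *ᵥ v)
            ⬝ᵥ (Rf (-Complex.I • M) (-Complex.I • N)
              *ᵥ (Rf (Complex.I • (1 : Matrix (Fin n) (Fin n) ℂ)) 0 *ᵥ v)) := by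
      rw [← hsum, Matrix.add_mulVec, dotProduct_add]
      congr 1
      rw [← Matrix.mulVec_mulVec, Matrix.dotProduct_mulVec, Matrix.vecMul_transpose,
        ← Matrix.mulVec_mulVec]
    have hdbl : Rf ((-Complex.I • M) + (-Complex.I • M)) 0
        = Rf (-Complex.I • M) 0 + Rf (-Complex.I • M) 0 := by
      rw [Rf_add, add_zero]
    have h2t : v ⬝ᵥ ((Rf (-Complex.I • M) 0 + Rf (-Complex.I • M) 0) *ᵥ v)
        = v ⬝ᵥ (Rf (-Complex.I • M) 0 *ᵥ v) + v ⬝ᵥ (Rf (-Complex.I • M) 0 *ᵥ v) := by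
      rw [Matrix.add_mulVec, dotProduct_add]
    rw [hdbl, h2t] at hexp
    rw [hnegmA]
    linarith
  have hherm : (-(mconj A)).IsHermitian := by
    have h : (mconj A).IsHermitian := by
      show (mconj A)ᴴ = mconj A
      rw [conjTranspose_mconj, hAt]
    exact h.neg
  have hposmA : (-(mconj A)).PosDef := posdef_of_Rf_quadratic hherm hq'
  have hposnegA : (-A).PosDef := by
    have h : (-(mconj A))ᵀ = -A := by
      rw [Matrix.transpose_neg, mconj_transpose, hAt, mconj_mconj]
    exact h ▸ hposmA.transpose
  have h1A : (1 - A).PosDef := by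
    have h := Matrix.PosDef.add (Matrix.PosDef.one (R := ℂ) (n := Fin n)) hposnegA
    rwa [← sub_eq_add_neg] at h
  have h1Adet : IsUnit (1 - A).det :=
    (Matrix.isUnit_iff_isUnit_det _).1 h1A.isUnit
  have h1At : (1 - A)ᵀ = 1 - mconj A := by
    rw [Matrix.transpose_sub, Matrix.transpose_one, hAt]
  have h1Ab : (1 - mconj A).PosDef := h1At ▸ h1A.transpose
  have h1Abdet : IsUnit (1 - mconj A).det :=
    (Matrix.isUnit_iff_isUnit_det _).1 h1Ab.isUnit
  have hABc : (1 - A) * B = B * (1 - mconj A) := by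
    rw [Matrix.sub_mul, Matrix.mul_sub, Matrix.one_mul, Matrix.mul_one, hiAB]
  set W := (1 - A)⁻¹ * B with hW
  have hWalt : W = B * (1 - mconj A)⁻¹ := by
    rw [hW]
    calc (1 - A)⁻¹ * B
        = (1 - A)⁻¹ * (B * (1 - mconj A) * (1 - mconj A)⁻¹) := by
          rw [Matrix.mul_assoc, Matrix.mul_nonsing_inv _ h1Abdet, Matrix.mul_one]
      _ = (1 - A)⁻¹ * (1 - A) * (B * (1 - mconj A)⁻¹) := by
          rw [← hABc]; noncomm_ring
      _ = B * (1 - mconj A)⁻¹ := by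
          rw [Matrix.nonsing_inv_mul _ h1Adet, Matrix.one_mul]
  have hWt : Wᵀ = W := by
    rw [hW, Matrix.transpose_mul, Matrix.transpose_nonsing_inv, h1At, hBt, ← hWalt]
  have hmconj1A : mconj ((1 - A)⁻¹) = (1 - mconj A)⁻¹ := by
    rw [mconj_inv (Matrix.mul_nonsing_inv _ h1Adet), mconj_sub, mconj_one]
  have hmconj1Ab : mconj ((1 - mconj A)⁻¹) = (1 - A)⁻¹ := by
    rw [mconj_inv (Matrix.mul_nonsing_inv _ h1Abdet), mconj_sub, mconj_one, mconj_mconj]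
  have hmWb : mconj W = mconj B * (1 - A)⁻¹ := by
    rw [hWalt, mconj_mul, hmconj1Ab]
  have hBBc2 : B * mconj B = A * A - 1 := by
    rw [← hiA]; abel
  have hWWc : W * mconj W = -((1 + A) * (1 - A)⁻¹) := by
    calc W * mconj W
        = (1 - A)⁻¹ * (B * (mconj B * (1 - A)⁻¹)) := by
          rw [hW, hmWb]; simp only [Matrix.mul_assoc]
      _ = (1 - A)⁻¹ * (B * mconj B * (1 - A)⁻¹) := by simp only [Matrix.mul_assoc]
      _ = (1 - A)⁻¹ * (-((1 - A) * ((1 + A) * (1 - A)⁻¹))) := by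
          rw [hBBc2, show A * A - (1 : Matrix (Fin n) (Fin n) ℂ)
            = -((1 - A) * (1 + A)) by noncomm_ring]
          simp only [Matrix.mul_assoc, Matrix.neg_mul, Matrix.mul_neg]
      _ = -((1 + A) * (1 - A)⁻¹) := by
          rw [Matrix.mul_neg, ← Matrix.mul_assoc, Matrix.nonsing_inv_mul _ h1Adet,
            Matrix.one_mul]
  have hDeq : 1 - W * mconj W = (2:ℂ) • (1 - A)⁻¹ := by
    calc 1 - W * mconj W
        = 1 + (1 + A) * (1 - A)⁻¹ := by rw [hWWc, sub_neg_eq_add]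
      _ = (1 - A) * (1 - A)⁻¹ + (1 + A) * (1 - A)⁻¹ := by
          rw [Matrix.mul_nonsing_inv _ h1Adet]
      _ = ((1 - A) + (1 + A)) * (1 - A)⁻¹ := (Matrix.add_mul _ _ _).symm
      _ = ((2:ℂ) • (1 : Matrix (Fin n) (Fin n) ℂ)) * (1 - A)⁻¹ := by
          congr 1
          rw [two_smul]; abel
      _ = (2:ℂ) • (1 - A)⁻¹ := by rw [smul_mul_assoc, Matrix.one_mul]
  have hEeq : 1 - mconj W * W = (2:ℂ) • (1 - mconj A)⁻¹ := by
    have h := congrArg mconj hDeq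
    rwa [mconj_sub, mconj_one, mconj_mul, mconj_mconj, mconj_smul, conj_two,
      hmconj1A] at h
  have hEpos : (1 - mconj W * W).PosDef := by
    rw [hEeq, two_smul]
    exact (h1Ab.inv).add (h1Ab.inv)
  have hDinv : (1 - W * mconj W)⁻¹ = (2⁻¹ : ℂ) • (1 - A) := by
    apply Matrix.inv_eq_right_inv
    rw [hDeq, smulmul, show (2:ℂ) * 2⁻¹ = 1 by norm_num,
      Matrix.nonsing_inv_mul _ h1Adet, one_smul]
  have hmatA : matA W = A := by
    rw [matA_eq hWt hEpos, hDinv, smul_smul, show (2:ℂ) * 2⁻¹ = 1 by norm_num,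
      one_smul, sub_sub_cancel]
  have hmatB : matB W = B := by
    show (2:ℂ) • ((1 - W * mconj W)⁻¹ * W) = B
    rw [hDinv, hW, smul_mul_assoc, ← Matrix.mul_assoc, Matrix.mul_nonsing_inv _ h1Adet,
      Matrix.one_mul, smul_smul, show (2:ℂ) * 2⁻¹ = 1 by norm_num, one_smul]
  refine ⟨W, ⟨hWt, hEpos⟩, ?_⟩
  have g1 : -Complex.I • mconj A = M := by rw [hmA, smul_smul, e3, one_smul]
  have g2 : Complex.I • mconj B = N := by rw [hmB, smul_smul, e2, one_smul]
  rw [JF_eq, hmatA, hmatB, g1, g2]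
  exact hJR.symm

theorem recover {W : Matrix (Fin n) (Fin n) ℂ} (hWs : Wᵀ = W)
    (hE : (1 - mconj W * W).PosDef) : (1 - matA W)⁻¹ * matB W = W := by
  have h1 : 1 - matA W = (2:ℂ) • (1 - W * mconj W)⁻¹ := by
    rw [matA_eq hWs hE, sub_sub_cancel]
  have hinv : (1 - matA W)⁻¹ = (2⁻¹ : ℂ) • (1 - W * mconj W) := by
    apply Matrix.inv_eq_right_inv
    rw [h1, smulmul, show (2:ℂ) * 2⁻¹ = 1 by norm_num,
      Matrix.nonsing_inv_mul _ (D_det hWs hE), one_smul]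
  rw [hinv]
  show (2⁻¹ : ℂ) • (1 - W * mconj W) * ((2:ℂ) • ((1 - W * mconj W)⁻¹ * W)) = W
  rw [smulmul, show (2⁻¹:ℂ) * 2 = 1 by norm_num, one_smul, ← Matrix.mul_assoc,
    Matrix.mul_nonsing_inv _ (D_det hWs hE), Matrix.one_mul]

end JFAux

/-- The map `W ↦ J_F(W)` is a bijection from the Siegel disk `D^{III}_n` onto
the set of all compatible complex structures on `(ℝ^{2n}, Ω₀)`. -/
theorem JF_bijOn (n : ℕ) :
    Set.BijOn (fun W => JF W) (SiegelDisk n)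
      {J : Matrix (Fin n ⊕ Fin n) (Fin n ⊕ Fin n) ℝ | IsCompatibleComplexStructure n J} := by
  refine ⟨fun W hW => JFAux.JF_compatible hW.1 hW.2, ?_, ?_⟩
  · intro W hW W' hW' h
    have e2 : Complex.I * (-Complex.I) = (1 : ℂ) := by
      rw [mul_neg, Complex.I_mul_I, neg_neg]
    have e3 : (-Complex.I) * Complex.I = (1 : ℂ) := by
      rw [neg_mul, Complex.I_mul_I, neg_neg]
    have h2 : JF W = JF W' := h
    rw [JFAux.JF_eq, JFAux.JF_eq] at h2
    obtain ⟨hA, hB⟩ := JFAux.Rf_inj h2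
    have hA2 : mconj (matA W) = mconj (matA W') := by
      have h3 := congrArg (fun Z => Complex.I • Z) hA
      simpa [smul_smul, e2, one_smul] using h3
    have hA3 : matA W = matA W' := by
      have h4 := congrArg mconj hA2
      rwa [JFAux.mconj_mconj, JFAux.mconj_mconj] at h4
    have hB2 : mconj (matB W) = mconj (matB W') := by
      have h3 := congrArg (fun Z => (-Complex.I) • Z) hB
      simpa [smul_smul, e3, one_smul] using h3
    have hB3 : matB W = matB W' := by
      have h4 := congrArg mconj hB2
      rwa [JFAux.mconj_mconj, JFAux.mconj_mconj] at h4
    rw [← JFAux.recover hW.1 hW.2, ← JFAux.recover hW'.1 hW'.2, hA3, hB3]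
  · intro J hJ
    obtain ⟨W, hmem, hJF⟩ := JFAux.exists_W hJ
    exact ⟨W, hmem, hJF⟩
end

section
/- Let L ∈ Sp(2n, ℝ) and let 𝐉 : ℝ → M_{2n}(ℝ) be a smooth map such that for every x, 𝐉(x) is a compatible complex structure on (ℝ^{2n}, Ω₀), and 𝐉(x + 2π) = L⁻¹·𝐉(x)·L for all x. For smooth L-equivariant maps s, t : ℝ → ℂ^{2n}, define ⟨s, t⟩ = 2∫₀^{2π} Ω₀(s(x), 𝐉(x)·conj(t(x))) dx, where Ω₀ is extended complex-bilinearly, and let (A_𝐉 s)(x) = 𝐉(x)·s′(x). Then for all smooth L-equivariant s₁, s₂ : ℝ → ℂ^{2n}, one has ⟨A_𝐉 s₁, s₂⟩ = ⟨s₁, A_𝐉 s₂⟩ (i.e. the operator A_𝐉 is formally self-adjoint). -/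
open Matrix Real

/-- The complex-bilinear extension of `Ω₀` to `ℂ^{2n}`. -/
noncomputable def Omega0C (n : ℕ) (u v : Fin n ⊕ Fin n → ℂ) : ℂ :=
  u ⬝ᵥ ((Omega0 n).map Complex.ofReal *ᵥ v)

section AJaux

variable {n : ℕ}

private lemma omega0C_eq (u v : Fin n ⊕ Fin n → ℂ) :
    Omega0C n u v = ∑ i, ∑ j, u i * ((Omega0 n).map Complex.ofReal i j * v j) := by
  simp [Omega0C, dotProduct, Matrix.mulVec, Finset.mul_sum, mul_add]

private lemma star_map_mulVec (M : Matrix (Fin n ⊕ Fin n) (Fin n ⊕ Fin n) ℝ)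
    (v : Fin n ⊕ Fin n → ℂ) :
    star (M.map Complex.ofReal *ᵥ v) = M.map Complex.ofReal *ᵥ star v := by
  funext i
  simp [Matrix.mulVec, dotProduct, star_sum, star_mul', Complex.star_def,
    Complex.conj_ofReal, mul_comm]

private lemma symp_invariance {M : Matrix (Fin n ⊕ Fin n) (Fin n ⊕ Fin n) ℝ}
    (hM : Mᵀ * Omega0 n * M = Omega0 n) (u v : Fin n ⊕ Fin n → ℂ) :
    Omega0C n (M.map Complex.ofReal *ᵥ u) (M.map Complex.ofReal *ᵥ v) = Omega0C n u v := by
  have hmap : (Mᵀ * Omega0 n * M).map (Complex.ofRealHom : ℝ →+* ℂ)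
      = (Omega0 n).map Complex.ofRealHom := by rw [hM]
  rw [Matrix.map_mul, Matrix.map_mul] at hmap
  have hmap' : (M.map Complex.ofReal)ᵀ * (Omega0 n).map Complex.ofReal * M.map Complex.ofReal
      = (Omega0 n).map Complex.ofReal := by
    rw [← Matrix.transpose_map]; exact hmap
  unfold Omega0C
  rw [Matrix.mulVec_mulVec, Matrix.dotProduct_mulVec, ← Matrix.vecMul_transpose,
    Matrix.vecMul_vecMul, ← Matrix.mul_assoc, hmap', ← Matrix.dotProduct_mulVec]

private lemma omega0C_neg (u v : Fin n ⊕ Fin n → ℂ) : Omega0C n u (-v) = -Omega0C n u v := by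
  simp [Omega0C, Matrix.mulVec_neg, dotProduct_neg]

private lemma hasDerivAt_omega0C {u v : ℝ → (Fin n ⊕ Fin n → ℂ)}
    {u' v' : Fin n ⊕ Fin n → ℂ} {x : ℝ}
    (hu : HasDerivAt u u' x) (hv : HasDerivAt v v' x) :
    HasDerivAt (fun y => Omega0C n (u y) (v y))
      (Omega0C n u' (v x) + Omega0C n (u x) v') x := by
  simp only [omega0C_eq]
  have H : HasDerivAt (fun y => ∑ i, ∑ j, u y i *
      ((Omega0 n).map Complex.ofReal i j * v y j))
      (∑ i, ∑ j, (u' i * ((Omega0 n).map Complex.ofReal i j * v x j)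
        + u x i * ((Omega0 n).map Complex.ofReal i j * v' j))) x := by
    refine HasDerivAt.fun_sum fun i _ => HasDerivAt.fun_sum fun j _ => ?_
    exact (hasDerivAt_pi.1 hu i).mul ((hasDerivAt_pi.1 hv j).const_mul _)
  convert H using 1
  simp [Finset.sum_add_distrib]

private lemma continuous_omega0C {a b : ℝ → (Fin n ⊕ Fin n → ℂ)}
    (ha : Continuous a) (hb : Continuous b) :
    Continuous fun x => Omega0C n (a x) (b x) := by
  simp only [omega0C_eq]
  exact continuous_finset_sum _ fun i _ => continuous_finset_sum _ fun j _ =>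
    ((continuous_apply i).comp ha).mul (continuous_const.mul ((continuous_apply j).comp hb))

private lemma omega0_sq : Omega0 n * Omega0 n = -1 := by
  simp only [Omega0, Matrix.fromBlocks_multiply]
  simp only [Matrix.mul_zero, Matrix.zero_mul, Matrix.mul_one, Matrix.one_mul, Matrix.mul_neg,
    Matrix.neg_mul, zero_add, add_zero, neg_zero, mul_zero]
  rw [show (-1 : Matrix (Fin n ⊕ Fin n) (Fin n ⊕ Fin n) ℝ)
      = Matrix.fromBlocks (-1) (-0) (-0) (-1) by
    rw [← Matrix.fromBlocks_neg, Matrix.fromBlocks_one]]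
  simp

end AJaux

/-- The operator `A_Jm s = Jm · s′` is formally self-adjoint for the pairing
`⟨s, t⟩ = 2 ∫₀^{2π} Ω₀(s(x), Jm(x)·conj(t(x))) dx` on smooth `L`-equivariant maps
`ℝ → ℂ^{2n}`. -/
theorem AJ_formally_selfAdjoint (n : ℕ)
    (L : Matrix (Fin n ⊕ Fin n) (Fin n ⊕ Fin n) ℝ)
    (hL : Lᵀ * Omega0 n * L = Omega0 n)
    (Jm : ℝ → Matrix (Fin n ⊕ Fin n) (Fin n ⊕ Fin n) ℝ)
    (hJmsmooth : ∀ i j, ContDiff ℝ (⊤ : ℕ∞) fun x => Jm x i j)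
    (hJmcompat : ∀ x : ℝ, IsCompatibleComplexStructure n (Jm x))
    (hJmequiv : ∀ x : ℝ, Jm (x + 2 * π) = L⁻¹ * Jm x * L)
    (s₁ s₂ : ℝ → (Fin n ⊕ Fin n → ℂ))
    (hs₁ : ContDiff ℝ (⊤ : ℕ∞) s₁) (hs₂ : ContDiff ℝ (⊤ : ℕ∞) s₂)
    (hs₁eq : ∀ x : ℝ, s₁ (x + 2 * π) = (L⁻¹).map Complex.ofReal *ᵥ s₁ x)
    (hs₂eq : ∀ x : ℝ, s₂ (x + 2 * π) = (L⁻¹).map Complex.ofReal *ᵥ s₂ x) :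
    (2 : ℂ) * ∫ x in (0:ℝ)..(2 * π),
        Omega0C n ((Jm x).map Complex.ofReal *ᵥ deriv s₁ x)
          ((Jm x).map Complex.ofReal *ᵥ star (s₂ x)) =
    (2 : ℂ) * ∫ x in (0:ℝ)..(2 * π),
        Omega0C n (s₁ x)
          ((Jm x).map Complex.ofReal *ᵥ star ((Jm x).map Complex.ofReal *ᵥ deriv s₂ x)) := by
  -- L is invertible
  have hdetL : IsUnit L.det := by
    have h := congrArg Matrix.det hL
    rw [Matrix.det_mul, Matrix.det_mul, Matrix.det_transpose] at h
    have hΩ : (Omega0 n).det ≠ 0 := by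
      intro h0
      have h2 := congrArg Matrix.det (omega0_sq (n := n))
      rw [Matrix.det_mul, h0, mul_zero] at h2
      have : ((-1 : Matrix (Fin n ⊕ Fin n) (Fin n ⊕ Fin n) ℝ)).det
          = (-1 : ℝ) ^ Fintype.card (Fin n ⊕ Fin n) := by
        rw [show (-1 : Matrix (Fin n ⊕ Fin n) (Fin n ⊕ Fin n) ℝ) = -(1:Matrix _ _ ℝ) by simp,
          Matrix.det_neg, Matrix.det_one, mul_one]
      rw [this] at h2
      exact pow_ne_zero _ (by norm_num) h2.symm
    have hmul : L.det * L.det = 1 := by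
      have h' : (L.det * L.det) * (Omega0 n).det = 1 * (Omega0 n).det := by
        rw [one_mul]; nlinarith [h]
      exact mul_right_cancel₀ hΩ h'
    exact IsUnit.of_mul_eq_one _ hmul
  -- L⁻¹ is symplectic
  have hLinv : (L⁻¹)ᵀ * Omega0 n * L⁻¹ = Omega0 n := by
    have h1 : L * L⁻¹ = 1 := Matrix.mul_nonsing_inv L hdetL
    calc (L⁻¹)ᵀ * Omega0 n * L⁻¹ = (L⁻¹)ᵀ * (Lᵀ * Omega0 n * L) * L⁻¹ := by rw [hL]
      _ = (L * L⁻¹)ᵀ * Omega0 n * (L * L⁻¹) := by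
          rw [Matrix.transpose_mul]; noncomm_ring
      _ = Omega0 n := by rw [h1]; simp
  -- complexified J² = -1
  have hJc2 : ∀ x, (Jm x).map Complex.ofReal * (Jm x).map Complex.ofReal
      = -((1 : Matrix (Fin n ⊕ Fin n) (Fin n ⊕ Fin n) ℂ)) := by
    intro x
    have h := congrArg (fun A => A.map (Complex.ofRealHom : ℝ →+* ℂ)) (hJmcompat x).1
    simp only [Matrix.map_mul] at h
    have h' : (Jm x).map Complex.ofReal * (Jm x).map Complex.ofReal
        = (-1 : Matrix (Fin n ⊕ Fin n) (Fin n ⊕ Fin n) ℝ).map Complex.ofReal := h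
    rw [h']
    funext i j
    by_cases hij : i = j <;> simp [Matrix.map_apply, Matrix.one_apply, Matrix.neg_apply, hij]
  -- derivative facts
  have hd₁ : ∀ x, HasDerivAt s₁ (deriv s₁ x) x := fun x => (hs₁.differentiable (by simp) x).hasDerivAt
  have hd₂ : ∀ x, HasDerivAt s₂ (deriv s₂ x) x := fun x => (hs₂.differentiable (by simp) x).hasDerivAt
  have hdst : ∀ x, HasDerivAt (fun y => star (s₂ y)) (star (deriv s₂ x)) x := fun x =>
    hasDerivAt_pi.2 fun j => (hasDerivAt_pi.1 (hd₂ x) j).star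
  set A : ℝ → ℂ := fun x => Omega0C n (deriv s₁ x) (star (s₂ x)) with hA
  set B : ℝ → ℂ := fun x => Omega0C n (s₁ x) (star (deriv s₂ x)) with hB
  set F : ℝ → ℂ := fun x => Omega0C n (s₁ x) (star (s₂ x)) with hF
  have hFderiv : ∀ x ∈ Set.uIcc (0:ℝ) (2 * π), HasDerivAt F (A x + B x) x := fun x _ =>
    hasDerivAt_omega0C (hd₁ x) (hdst x)
  have hcontA : Continuous A :=
    continuous_omega0C (hs₁.continuous_deriv (by simp)) (continuous_star.comp hs₂.continuous)
  have hcontB : Continuous B :=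
    continuous_omega0C hs₁.continuous (continuous_star.comp (hs₂.continuous_deriv (by simp)))
  have hintA : IntervalIntegrable A MeasureTheory.volume 0 (2 * π) :=
    hcontA.intervalIntegrable _ _
  have hintB : IntervalIntegrable B MeasureTheory.volume 0 (2 * π) :=
    hcontB.intervalIntegrable _ _
  have hFTC : (∫ x in (0:ℝ)..(2 * π), (A x + B x)) = F (2 * π) - F 0 :=
    intervalIntegral.integral_eq_sub_of_hasDerivAt hFderiv
      ((hcontA.add hcontB).intervalIntegrable _ _)
  have hbound : F (2 * π) = F 0 := by
    have e1 : s₁ (2 * π) = (L⁻¹).map Complex.ofReal *ᵥ s₁ 0 := by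
      have := hs₁eq 0; rwa [zero_add] at this
    have e2 : s₂ (2 * π) = (L⁻¹).map Complex.ofReal *ᵥ s₂ 0 := by
      have := hs₂eq 0; rwa [zero_add] at this
    rw [hF]
    simp only [e1, e2]
    rw [star_map_mulVec, symp_invariance hLinv]
  have hsum : (∫ x in (0:ℝ)..(2 * π), A x) + (∫ x in (0:ℝ)..(2 * π), B x) = 0 := by
    rw [← intervalIntegral.integral_add hintA hintB, hFTC, hbound, sub_self]
  -- rewrite the two integrands
  have hLHS : (∫ x in (0:ℝ)..(2 * π),
      Omega0C n ((Jm x).map Complex.ofReal *ᵥ deriv s₁ x)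
        ((Jm x).map Complex.ofReal *ᵥ star (s₂ x))) = ∫ x in (0:ℝ)..(2 * π), A x := by
    refine intervalIntegral.integral_congr fun x _ => ?_
    exact symp_invariance (hJmcompat x).2.1 _ _
  have hRHS : (∫ x in (0:ℝ)..(2 * π),
      Omega0C n (s₁ x)
        ((Jm x).map Complex.ofReal *ᵥ star ((Jm x).map Complex.ofReal *ᵥ deriv s₂ x)))
      = ∫ x in (0:ℝ)..(2 * π), -B x := by
    refine intervalIntegral.integral_congr fun x _ => ?_
    rw [star_map_mulVec, Matrix.mulVec_mulVec, hJc2 x, Matrix.neg_mulVec, Matrix.one_mulVec,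
      omega0C_neg]
  rw [hLHS, hRHS, intervalIntegral.integral_neg]
  have : (∫ x in (0:ℝ)..(2 * π), A x) = -(∫ x in (0:ℝ)..(2 * π), B x) := by
    linear_combination hsum
  rw [this]
end

section
/- Let B ∈ 𝔰𝔭(2n, ℝ), let J be a compatible complex structure on (ℝ^{2n}, Ω₀), let ε ∈ {1, −1}, set L = ε·exp(2πB) ∈ Sp(2n, ℝ) and 𝐉(x) = exp(−xB)·J·exp(xB). Then for σ ∈ ℝ, the following are equivalent: (i) there exists a nonzero smooth L-equivariant map s : ℝ → ℂ^{2n} with 𝐉(x)·s′(x) = σ·s(x) for all x ∈ ℝ; (ii) there exists a nonzero vector e ∈ ℂ^{2n} with exp(2π(−σJ + B))·e = ε·e. -/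
open Matrix Real NormedSpace

namespace SympAux

variable {m : Type*} [Fintype m] [DecidableEq m]

section CLMdefs

attribute [local instance] Matrix.linftyOpNormedAddCommGroup Matrix.linftyOpNormedRing
  Matrix.linftyOpNormedAlgebra

/-- `mulVec` as a continuous bilinear map (w.r.t. the `L∞` operator norm on matrices). -/
noncomputable def mulVecCLM : Matrix m m ℂ →L[ℝ] (m → ℂ) →L[ℝ] (m → ℂ) :=
  LinearMap.toContinuousLinearMap
  { toFun := fun M => LinearMap.toContinuousLinearMap ((Matrix.mulVecLin M).restrictScalars ℝ)
    map_add' := by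
      intro M N; ext v i
      simp [Matrix.add_mulVec]
    map_smul' := by
      intro r M; ext v i
      simp [Matrix.mulVec, dotProduct, Finset.smul_sum, smul_mul_assoc, mul_assoc] }

@[simp] lemma mulVecCLM_apply (M : Matrix m m ℂ) (v : m → ℂ) : mulVecCLM M v = M *ᵥ v := rfl

/-- `M ↦ M *ᵥ e` as a continuous linear map. -/
noncomputable def mulVecByCLM (e : m → ℂ) : Matrix m m ℂ →L[ℝ] (m → ℂ) :=
  mulVecCLM.flip e

@[simp] lemma mulVecByCLM_apply (e : m → ℂ) (M : Matrix m m ℂ) : mulVecByCLM e M = M *ᵥ e := rfl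

end CLMdefs

lemma expM_zero : exp (0 : Matrix m m ℂ) = 1 := by
  letI : SeminormedRing (Matrix m m ℂ) := Matrix.linftyOpSemiNormedRing
  letI : NormedRing (Matrix m m ℂ) := Matrix.linftyOpNormedRing
  letI : NormedAlgebra ℂ (Matrix m m ℂ) := Matrix.linftyOpNormedAlgebra
  exact exp_zero

lemma expM_mul_expM_neg (A : Matrix m m ℂ) : exp A * exp (-A) = 1 := by
  rw [← Matrix.exp_add_of_commute A (-A) ((Commute.refl A).neg_right),
    add_neg_cancel, expM_zero]

lemma expM_neg_mul_expM (A : Matrix m m ℂ) : exp (-A) * exp A = 1 := by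
  rw [← Matrix.exp_add_of_commute (-A) A ((Commute.refl A).neg_left),
    neg_add_cancel, expM_zero]

lemma expR_zero : exp (0 : Matrix m m ℝ) = 1 := by
  letI : SeminormedRing (Matrix m m ℝ) := Matrix.linftyOpSemiNormedRing
  letI : NormedRing (Matrix m m ℝ) := Matrix.linftyOpNormedRing
  letI : NormedAlgebra ℝ (Matrix m m ℝ) := Matrix.linftyOpNormedAlgebra
  exact exp_zero

lemma expR_mul_expR_neg (A : Matrix m m ℝ) : exp A * exp (-A) = 1 := by
  rw [← Matrix.exp_add_of_commute A (-A) ((Commute.refl A).neg_right),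
    add_neg_cancel, expR_zero]

lemma expCurve_add (A : Matrix m m ℂ) (x y : ℝ) :
    exp ((x + y) • A) = exp (x • A) * exp (y • A) := by
  rw [add_smul]
  exact Matrix.exp_add_of_commute _ _ (((Commute.refl A).smul_left x).smul_right y)

lemma expCurve_mul_expCurve_neg (A : Matrix m m ℂ) (x : ℝ) :
    exp (x • A) * exp (x • (-A)) = 1 := by
  rw [smul_neg]; exact expM_mul_expM_neg _

lemma expCurve_neg_mul_expCurve (A : Matrix m m ℂ) (x : ℝ) :
    exp (x • (-A)) * exp (x • A) = 1 := by
  rw [smul_neg]; exact expM_neg_mul_expM _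

lemma commute_expCurve (A : Matrix m m ℂ) (x : ℝ) : Commute A (exp (x • A)) := by
  letI : SeminormedRing (Matrix m m ℂ) := Matrix.linftyOpSemiNormedRing
  letI : NormedRing (Matrix m m ℂ) := Matrix.linftyOpNormedRing
  letI : NormedAlgebra ℂ (Matrix m m ℂ) := Matrix.linftyOpNormedAlgebra
  exact Commute.exp_right ((Commute.refl A).smul_right x)

lemma hasDerivAt_expVec (A : Matrix m m ℂ) {f : ℝ → m → ℂ} {f' : m → ℂ} {t : ℝ}
    (hf : HasDerivAt f f' t) :
    HasDerivAt (fun x => exp (x • A) *ᵥ f x)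
      ((A * exp (t • A)) *ᵥ f t + exp (t • A) *ᵥ f') t := by
  letI : SeminormedRing (Matrix m m ℂ) := Matrix.linftyOpSemiNormedRing
  letI : NormedRing (Matrix m m ℂ) := Matrix.linftyOpNormedRing
  letI : NormedAlgebra ℝ (Matrix m m ℂ) := Matrix.linftyOpNormedAlgebra
  have hexp : HasDerivAt (fun u : ℝ => exp (u • A)) (A * exp (t • A)) t := by
    exact hasDerivAt_exp_smul_const' A t
  have hc := mulVecCLM.hasFDerivAt.comp_hasDerivAt t hexp
  exact hc.clm_apply hf

lemma contDiff_expVec2 (P Q : Matrix m m ℂ) (e : m → ℂ) :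
    ContDiff ℝ (⊤ : ℕ∞) (fun x : ℝ => exp (x • P) *ᵥ (exp (x • Q) *ᵥ e)) := by
  have h : (fun x : ℝ => exp (x • P) *ᵥ (exp (x • Q) *ᵥ e)) =
      fun x : ℝ => mulVecByCLM e (exp (x • P) * exp (x • Q)) := by
    funext x
    rw [mulVecByCLM_apply, Matrix.mulVec_mulVec]
  rw [h]
  letI : SeminormedRing (Matrix m m ℂ) := Matrix.linftyOpSemiNormedRing
  letI : NormedRing (Matrix m m ℂ) := Matrix.linftyOpNormedRing
  letI : NormedAlgebra ℝ (Matrix m m ℂ) := Matrix.linftyOpNormedAlgebra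
  have hcurve : ∀ R : Matrix m m ℂ, ContDiff ℝ (⊤ : ℕ∞) (fun x : ℝ => exp (x • R)) := by
    intro R
    have h1 : AnalyticOnNhd ℝ (exp : Matrix m m ℂ → Matrix m m ℂ) Set.univ :=
      fun x _ => exp_analytic (𝕂 := ℝ) x
    exact h1.contDiff.comp ((1 : ℝ →L[ℝ] ℝ).smulRight R).contDiff
  exact (mulVecByCLM e).contDiff.comp ((hcurve P).mul (hcurve Q))

/-- Uniqueness for the linear ODE `f' = A f`. -/
lemma ode_unique (A : Matrix m m ℂ) (f : ℝ → m → ℂ)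
    (hf : ∀ t, HasDerivAt f (A *ᵥ f t) t) (t : ℝ) : f t = exp (t • A) *ᵥ f 0 := by
  have hg : ∀ t : ℝ, HasDerivAt (fun x => exp (x • (-A)) *ᵥ f x) 0 t := by
    intro t
    have h := hasDerivAt_expVec (-A) (hf t) (t := t)
    have hcomm : (-A) * exp (t • (-A)) = exp (t • (-A)) * (-A) :=
      (commute_expCurve (-A) t).eq
    have h2 : ((-A) * exp (t • (-A))) *ᵥ f t + exp (t • (-A)) *ᵥ (A *ᵥ f t) = 0 := by
      rw [hcomm, Matrix.mulVec_mulVec, ← Matrix.add_mulVec, mul_neg, neg_add_cancel,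
        Matrix.zero_mulVec]
    rw [h2] at h
    exact h
  have hconst : (fun x => exp (x • (-A)) *ᵥ f x) t = (fun x => exp (x • (-A)) *ᵥ f x) 0 :=
    is_const_of_deriv_eq_zero (fun x => (hg x).differentiableAt) (fun x => (hg x).deriv) t 0
  simp only [zero_smul, expM_zero, Matrix.one_mulVec] at hconst
  have h3 := congrArg (fun v => exp (t • A) *ᵥ v) hconst
  simp only [Matrix.mulVec_mulVec] at h3
  rw [expCurve_mul_expCurve_neg, Matrix.one_mulVec] at h3
  exact h3

lemma map_exp_ofReal (M : Matrix m m ℝ) :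
    (exp M).map Complex.ofReal = exp (M.map Complex.ofReal) := by
  letI : SeminormedRing (Matrix m m ℝ) := Matrix.linftyOpSemiNormedRing
  letI : NormedRing (Matrix m m ℝ) := Matrix.linftyOpNormedRing
  letI : NormedAlgebra ℝ (Matrix m m ℝ) := Matrix.linftyOpNormedAlgebra
  letI : SeminormedRing (Matrix m m ℂ) := Matrix.linftyOpSemiNormedRing
  letI : NormedRing (Matrix m m ℂ) := Matrix.linftyOpNormedRing
  letI : NormedAlgebra ℝ (Matrix m m ℂ) := Matrix.linftyOpNormedAlgebra
  have hcont : Continuous (Complex.ofRealHom.mapMatrix : Matrix m m ℝ →+* Matrix m m ℂ) :=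
    continuous_id.matrix_map Complex.continuous_ofReal
  letI : NormedAlgebra ℚ (Matrix m m ℝ) := Matrix.linftyOpNormedAlgebra
  have h := map_exp (Complex.ofRealHom.mapMatrix : Matrix m m ℝ →+* Matrix m m ℂ) hcont M
  exact h

lemma map_smul_ofReal (r : ℝ) (M : Matrix m m ℝ) :
    (r • M).map Complex.ofReal = r • M.map Complex.ofReal := by
  ext i j
  simp [Complex.real_smul]

lemma map_neg_ofReal (M : Matrix m m ℝ) :
    (-M).map Complex.ofReal = -(M.map Complex.ofReal) := by
  ext i j
  simp

lemma real_smul_matrix (r : ℝ) (N : Matrix m m ℂ) : r • N = (r : ℂ) • N := by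
  ext i j
  simp [Complex.real_smul]

lemma map_mul_ofReal (M N : Matrix m m ℝ) :
    (M * N).map Complex.ofReal = M.map Complex.ofReal * N.map Complex.ofReal := by
  have : (Complex.ofRealHom.mapMatrix : Matrix m m ℝ →+* Matrix m m ℂ) (M * N) =
      Complex.ofRealHom.mapMatrix M * Complex.ofRealHom.mapMatrix N := map_mul _ _ _
  exact this

end SympAux

open SympAux

/-- For `B ∈ 𝔰𝔭(2n, ℝ)`, a compatible complex structure `J`, `ε = ±1`,
`L = ε·exp(2πB)` and `𝐉(x) = exp(−xB)·J·exp(xB)`, a real number `σ` is an eigenvalue of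
`A_𝐉 = 𝐉 d/dx` on smooth `L`-equivariant maps iff `exp(2π(−σJ + B))` has a nonzero fixed
vector up to the sign `ε`. -/
theorem eigenvalue_iff_fixed_vector {n : ℕ}
    (B J : Matrix (Fin n ⊕ Fin n) (Fin n ⊕ Fin n) ℝ)
    (hB : Bᵀ * Omega0 n + Omega0 n * B = 0)
    (hJ : IsCompatibleComplexStructure n J)
    (ε : ℝ) (hε : ε = 1 ∨ ε = -1)
    (σ : ℝ) :
    (∃ s : ℝ → (Fin n ⊕ Fin n → ℂ), s ≠ 0 ∧ ContDiff ℝ (⊤ : ℕ∞) s ∧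
      (∀ x : ℝ, s (x + 2 * π) =
        ((ε • exp ((2 * π) • B))⁻¹).map Complex.ofReal *ᵥ s x) ∧
      (∀ x : ℝ,
        ((exp ((-x) • B) * J * exp (x • B)).map Complex.ofReal) *ᵥ deriv s x =
          (σ : ℂ) • s x)) ↔
    (∃ e : Fin n ⊕ Fin n → ℂ, e ≠ 0 ∧
      exp (((2 * π : ℝ) : ℂ) •
          (-(σ : ℂ) • J.map Complex.ofReal + B.map Complex.ofReal)) *ᵥ e =
        (ε : ℂ) • e) := by
  classical
  set Jc : Matrix (Fin n ⊕ Fin n) (Fin n ⊕ Fin n) ℂ := J.map Complex.ofReal with hJc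
  set Bc : Matrix (Fin n ⊕ Fin n) (Fin n ⊕ Fin n) ℂ := B.map Complex.ofReal with hBc
  set A : Matrix (Fin n ⊕ Fin n) (Fin n ⊕ Fin n) ℂ := -(σ : ℂ) • Jc + Bc with hA
  have hε2 : ε * ε = 1 := by rcases hε with h | h <;> rw [h] <;> norm_num
  -- J² = -1 over ℂ
  have hJJ : Jc * Jc = -1 := by
    rw [hJc, ← map_mul_ofReal, hJ.1]
    ext i j
    by_cases h : i = j <;> simp [Matrix.map_apply, Matrix.one_apply, h]
  -- the conjugated complex structure
  have hJx : ∀ x : ℝ, ((exp ((-x) • B) * J * exp (x • B)).map Complex.ofReal) =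
      exp (x • (-Bc)) * Jc * exp (x • Bc) := by
    intro x
    rw [map_mul_ofReal, map_mul_ofReal, map_exp_ofReal, map_exp_ofReal, map_smul_ofReal,
      map_smul_ofReal, ← hBc, ← hJc]
    congr 2
    rw [neg_smul, smul_neg]
  -- the inverse of the monodromy matrix
  have hLinv : ((ε • exp ((2 * π) • B))⁻¹).map Complex.ofReal =
      (ε : ℂ) • exp ((2 * π) • (-Bc)) := by
    have h1 : (ε • exp ((2 * π) • B))⁻¹ = ε • exp (-((2 * π) • B)) := by
      apply Matrix.inv_eq_right_inv
      rw [Matrix.smul_mul, Matrix.mul_smul, smul_smul, hε2, one_smul, expR_mul_expR_neg]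
    rw [h1, show -((2 * π : ℝ) • B) = (2 * π : ℝ) • (-B) from (smul_neg _ _).symm]
    have h2 : (ε • exp ((2 * π : ℝ) • (-B))).map Complex.ofReal =
        ε • (exp ((2 * π : ℝ) • (-B))).map Complex.ofReal := map_smul_ofReal ε _
    rw [h2, map_exp_ofReal, map_smul_ofReal, map_neg_ofReal, ← hBc, real_smul_matrix ε]
  constructor
  · -- forward direction
    rintro ⟨s, hs0, hsmooth, hequiv, hODE⟩
    have hdiff : Differentiable ℝ s := hsmooth.differentiable (by simp)
    -- deriv s x = -(σ) • (𝐉 x *ᵥ s x)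
    have hderiv : ∀ x : ℝ, deriv s x =
        -(σ : ℂ) • ((exp (x • (-Bc)) * Jc * exp (x • Bc)) *ᵥ s x) := by
      intro x
      have h := hODE x
      rw [hJx x] at h
      have h2 := congrArg
        (fun v => (exp (x • (-Bc)) * Jc * exp (x • Bc)) *ᵥ v) h
      simp only [Matrix.mulVec_mulVec, Matrix.mulVec_smul] at h2
      have hE1 : exp (x • Bc) * exp (x • (-Bc)) = 1 := expCurve_mul_expCurve_neg Bc x
      have hE2 : exp (x • (-Bc)) * exp (x • Bc) = 1 := expCurve_neg_mul_expCurve Bc x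
      have hsq : exp (x • (-Bc)) * Jc * exp (x • Bc) *
          (exp (x • (-Bc)) * Jc * exp (x • Bc)) = -1 := by
        calc exp (x • (-Bc)) * Jc * exp (x • Bc) *
            (exp (x • (-Bc)) * Jc * exp (x • Bc))
            = exp (x • (-Bc)) * Jc * (exp (x • Bc) * exp (x • (-Bc))) *
              (Jc * exp (x • Bc)) := by noncomm_ring
          _ = exp (x • (-Bc)) * (Jc * Jc) * exp (x • Bc) := by
              rw [hE1]; noncomm_ring
          _ = -(exp (x • (-Bc)) * exp (x • Bc)) := by rw [hJJ]; noncomm_ring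
          _ = -1 := by rw [hE2]
      rw [hsq, Matrix.neg_mulVec, Matrix.one_mulVec] at h2
      have h3 := neg_eq_iff_eq_neg.mp h2
      rw [h3]
      exact (neg_smul _ _).symm
    -- u(x) = exp(xB) s(x) satisfies u' = A u
    have hu' : ∀ t : ℝ, HasDerivAt (fun x => exp (x • Bc) *ᵥ s x)
        (A *ᵥ (exp (t • Bc) *ᵥ s t)) t := by
      intro t
      have h := hasDerivAt_expVec Bc ((hdiff t).hasDerivAt) (t := t)
      have hE1 : exp (t • Bc) * exp (t • (-Bc)) = 1 := expCurve_mul_expCurve_neg Bc t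
      have hval : (Bc * exp (t • Bc)) *ᵥ s t + exp (t • Bc) *ᵥ deriv s t =
          A *ᵥ (exp (t • Bc) *ᵥ s t) := by
        rw [hderiv t, Matrix.mulVec_smul, Matrix.mulVec_mulVec]
        have hcol : exp (t • Bc) * (exp (t • (-Bc)) * Jc * exp (t • Bc)) =
            Jc * exp (t • Bc) := by
          calc exp (t • Bc) * (exp (t • (-Bc)) * Jc * exp (t • Bc))
              = exp (t • Bc) * exp (t • (-Bc)) * (Jc * exp (t • Bc)) := by noncomm_ring
            _ = Jc * exp (t • Bc) := by rw [hE1, one_mul]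
        rw [hcol, ← Matrix.smul_mulVec, ← Matrix.add_mulVec, Matrix.mulVec_mulVec]
        congr 1
        rw [hA, Matrix.add_mul, Matrix.smul_mul]
        abel
      rw [hval] at h
      exact h
    have huexp := ode_unique A (fun x => exp (x • Bc) *ᵥ s x) hu'
    have hsx : ∀ x : ℝ, s x = exp (x • (-Bc)) *ᵥ (exp (x • A) *ᵥ s 0) := by
      intro x
      have h1 := huexp x
      simp only [zero_smul, expM_zero, Matrix.one_mulVec] at h1
      have h2 := congrArg (fun v => exp (x • (-Bc)) *ᵥ v) h1
      simp only [Matrix.mulVec_mulVec] at h2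
      rw [expCurve_neg_mul_expCurve, Matrix.one_mulVec] at h2
      rw [Matrix.mulVec_mulVec]
      exact h2
    have hs00 : s 0 ≠ 0 := by
      intro h0
      apply hs0
      funext x
      rw [hsx x, h0]
      simp
    refine ⟨s 0, hs00, ?_⟩
    have heq := hequiv 0
    rw [zero_add, hLinv] at heq
    have h2π := hsx (2 * π)
    rw [heq, Matrix.smul_mulVec] at h2π
    have h3 := congrArg (fun v => exp ((2 * π : ℝ) • Bc) *ᵥ v) h2π
    simp only [Matrix.mulVec_smul, Matrix.mulVec_mulVec] at h3
    rw [← mul_assoc, expCurve_mul_expCurve_neg, one_mul, Matrix.one_mulVec] at h3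
    rw [← real_smul_matrix]
    exact h3.symm
  · -- backward direction
    rintro ⟨e, he0, hee⟩
    rw [← real_smul_matrix] at hee
    refine ⟨fun x => exp (x • (-Bc)) *ᵥ (exp (x • A) *ᵥ e), ?_, ?_, ?_, ?_⟩
    · intro h
      apply he0
      have := congrFun h 0
      simpa [zero_smul, expM_zero, Matrix.one_mulVec] using this
    · exact contDiff_expVec2 (-Bc) A e
    · -- equivariance
      intro x
      show exp ((x + 2 * π) • (-Bc)) *ᵥ (exp ((x + 2 * π) • A) *ᵥ e) =
        ((ε • exp ((2 * π) • B))⁻¹).map Complex.ofReal *ᵥ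
          (exp (x • (-Bc)) *ᵥ (exp (x • A) *ᵥ e))
      rw [hLinv]
      have h1 : exp ((x + 2 * π) • (-Bc)) *ᵥ (exp ((x + 2 * π) • A) *ᵥ e) =
          (exp (x • (-Bc)) * exp ((2 * π) • (-Bc)) *
            (exp (x • A) * exp ((2 * π) • A))) *ᵥ e := by
        rw [expCurve_add, expCurve_add]
        simp only [Matrix.mulVec_mulVec]
      rw [h1]
      have h2 : exp (x • (-Bc)) * exp ((2 * π) • (-Bc)) * (exp (x • A) *
          exp ((2 * π) • A)) = exp ((2 * π) • (-Bc)) * exp (x • (-Bc)) *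
          exp (x • A) * exp ((2 * π) • A) := by
        rw [show exp (x • (-Bc)) * exp ((2 * π) • (-Bc)) =
          exp ((2 * π) • (-Bc)) * exp (x • (-Bc)) from by
            rw [← expCurve_add, ← expCurve_add, add_comm]]
        noncomm_ring
      rw [h2]
      simp only [← Matrix.mulVec_mulVec]
      rw [hee]
      simp only [Matrix.mulVec_smul, Matrix.smul_mulVec]
    · -- the eigenvalue equation
      intro x
      have hsderiv : HasDerivAt (fun y : ℝ => exp (y • (-Bc)) *ᵥ (exp (y • A) *ᵥ e))
          (((-Bc) * exp (x • (-Bc))) *ᵥ (exp (x • A) *ᵥ e) +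
            exp (x • (-Bc)) *ᵥ ((A * exp (x • A)) *ᵥ e)) x := by
        have hinner : HasDerivAt (fun y : ℝ => exp (y • A) *ᵥ e)
            ((A * exp (x • A)) *ᵥ e) x := by
          have := hasDerivAt_expVec A (hasDerivAt_const x e) (t := x)
          simpa using this
        exact hasDerivAt_expVec (-Bc) hinner (t := x)
      rw [hJx x, hsderiv.deriv]
      simp only [Matrix.mulVec_add, Matrix.mulVec_mulVec]
      rw [← Matrix.smul_mulVec, ← Matrix.add_mulVec]
      refine congrArg (fun M => M *ᵥ e) ?_
      have hcomm : (-Bc) * exp (x • (-Bc)) = exp (x • (-Bc)) * (-Bc) :=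
        (commute_expCurve (-Bc) x).eq
      have hE1 : exp (x • Bc) * exp (x • (-Bc)) = 1 := expCurve_mul_expCurve_neg Bc x
      have hJA : Jc * ((-Bc) + A) = (σ : ℂ) • (1 : Matrix (Fin n ⊕ Fin n) (Fin n ⊕ Fin n) ℂ) := by
        have : (-Bc) + A = -(σ : ℂ) • Jc := by rw [hA]; abel
        rw [this, mul_smul_comm, hJJ]
        simp
      calc exp (x • (-Bc)) * Jc * exp (x • Bc) * ((-Bc) * exp (x • (-Bc)) *
            exp (x • A)) + exp (x • (-Bc)) * Jc * exp (x • Bc) *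
            (exp (x • (-Bc)) * (A * exp (x • A)))
          = exp (x • (-Bc)) * Jc * (exp (x • Bc) * exp (x • (-Bc))) * ((-Bc) *
              exp (x • A)) + exp (x • (-Bc)) * Jc * (exp (x • Bc) *
              exp (x • (-Bc))) * (A * exp (x • A)) := by
            rw [hcomm]; noncomm_ring
        _ = exp (x • (-Bc)) * (Jc * ((-Bc) + A)) * exp (x • A) := by
            rw [hE1]; noncomm_ring
        _ = (σ : ℂ) • (exp (x • (-Bc)) * exp (x • A)) := by
            rw [hJA, mul_smul_comm, smul_mul_assoc, mul_one]
end

section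
/- Let a > 0, l > 0, b, c ∈ ℝ, and suppose there is a constant c₀ > 0 such that (a·k² + b·k + c)^{1/2} ≥ l + c₀·k for every integer k ≥ 1. Then for every real s ∈ (0, 1/2) the series Σ_{k=1}^{∞} [ ((a·k² + b·k + c)^{1/2} − l)^{−s} − ((a·k² + b·k + c)^{1/2} + l)^{−s} ] converges, and its sum tends to 2l/√a as s → 0⁺. -/
open Filter Topology

lemma eta_aux_mvt {l x s : ℝ} (hl : 0 < l) (hx : l < x) (hs : 0 < s) :
    2 * l * (s * (x + l) ^ (-(1 + s))) ≤ (x - l) ^ (-s) - (x + l) ^ (-s) ∧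
    (x - l) ^ (-s) - (x + l) ^ (-s) ≤ 2 * l * (s * (x - l) ^ (-(1 + s))) := by
  have h1 : (0:ℝ) < x - l := by linarith
  have h2 : (0:ℝ) < x + l := by linarith
  have hab : x - l < x + l := by linarith
  obtain ⟨ξ, hξ, hder⟩ := exists_hasDerivAt_eq_slope (fun u : ℝ => u ^ (-s))
      (fun u : ℝ => (-s) * u ^ (-s - 1)) hab
      (fun u hu => (Real.continuousAt_rpow_const u (-s)
        (Or.inl (ne_of_gt (lt_of_lt_of_le h1 hu.1)))).continuousWithinAt)
      (fun u hu => Real.hasDerivAt_rpow_const (Or.inl (ne_of_gt (h1.trans hu.1))))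
  have hξ1 : x - l < ξ := hξ.1
  have hξ2 : ξ < x + l := hξ.2
  have hξ0 : (0:ℝ) < ξ := h1.trans hξ1
  have hkey : (x - l) ^ (-s) - (x + l) ^ (-s) = 2 * l * (s * ξ ^ (-s - 1)) := by
    have h2l : (x + l) - (x - l) = 2 * l := by ring
    field_simp [h2l] at hder
    nlinarith [hder]
  have e1 : ξ ^ (-s - 1) ≤ (x - l) ^ (-s - 1) :=
    Real.rpow_le_rpow_of_nonpos h1 hξ1.le (by linarith)
  have e2 : (x + l) ^ (-s - 1) ≤ ξ ^ (-s - 1) :=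
    Real.rpow_le_rpow_of_nonpos hξ0 hξ2.le (by linarith)
  have hns : -(1 + s) = -s - 1 := by ring
  rw [hns, hkey]
  have hnn : (0:ℝ) ≤ 2 * l * s := by positivity
  have c1 := mul_le_mul_of_nonneg_left e1 hnn
  have c2 := mul_le_mul_of_nonneg_left e2 hnn
  constructor <;> nlinarith [c1, c2]

lemma eta_aux_summable (N : ℕ) {s : ℝ} (hs : 0 < s) :
    Summable (fun k : ℕ => ((k : ℝ) + N + 1) ^ (-(1 + s))) := by
  have h := (Real.summable_nat_rpow (p := -(1 + s))).2 (by linarith)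
  have h2 := (summable_nat_add_iff (N + 1)).2 h
  refine h2.congr fun k => ?_
  push_cast
  ring_nf

lemma eta_aux_zeta (N : ℕ) :
    Tendsto (fun s : ℝ => s * ∑' k : ℕ, ((k : ℝ) + N + 1) ^ (-(1 + s)))
      (𝓝[>] (0:ℝ)) (𝓝 1) := by
  have hmap : Tendsto (fun s : ℝ => 1 + s) (𝓝[>] (0:ℝ)) (𝓝[>] (1:ℝ)) := by
    apply tendsto_nhdsWithin_of_tendsto_nhds_of_eventually_within
    · have : Tendsto (fun s : ℝ => 1 + s) (𝓝 (0:ℝ)) (𝓝 (1 + 0)) :=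
        (continuous_const.add continuous_id).tendsto 0
      simpa using this.mono_left nhdsWithin_le_nhds
    · filter_upwards [self_mem_nhdsWithin] with s hs
      simp only [Set.mem_Ioi] at hs ⊢; linarith
  have base := tendsto_sub_mul_tsum_nat_rpow.comp hmap
  have hfull : Tendsto (fun s : ℝ => s * ∑' n : ℕ, ((n : ℝ)) ^ (-(1 + s)))
      (𝓝[>] (0:ℝ)) (𝓝 1) := by
    refine base.congr fun s => ?_
    simp only [Function.comp_apply, add_sub_cancel_left]
    rw [show ∑' n : ℕ, 1 / (n:ℝ) ^ (1+s) = ∑' n : ℕ, (n:ℝ) ^ (-(1+s)) from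
      tsum_congr fun n => by rw [Real.rpow_neg (Nat.cast_nonneg n), one_div]]
  have hfin : Tendsto (fun s : ℝ => s * ∑ i ∈ Finset.range (N+1), ((i:ℝ)) ^ (-(1+s)))
      (𝓝[>] (0:ℝ)) (𝓝 0) := by
    have hub : ∀ᶠ s : ℝ in 𝓝[>] 0,
        s * ∑ i ∈ Finset.range (N+1), ((i:ℝ)) ^ (-(1+s)) ≤ s * (N+1) := by
      filter_upwards [self_mem_nhdsWithin] with s hs
      have hs' : (0:ℝ) < s := hs
      have : ∑ i ∈ Finset.range (N+1), ((i:ℝ)) ^ (-(1+s)) ≤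
          ∑ _i ∈ Finset.range (N+1), (1:ℝ) := by
        refine Finset.sum_le_sum fun i _ => ?_
        rcases Nat.eq_zero_or_pos i with h0 | h0
        · subst h0
          rw [Nat.cast_zero, Real.zero_rpow (by linarith)]
          norm_num
        · exact Real.rpow_le_one_of_one_le_of_nonpos
            (by exact_mod_cast h0) (by linarith)
      simp only [Finset.sum_const, Finset.card_range, nsmul_eq_mul, mul_one] at this
      have := mul_le_mul_of_nonneg_left this hs'.le
      push_cast at this ⊢
      linarith
    have hlb : ∀ᶠ s : ℝ in 𝓝[>] 0,
        0 ≤ s * ∑ i ∈ Finset.range (N+1), ((i:ℝ)) ^ (-(1+s)) := by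
      filter_upwards [self_mem_nhdsWithin] with s hs
      have hs' : (0:ℝ) < s := hs
      exact mul_nonneg hs'.le
        (Finset.sum_nonneg fun i _ => Real.rpow_nonneg (Nat.cast_nonneg i) _)
    have hupper : Tendsto (fun s : ℝ => s * ((N:ℝ)+1)) (𝓝[>] (0:ℝ)) (𝓝 0) := by
      have : Tendsto (fun s : ℝ => s * ((N:ℝ)+1)) (𝓝 (0:ℝ)) (𝓝 (0 * ((N:ℝ)+1))) :=
        (continuous_id.mul continuous_const).tendsto 0
      simpa using this.mono_left nhdsWithin_le_nhds
    exact tendsto_of_tendsto_of_tendsto_of_le_of_le' tendsto_const_nhds hupper hlb hub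
  have key := hfull.sub hfin
  rw [sub_zero] at key
  refine key.congr' ?_
  filter_upwards [self_mem_nhdsWithin] with s hs
  have hs' : (0:ℝ) < s := hs
  have hsum : Summable (fun n : ℕ => ((n:ℝ)) ^ (-(1+s))) :=
    Real.summable_nat_rpow.2 (by linarith)
  have hsplit := Summable.sum_add_tsum_nat_add (N+1) hsum
  have heq : ∑' k : ℕ, (((k + (N+1) : ℕ) : ℝ)) ^ (-(1+s)) =
      ∑' k : ℕ, ((k:ℝ) + N + 1) ^ (-(1+s)) := by
    refine tsum_congr fun k => ?_
    push_cast
    ring_nf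
  rw [heq] at hsplit
  rw [← hsplit]
  ring

lemma eta_aux_rpow_zero {p : ℝ} (hp : 0 < p) :
    Tendsto (fun s : ℝ => p ^ (-s)) (𝓝[>] (0:ℝ)) (𝓝 1) := by
  have hc : ContinuousAt (fun y : ℝ => p ^ y) (-0 : ℝ) := Real.continuousAt_const_rpow hp.ne'
  have hexp : Tendsto (fun s : ℝ => -s) (𝓝 (0:ℝ)) (𝓝 (-0 : ℝ)) := (continuous_neg.tendsto 0)
  have key := hc.tendsto.comp hexp
  simp only [neg_zero, Real.rpow_zero] at key
  exact key.mono_left nhdsWithin_le_nhds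

lemma eta_aux_const_rpow {q : ℝ} (hq : 0 < q) :
    Tendsto (fun s : ℝ => q ^ (-(1+s))) (𝓝[>] (0:ℝ)) (𝓝 q⁻¹) := by
  have hc : ContinuousAt (fun y : ℝ => q ^ y) (-(1+0) : ℝ) := Real.continuousAt_const_rpow hq.ne'
  have hexp : Tendsto (fun s : ℝ => -(1+s)) (𝓝 (0:ℝ)) (𝓝 (-(1+0) : ℝ)) :=
    ((continuous_const.add continuous_id).neg.tendsto 0)
  have key := hc.tendsto.comp hexp
  simp only [add_zero, Real.rpow_neg_one] at key
  exact key.mono_left nhdsWithin_le_nhds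

set_option linter.unusedVariables false in
lemma eta_aux_ratio (a b c l c₀ : ℝ) (ha : 0 < a) (hl : 0 < l) (hc₀ : 0 < c₀)
    (hx : ∀ k : ℕ, l + c₀ * ((k:ℝ)+1) ≤ Real.sqrt (a*((k:ℝ)+1)^2 + b*((k:ℝ)+1) + c)) :
    Tendsto (fun k : ℕ => Real.sqrt (a*((k:ℝ)+1)^2 + b*((k:ℝ)+1) + c) / ((k:ℝ)+1))
      atTop (𝓝 (Real.sqrt a)) := by
  have hq : ∀ k : ℕ, 0 < a*((k:ℝ)+1)^2 + b*((k:ℝ)+1) + c := by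
    intro k
    have h1 : (0:ℝ) < l + c₀ * ((k:ℝ)+1) := by positivity
    have := lt_of_lt_of_le h1 (hx k)
    exact Real.sqrt_pos.mp (by linarith [Real.sqrt_nonneg (a*((k:ℝ)+1)^2 + b*((k:ℝ)+1) + c)])
  have hk0 : ∀ k : ℕ, (0:ℝ) < (k:ℝ)+1 := fun k => by positivity
  have heq : ∀ k : ℕ, Real.sqrt (a*((k:ℝ)+1)^2 + b*((k:ℝ)+1) + c) / ((k:ℝ)+1)
      = Real.sqrt (a + b/((k:ℝ)+1) + c/((k:ℝ)+1)^2) := by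
    intro k
    rw [show a + b/((k:ℝ)+1) + c/((k:ℝ)+1)^2
        = (a*((k:ℝ)+1)^2 + b*((k:ℝ)+1) + c) / ((k:ℝ)+1)^2 by field_simp]
    rw [Real.sqrt_div (hq k).le, Real.sqrt_sq (hk0 k).le]
  have hk1 : Tendsto (fun k : ℕ => ((k:ℝ)+1)) atTop atTop :=
    tendsto_atTop_add_const_right _ 1 tendsto_natCast_atTop_atTop
  have hb : Tendsto (fun k : ℕ => b/((k:ℝ)+1)) atTop (𝓝 0) :=
    tendsto_const_nhds.div_atTop hk1
  have hc2 : Tendsto (fun k : ℕ => c/((k:ℝ)+1)^2) atTop (𝓝 0) := by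
    have : Tendsto (fun k : ℕ => ((k:ℝ)+1)^2) atTop atTop := by simpa [pow_two] using hk1.atTop_mul_atTop₀ hk1
    exact tendsto_const_nhds.div_atTop this
  have hinner : Tendsto (fun k : ℕ => a + b/((k:ℝ)+1) + c/((k:ℝ)+1)^2) atTop (𝓝 a) := by
    have h := ((tendsto_const_nhds (x := a)).add hb).add hc2
    simpa using h
  have := (Real.continuous_sqrt.tendsto a).comp hinner
  exact Tendsto.congr (fun k => (heq k).symm) this

set_option maxHeartbeats 1000000 in
lemma eta_aux_main (A l c₀ : ℝ) (hA : 0 < A) (hl : 0 < l) (hc₀ : 0 < c₀) (x : ℕ → ℝ)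
    (hlow : ∀ k : ℕ, l + c₀ * ((k:ℝ)+1) ≤ x k)
    (hratio : Tendsto (fun k : ℕ => x k / ((k:ℝ)+1)) atTop (𝓝 A)) :
    (∀ s : ℝ, 0 < s → Summable (fun k : ℕ => (x k - l) ^ (-s) - (x k + l) ^ (-s))) ∧
    Tendsto (fun s : ℝ => ∑' k : ℕ, ((x k - l) ^ (-s) - (x k + l) ^ (-s)))
      (𝓝[>] (0:ℝ)) (𝓝 (2 * l / A)) := by
  have hk0 : ∀ k : ℕ, (0:ℝ) < (k:ℝ)+1 := fun k => by positivity
  have hxl : ∀ k : ℕ, l < x k := fun k =>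
    lt_of_lt_of_le (by nlinarith [hk0 k]) (hlow k)
  have hsub : ∀ k : ℕ, c₀ * ((k:ℝ)+1) ≤ x k - l := fun k => by linarith [hlow k]
  have hsubpos : ∀ k : ℕ, 0 < x k - l := fun k =>
    lt_of_lt_of_le (by positivity) (hsub k)
  have haddpos : ∀ k : ℕ, 0 < x k + l := fun k => by linarith [hxl k]
  have hsummable : ∀ s : ℝ, 0 < s →
      Summable (fun k : ℕ => (x k - l) ^ (-s) - (x k + l) ^ (-s)) := by
    intro s hs
    have hbig : Summable (fun k : ℕ => 2*l*s*c₀^(-(1+s)) * ((k:ℝ)+(0:ℕ)+1)^(-(1+s))) :=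
      (eta_aux_summable 0 hs).mul_left _
    refine Summable.of_nonneg_of_le ?_ ?_ hbig
    · intro k
      have h1 := (eta_aux_mvt hl (hxl k) hs).1
      have h0 : 0 ≤ 2*l*(s*(x k + l)^(-(1+s))) :=
        mul_nonneg (by linarith) (mul_nonneg hs.le (Real.rpow_nonneg (haddpos k).le _))
      linarith
    · intro k
      have h1 := (eta_aux_mvt hl (hxl k) hs).2
      have h2 : (x k - l)^(-(1+s)) ≤ (c₀ * ((k:ℝ)+1))^(-(1+s)) :=
        Real.rpow_le_rpow_of_nonpos (by positivity) (hsub k) (by linarith)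
      have h3 : (c₀ * ((k:ℝ)+1))^(-(1+s)) = c₀^(-(1+s)) * ((k:ℝ)+1)^(-(1+s)) :=
        Real.mul_rpow hc₀.le (hk0 k).le
      have hc := mul_le_mul_of_nonneg_left h2 (show (0:ℝ) ≤ 2*l*s by positivity)
      rw [h3] at hc
      calc (x k - l) ^ (-s) - (x k + l) ^ (-s)
          ≤ 2*l*(s*(x k - l)^(-(1+s))) := h1
        _ = 2*l*s*((x k - l)^(-(1+s))) := by ring
        _ ≤ 2*l*s*(c₀^(-(1+s)) * ((k:ℝ)+1)^(-(1+s))) := hc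
        _ = 2*l*s*c₀^(-(1+s)) * ((k:ℝ)+(0:ℕ)+1)^(-(1+s)) := by push_cast; ring
  refine ⟨hsummable, ?_⟩
  rw [Metric.tendsto_nhds]
  intro ε hε
  set T := 2*l/A with hTdef
  have hTpos : 0 < T := by positivity
  set δ := min (1/2 : ℝ) (ε*A/(8*l)) with hδdef
  have hδ0 : 0 < δ := lt_min (by norm_num) (by positivity)
  have hδ1 : δ ≤ 1/2 := min_le_left _ _
  have hδ2 : δ * (8*l) ≤ ε*A := by
    have h := min_le_right (1/2:ℝ) (ε*A/(8*l))
    have h2 := mul_le_mul_of_nonneg_right h (show (0:ℝ) ≤ 8*l by positivity)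
    calc δ*(8*l) ≤ (ε*A/(8*l))*(8*l) := h2
      _ = ε*A := by field_simp
  have h1δ : (0:ℝ) < 1 - δ := by linarith
  have hAm : 0 < A*(1-δ) := by positivity
  have hAp : 0 < A*(1+δ) := by positivity
  have hTA : T * A = 2*l := by rw [hTdef]; field_simp
  have hUinf : 2*l/(A*(1-δ)) ≤ T + ε/2 := by
    rw [div_le_iff₀ hAm]
    nlinarith [hTA, hδ2, hδ1, hA, hl, hε, mul_pos hε hA]
  have hLinf : T - ε/2 ≤ 2*l/(A*(1+δ)) := by
    rw [le_div_iff₀ hAp]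
    nlinarith [hTA, hδ2, hδ1, hA, hl, hε, mul_pos hε hA]
  -- choose N
  have hk1 : Tendsto (fun k : ℕ => ((k:ℝ)+1)) atTop atTop :=
    tendsto_atTop_add_const_right _ 1 tendsto_natCast_atTop_atTop
  have hl0 : Tendsto (fun k : ℕ => l/((k:ℝ)+1)) atTop (𝓝 0) :=
    tendsto_const_nhds.div_atTop hk1
  have hratio1 : Tendsto (fun k : ℕ => (x k - l)/((k:ℝ)+1)) atTop (𝓝 A) := by
    have h := hratio.sub hl0
    rw [sub_zero] at h
    refine h.congr fun k => ?_
    rw [sub_div]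
  have hratio2 : Tendsto (fun k : ℕ => (x k + l)/((k:ℝ)+1)) atTop (𝓝 A) := by
    have h := hratio.add hl0
    rw [add_zero] at h
    refine h.congr fun k => ?_
    rw [add_div]
  have hev1 : ∀ᶠ k : ℕ in atTop, A*(1-δ) ≤ (x k - l)/((k:ℝ)+1) :=
    hratio1.eventually_const_le (by nlinarith)
  have hev2 : ∀ᶠ k : ℕ in atTop, (x k + l)/((k:ℝ)+1) ≤ A*(1+δ) :=
    hratio2.eventually_le_const (by nlinarith)
  obtain ⟨N, hN⟩ := eventually_atTop.mp (hev1.and hev2)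
  have hNlow : ∀ k : ℕ, A*(1-δ)*((k:ℝ)+N+1) ≤ x (k+N) - l := by
    intro k
    have h := (hN (k+N) (Nat.le_add_left N k)).1
    have h2 := (le_div_iff₀ (hk0 (k+N))).mp h
    have hkN : ((k+N : ℕ):ℝ) + 1 = (k:ℝ)+N+1 := by push_cast; ring
    rw [hkN] at h2
    exact h2
  have hNhigh : ∀ k : ℕ, x (k+N) + l ≤ A*(1+δ)*((k:ℝ)+N+1) := by
    intro k
    have h := (hN (k+N) (Nat.le_add_left N k)).2
    have h2 := (div_le_iff₀ (hk0 (k+N))).mp h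
    have hkN : ((k+N : ℕ):ℝ) + 1 = (k:ℝ)+N+1 := by push_cast; ring
    rw [hkN] at h2
    exact h2
  -- head tends to 0
  have hhead : Tendsto
      (fun s : ℝ => ∑ i ∈ Finset.range N, ((x i - l)^(-s) - (x i + l)^(-s)))
      (𝓝[>] (0:ℝ)) (𝓝 0) := by
    have h : Tendsto
        (fun s : ℝ => ∑ i ∈ Finset.range N, ((x i - l)^(-s) - (x i + l)^(-s)))
        (𝓝[>] (0:ℝ)) (𝓝 (∑ _i ∈ Finset.range N, ((1:ℝ) - 1))) :=
      tendsto_finset_sum _ fun i _ =>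
        (eta_aux_rpow_zero (hsubpos i)).sub (eta_aux_rpow_zero (haddpos i))
    simpa using h
  -- bounding functions
  have hWU : Tendsto
      (fun s : ℝ => 2*l*s*(A*(1-δ))^(-(1+s)) * ∑' k : ℕ, ((k:ℝ)+N+1)^(-(1+s)))
      (𝓝[>] (0:ℝ)) (𝓝 (2*l/(A*(1-δ)))) := by
    have h := ((eta_aux_const_rpow hAm).mul (eta_aux_zeta N)).const_mul (2*l)
    have h2 := h.congr (fun s => by ring :
      ∀ s : ℝ, 2*l*((A*(1-δ))^(-(1+s)) * (s * ∑' k : ℕ, ((k:ℝ)+N+1)^(-(1+s))))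
        = 2*l*s*(A*(1-δ))^(-(1+s)) * ∑' k : ℕ, ((k:ℝ)+N+1)^(-(1+s)))
    rwa [show 2*l*((A*(1-δ))⁻¹ * 1) = 2*l/(A*(1-δ)) by field_simp] at h2
  have hWL : Tendsto
      (fun s : ℝ => 2*l*s*(A*(1+δ))^(-(1+s)) * ∑' k : ℕ, ((k:ℝ)+N+1)^(-(1+s)))
      (𝓝[>] (0:ℝ)) (𝓝 (2*l/(A*(1+δ)))) := by
    have h := ((eta_aux_const_rpow hAp).mul (eta_aux_zeta N)).const_mul (2*l)
    have h2 := h.congr (fun s => by ring :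
      ∀ s : ℝ, 2*l*((A*(1+δ))^(-(1+s)) * (s * ∑' k : ℕ, ((k:ℝ)+N+1)^(-(1+s))))
        = 2*l*s*(A*(1+δ))^(-(1+s)) * ∑' k : ℕ, ((k:ℝ)+N+1)^(-(1+s)))
    rwa [show 2*l*((A*(1+δ))⁻¹ * 1) = 2*l/(A*(1+δ)) by field_simp] at h2
  have E2 := Metric.tendsto_nhds.mp hhead (ε/8) (by positivity)
  have E3 := hWU.eventually_lt_const
    (show 2*l/(A*(1-δ)) < 2*l/(A*(1-δ)) + ε/8 by linarith)
  have E4 := hWL.eventually_const_lt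
    (show 2*l/(A*(1+δ)) - ε/8 < 2*l/(A*(1+δ)) by linarith)
  filter_upwards [self_mem_nhdsWithin, E2, E3, E4] with s hsmem hH hUs hLs
  have hs' : (0:ℝ) < s := hsmem
  have hsum := hsummable s hs'
  have hsumtail : Summable (fun k : ℕ => (x (k+N) - l)^(-s) - (x (k+N) + l)^(-s)) :=
    (summable_nat_add_iff N).2 hsum
  have hZ := eta_aux_summable N hs'
  have hker : ∀ k : ℕ, (x (k+N) - l)^(-s) - (x (k+N) + l)^(-s) ≤
      2*l*s*(A*(1-δ))^(-(1+s)) * ((k:ℝ)+N+1)^(-(1+s)) := by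
    intro k
    have h1 := (eta_aux_mvt hl (hxl (k+N)) hs').2
    have h2 : (x (k+N) - l)^(-(1+s)) ≤ (A*(1-δ)*((k:ℝ)+N+1))^(-(1+s)) :=
      Real.rpow_le_rpow_of_nonpos (by positivity) (hNlow k) (by linarith)
    have h3 : (A*(1-δ)*((k:ℝ)+N+1))^(-(1+s)) =
        (A*(1-δ))^(-(1+s)) * ((k:ℝ)+N+1)^(-(1+s)) :=
      Real.mul_rpow hAm.le (by positivity)
    have hc := mul_le_mul_of_nonneg_left h2 (show (0:ℝ) ≤ 2*l*s by positivity)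
    rw [h3] at hc
    calc (x (k+N) - l)^(-s) - (x (k+N) + l)^(-s)
        ≤ 2*l*(s*(x (k+N) - l)^(-(1+s))) := h1
      _ = 2*l*s*((x (k+N) - l)^(-(1+s))) := by ring
      _ ≤ 2*l*s*((A*(1-δ))^(-(1+s)) * ((k:ℝ)+N+1)^(-(1+s))) := hc
      _ = 2*l*s*(A*(1-δ))^(-(1+s)) * ((k:ℝ)+N+1)^(-(1+s)) := by ring
  have hker2 : ∀ k : ℕ, 2*l*s*(A*(1+δ))^(-(1+s)) * ((k:ℝ)+N+1)^(-(1+s)) ≤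
      (x (k+N) - l)^(-s) - (x (k+N) + l)^(-s) := by
    intro k
    have h1 := (eta_aux_mvt hl (hxl (k+N)) hs').1
    have h2 : (A*(1+δ)*((k:ℝ)+N+1))^(-(1+s)) ≤ (x (k+N) + l)^(-(1+s)) :=
      Real.rpow_le_rpow_of_nonpos (haddpos (k+N)) (hNhigh k) (by linarith)
    have h3 : (A*(1+δ)*((k:ℝ)+N+1))^(-(1+s)) =
        (A*(1+δ))^(-(1+s)) * ((k:ℝ)+N+1)^(-(1+s)) :=
      Real.mul_rpow hAp.le (by positivity)
    have hc := mul_le_mul_of_nonneg_left h2 (show (0:ℝ) ≤ 2*l*s by positivity)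
    rw [h3] at hc
    calc 2*l*s*(A*(1+δ))^(-(1+s)) * ((k:ℝ)+N+1)^(-(1+s))
        = 2*l*s*((A*(1+δ))^(-(1+s)) * ((k:ℝ)+N+1)^(-(1+s))) := by ring
      _ ≤ 2*l*s*((x (k+N) + l)^(-(1+s))) := hc
      _ = 2*l*(s*(x (k+N) + l)^(-(1+s))) := by ring
      _ ≤ (x (k+N) - l)^(-s) - (x (k+N) + l)^(-s) := h1
  have hub : ∑' k : ℕ, ((x (k+N) - l)^(-s) - (x (k+N) + l)^(-s)) ≤
      2*l*s*(A*(1-δ))^(-(1+s)) * ∑' k : ℕ, ((k:ℝ)+N+1)^(-(1+s)) := by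
    calc ∑' k : ℕ, ((x (k+N) - l)^(-s) - (x (k+N) + l)^(-s))
        ≤ ∑' k : ℕ, (2*l*s*(A*(1-δ))^(-(1+s)) * ((k:ℝ)+N+1)^(-(1+s))) :=
          Summable.tsum_le_tsum hker hsumtail (hZ.mul_left _)
      _ = 2*l*s*(A*(1-δ))^(-(1+s)) * ∑' k : ℕ, ((k:ℝ)+N+1)^(-(1+s)) := tsum_mul_left
  have hlb : 2*l*s*(A*(1+δ))^(-(1+s)) * ∑' k : ℕ, ((k:ℝ)+N+1)^(-(1+s)) ≤
      ∑' k : ℕ, ((x (k+N) - l)^(-s) - (x (k+N) + l)^(-s)) := by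
    calc 2*l*s*(A*(1+δ))^(-(1+s)) * ∑' k : ℕ, ((k:ℝ)+N+1)^(-(1+s))
        = ∑' k : ℕ, (2*l*s*(A*(1+δ))^(-(1+s)) * ((k:ℝ)+N+1)^(-(1+s))) := tsum_mul_left.symm
      _ ≤ ∑' k : ℕ, ((x (k+N) - l)^(-s) - (x (k+N) + l)^(-s)) :=
          Summable.tsum_le_tsum hker2 (hZ.mul_left _) hsumtail
  have hsplit := Summable.sum_add_tsum_nat_add N hsum
  rw [Real.dist_eq]
  rw [Real.dist_eq, sub_zero] at hH
  have habs := abs_lt.mp hH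
  rw [abs_lt]
  constructor
  · nlinarith [hsplit, hub, hUs, hUinf, habs.2]
  · nlinarith [hsplit, hlb, hLs, hLinf, habs.1]

/-- Let `a > 0`, `l > 0`, `b c : ℝ`, and suppose
`(a k² + b k + c)^{1/2} ≥ l + c₀ k` for all integers `k ≥ 1`, where `c₀ > 0`.  Then for every
`s ∈ (0, 1/2)` the series
`Σ_{k≥1} ((a k² + b k + c)^{1/2} − l)^{−s} − ((a k² + b k + c)^{1/2} + l)^{−s}` converges, and
its sum tends to `2l/√a` as `s → 0⁺`. -/
theorem eta_series_limit (a l b c c₀ : ℝ) (ha : 0 < a) (hl : 0 < l) (hc₀ : 0 < c₀)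
    (hbound : ∀ k : ℕ, 1 ≤ k →
      l + c₀ * (k : ℝ) ≤ Real.sqrt (a * (k : ℝ) ^ 2 + b * (k : ℝ) + c)) :
    (∀ s ∈ Set.Ioo (0 : ℝ) (1 / 2),
      Summable (fun k : ℕ =>
        (Real.sqrt (a * ((k : ℝ) + 1) ^ 2 + b * ((k : ℝ) + 1) + c) - l) ^ (-s) -
        (Real.sqrt (a * ((k : ℝ) + 1) ^ 2 + b * ((k : ℝ) + 1) + c) + l) ^ (-s))) ∧
    Tendsto (fun s : ℝ =>
        ∑' k : ℕ,
          ((Real.sqrt (a * ((k : ℝ) + 1) ^ 2 + b * ((k : ℝ) + 1) + c) - l) ^ (-s) -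
           (Real.sqrt (a * ((k : ℝ) + 1) ^ 2 + b * ((k : ℝ) + 1) + c) + l) ^ (-s)))
      (𝓝[>] (0 : ℝ)) (𝓝 (2 * l / Real.sqrt a)) := by
  have hx : ∀ k : ℕ, l + c₀ * ((k:ℝ)+1) ≤
      Real.sqrt (a*((k:ℝ)+1)^2 + b*((k:ℝ)+1) + c) := by
    intro k
    have h := hbound (k+1) (by omega)
    push_cast at h
    exact h
  have hA : 0 < Real.sqrt a := Real.sqrt_pos.2 ha
  have hratio := eta_aux_ratio a b c l c₀ ha hl hc₀ hx
  have main := eta_aux_main (Real.sqrt a) l c₀ hA hl hc₀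
    (fun k : ℕ => Real.sqrt (a*((k:ℝ)+1)^2 + b*((k:ℝ)+1) + c)) hx hratio
  exact ⟨fun s hs => main.1 s hs.1, main.2⟩
end
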